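/- arXiv:1905.03452 — 3 statements merged into one kernel-verified Lean document; each statement's English description precedes it below -/
import Mathlib

section
/- If (φ₀,φ₁,σ) is a non-deterrence subgame perfect equilibrium of the stage game Γ(μ), then Firm 0's mixed strategy satisfies φ₀([2α⁻_μ−1, α⁺_μ]) = 1 and Firm 1's mixed strategy satisfies φ₁([1−2α⁺_μ, 1−α⁻_μ]) = 1, where α⁻_μ = μα⁻/(μα⁻+(1−μ)(1−α⁻)) and α⁺_μ = μα⁺/(μα⁺+(1−μ)(1−α⁺)). -/
open MeasureTheory Set Filter Topology
open scoped ENNReal NNReal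

noncomputable section

/-- The consumer's possible actions: buy product 0, buy product 1, or exit. -/
inductive CAction : Type
  | buy0 : CAction
  | buy1 : CAction
  | exit : CAction

instance : MeasurableSpace CAction := ⊤

/-- A signal structure `(F₀, F₁, S)`: two mutually absolutely continuous
probability measures on a measurable space `S`. -/
structure SignalStructure (S : Type) [MeasurableSpace S] : Type where
  F0 : Measure S
  F1 : Measure S
  prob0 : IsProbabilityMeasure F0
  prob1 : IsProbabilityMeasure F1
  ac01 : F0 ≪ F1
  ac10 : F1 ≪ F0

namespace SignalStructure

variable {S : Type} [MeasurableSpace S]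

/-- The reference measure `(F₀ + F₁)/2`. -/
def ref (𝒮 : SignalStructure S) : Measure S := (2 : ℝ≥0∞)⁻¹ • (𝒮.F0 + 𝒮.F1)

/-- Radon–Nikodym density of `F₀` with respect to `(F₀+F₁)/2`. -/
def f0 (𝒮 : SignalStructure S) : S → ℝ≥0∞ := 𝒮.F0.rnDeriv 𝒮.ref

/-- Radon–Nikodym density of `F₁` with respect to `(F₀+F₁)/2`. -/
def f1 (𝒮 : SignalStructure S) : S → ℝ≥0∞ := 𝒮.F1.rnDeriv 𝒮.ref

/-- The private belief `p(s) = f₀(s)/(f₀(s)+f₁(s))`. -/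
def p (𝒮 : SignalStructure S) (s : S) : ℝ :=
  (𝒮.f0 s).toReal / ((𝒮.f0 s).toReal + (𝒮.f1 s).toReal)

/-- `G₀(x) = F₀ {s | p(s) < x}`, the CDF of the private belief in state 0. -/
def G0 (𝒮 : SignalStructure S) (x : ℝ) : ℝ := (𝒮.F0 {s | 𝒮.p s < x}).toReal

/-- `G₁(x) = F₁ {s | p(s) < x}`, the CDF of the private belief in state 1. -/
def G1 (𝒮 : SignalStructure S) (x : ℝ) : ℝ := (𝒮.F1 {s | 𝒮.p s < x}).toReal

/-- `α⁻ = inf {x | G(x) > 0}`. -/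
def alphaLo (𝒮 : SignalStructure S) : ℝ := sInf {x | 0 < 𝒮.G0 x}

/-- `α⁺ = sup {x | G(x) < 1}`. -/
def alphaHi (𝒮 : SignalStructure S) : ℝ := sSup {x | 𝒮.G0 x < 1}

/-- Signals are bounded if `α⁻ > 0` and `α⁺ < 1`. -/
def Bounded (𝒮 : SignalStructure S) : Prop := 0 < 𝒮.alphaLo ∧ 𝒮.alphaHi < 1

/-- Signals are unbounded if `α⁻ = 0` and `α⁺ = 1`. -/
def Unbounded (𝒮 : SignalStructure S) : Prop := 𝒮.alphaLo = 0 ∧ 𝒮.alphaHi = 1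

/-- Assumption 1: `G₀, G₁` are differentiable on `(α⁻, α⁺)` with continuous
nonnegative derivatives `g₀, g₁ : [α⁻, α⁺] → ℝ₊`. -/
structure Assumption1 (𝒮 : SignalStructure S) (g0 g1 : ℝ → ℝ) : Prop where
  cont0 : ContinuousOn g0 (Icc 𝒮.alphaLo 𝒮.alphaHi)
  cont1 : ContinuousOn g1 (Icc 𝒮.alphaLo 𝒮.alphaHi)
  nonneg0 : ∀ x ∈ Icc 𝒮.alphaLo 𝒮.alphaHi, 0 ≤ g0 x
  nonneg1 : ∀ x ∈ Icc 𝒮.alphaLo 𝒮.alphaHi, 0 ≤ g1 x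
  hasDeriv0 : ∀ x ∈ Ioo 𝒮.alphaLo 𝒮.alphaHi, HasDerivAt 𝒮.G0 (g0 x) x
  hasDeriv1 : ∀ x ∈ Ioo 𝒮.alphaLo 𝒮.alphaHi, HasDerivAt 𝒮.G1 (g1 x) x

/-- The signal structure exhibits vanishing likelihood: `g₁(α⁻) = g₀(α⁺) = 0`. -/
def VanishingLikelihood (𝒮 : SignalStructure S) (g0 g1 : ℝ → ℝ) : Prop :=
  g1 𝒮.alphaLo = 0 ∧ g0 𝒮.alphaHi = 0

end SignalStructure

/-- Bayesian posterior on state 0 from a prior `μ` and a private belief `q`: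
`p_μ = μ q / (μ q + (1-μ)(1-q))`. -/
def posterior (μ q : ℝ) : ℝ := μ * q / (μ * q + (1 - μ) * (1 - q))

/-- The consumer's expected utility, given posterior `q` on state 0 and prices
`τ₀, τ₁`, from each action. -/
def cUtil (q τ0 τ1 : ℝ) : CAction → ℝ
  | CAction.buy0 => q - τ0
  | CAction.buy1 => (1 - q) - τ1
  | CAction.exit => 0

/-- A consumer pure strategy: maps the posted price pair and the signal to an action. -/
abbrev CStrategy (S : Type) : Type := ℝ → ℝ → S → CAction

/-- A mixed price strategy of a firm: a Borel probability measure on `[0,1]`. -/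
def IsPriceStrategy (φ : Measure ℝ) : Prop :=
  IsProbabilityMeasure φ ∧ φ (Icc (0:ℝ) 1) = 1

namespace SignalStructure

variable {S : Type} [MeasurableSpace S]

/-- The signal distribution under prior `μ`: the mixture `μ F₀ + (1-μ) F₁`. -/
def Fmix (𝒮 : SignalStructure S) (μ : ℝ) : Measure S :=
  ENNReal.ofReal μ • 𝒮.F0 + ENNReal.ofReal (1 - μ) • 𝒮.F1

/-- The probability (under prior `μ`) that the consumer takes action `a` when the
pure prices `τ₀, τ₁` are posted. -/
def actProb (𝒮 : SignalStructure S) (μ : ℝ) (σ : CStrategy S) (τ0 τ1 : ℝ) (a : CAction) : ℝ :=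
  (𝒮.Fmix μ {s | σ τ0 τ1 s = a}).toReal

/-- Firm 0's expected payoff in `Γ(μ)` under mixed strategies `φ₀, φ₁` and consumer
strategy `σ`. -/
def Pi0 (𝒮 : SignalStructure S) (μ : ℝ) (φ0 φ1 : Measure ℝ) (σ : CStrategy S) : ℝ :=
  ∫ τ, 𝒮.actProb μ σ τ.1 τ.2 CAction.buy0 * τ.1 ∂(φ0.prod φ1)

/-- Firm 1's expected payoff in `Γ(μ)`. -/
def Pi1 (𝒮 : SignalStructure S) (μ : ℝ) (φ0 φ1 : Measure ℝ) (σ : CStrategy S) : ℝ :=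
  ∫ τ, 𝒮.actProb μ σ τ.1 τ.2 CAction.buy1 * τ.2 ∂(φ0.prod φ1)

/-- The probability that the consumer takes action `a` under mixed price strategies. -/
def actProbMix (𝒮 : SignalStructure S) (μ : ℝ) (φ0 φ1 : Measure ℝ) (σ : CStrategy S)
    (a : CAction) : ℝ :=
  ∫ τ, 𝒮.actProb μ σ τ.1 τ.2 a ∂(φ0.prod φ1)

/-- A subgame perfect equilibrium of the stage game `Γ(μ)`: the consumer strategy is a
best reply to every price pair, and each firm's mixed price strategy maximizes its
expected payoff given the opponent's strategy and the consumer's strategy. -/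
structure IsSPE (𝒮 : SignalStructure S) (μ : ℝ) (φ0 φ1 : Measure ℝ) (σ : CStrategy S) :
    Prop where
  strat0 : IsPriceStrategy φ0
  strat1 : IsPriceStrategy φ1
  meas : ∀ τ0 τ1, Measurable (σ τ0 τ1)
  consumerBR : ∀ τ0 ∈ Icc (0:ℝ) 1, ∀ τ1 ∈ Icc (0:ℝ) 1,
    ∀ᵐ s ∂(𝒮.Fmix μ), ∀ a : CAction,
      cUtil (posterior μ (𝒮.p s)) τ0 τ1 a ≤ cUtil (posterior μ (𝒮.p s)) τ0 τ1 (σ τ0 τ1 s)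
  firm0opt : ∀ ψ : Measure ℝ, IsPriceStrategy ψ → 𝒮.Pi0 μ ψ φ1 σ ≤ 𝒮.Pi0 μ φ0 φ1 σ
  firm1opt : ∀ ψ : Measure ℝ, IsPriceStrategy ψ → 𝒮.Pi1 μ φ0 ψ σ ≤ 𝒮.Pi1 μ φ0 φ1 σ

/-- A deterrence equilibrium: an SPE in which some firm sells with probability zero. -/
def IsDeterrence (𝒮 : SignalStructure S) (μ : ℝ) (φ0 φ1 : Measure ℝ) (σ : CStrategy S) :
    Prop :=
  𝒮.IsSPE μ φ0 φ1 σ ∧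
    (𝒮.actProbMix μ φ0 φ1 σ CAction.buy0 = 0 ∨ 𝒮.actProbMix μ φ0 φ1 σ CAction.buy1 = 0)

/-- The market is full at `(μ, σ, τ₀, τ₁)` if the consumer exits with probability zero. -/
def MarketFull (𝒮 : SignalStructure S) (μ : ℝ) (σ : CStrategy S) (τ0 τ1 : ℝ) : Prop :=
  𝒮.Fmix μ {s | σ τ0 τ1 s = CAction.exit} = 0

open scoped Classical in
/-- The consumer's best-reply threshold `v_μ(τ₀,τ₁)` on the private belief. -/
def v (𝒮 : SignalStructure S) (μ : ℝ) (σ : CStrategy S) (τ0 τ1 : ℝ) : ℝ :=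
  if 𝒮.MarketFull μ σ τ0 τ1 then
    (1 - μ) * (1 + τ0 - τ1) / (2 * μ - (2 * μ - 1) * (1 + τ0 - τ1))
  else (1 - μ) * τ0 / (μ - (2 * μ - 1) * τ0)

end SignalStructure

namespace Stmt12Aux

open SignalStructure

variable {S : Type} [MeasurableSpace S]

/-! ### Basic facts about the private belief `p` -/

lemma p_nonneg (𝒮 : SignalStructure S) (s : S) : 0 ≤ 𝒮.p s := by
  unfold SignalStructure.p
  positivity

lemma p_le_one (𝒮 : SignalStructure S) (s : S) : 𝒮.p s ≤ 1 := by
  unfold SignalStructure.p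
  have hD : (0:ℝ) ≤ (𝒮.f0 s).toReal + (𝒮.f1 s).toReal :=
    add_nonneg ENNReal.toReal_nonneg ENNReal.toReal_nonneg
  rcases eq_or_lt_of_le hD with h | h
  · rw [← h]; simp
  · exact div_le_one_of_le₀ (by nlinarith [ENNReal.toReal_nonneg (a := 𝒮.f1 s)]) hD

lemma measurable_p (𝒮 : SignalStructure S) : Measurable 𝒮.p := by
  apply Measurable.div
  · exact (Measure.measurable_rnDeriv _ _).ennreal_toReal
  · exact ((Measure.measurable_rnDeriv _ _).ennreal_toReal.add
      (Measure.measurable_rnDeriv _ _).ennreal_toReal)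

/-! ### Facts about `posterior` -/

lemma posterior_denom_pos {μ x : ℝ} (hμ : μ ∈ Ioo (0:ℝ) 1) (hx : x ∈ Icc (0:ℝ) 1) :
    0 < μ * x + (1 - μ) * (1 - x) := by
  obtain ⟨hμ0, hμ1⟩ := hμ; obtain ⟨hx0, hx1⟩ := hx
  rcases le_or_gt x (1/2) with h | h
  · nlinarith [mul_nonneg hμ0.le hx0]
  · nlinarith [mul_nonneg (by linarith : (0:ℝ) ≤ 1 - μ) (by linarith : (0:ℝ) ≤ 1 - x)]

lemma posterior_nonneg {μ x : ℝ} (hμ : μ ∈ Ioo (0:ℝ) 1) (hx : x ∈ Icc (0:ℝ) 1) :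
    0 ≤ posterior μ x := by
  unfold posterior
  have := posterior_denom_pos hμ hx
  have := hμ.1
  have := hx.1
  positivity

lemma posterior_le_one {μ x : ℝ} (hμ : μ ∈ Ioo (0:ℝ) 1) (hx : x ∈ Icc (0:ℝ) 1) :
    posterior μ x ≤ 1 := by
  unfold posterior
  rw [div_le_one (posterior_denom_pos hμ hx)]
  obtain ⟨hμ0, hμ1⟩ := hμ; obtain ⟨hx0, hx1⟩ := hx
  nlinarith

lemma posterior_mem {μ x : ℝ} (hμ : μ ∈ Ioo (0:ℝ) 1) (hx : x ∈ Icc (0:ℝ) 1) :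
    posterior μ x ∈ Icc (0:ℝ) 1 :=
  ⟨posterior_nonneg hμ hx, posterior_le_one hμ hx⟩

lemma posterior_mono {μ x y : ℝ} (hμ : μ ∈ Ioo (0:ℝ) 1) (hx : x ∈ Icc (0:ℝ) 1)
    (hy : y ∈ Icc (0:ℝ) 1) (hxy : x ≤ y) : posterior μ x ≤ posterior μ y := by
  unfold posterior
  rw [div_le_div_iff₀ (posterior_denom_pos hμ hx) (posterior_denom_pos hμ hy)]
  obtain ⟨hμ0, hμ1⟩ := hμ
  nlinarith [mul_nonneg (mul_pos hμ0 (by linarith : (0:ℝ) < 1 - μ)).le (sub_nonneg.mpr hxy)]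

/-! ### Facts about `alphaLo`, `alphaHi` and the distribution of `p` -/

lemma G0_nonneg (𝒮 : SignalStructure S) (x : ℝ) : 0 ≤ 𝒮.G0 x := ENNReal.toReal_nonneg

lemma G0_mono (𝒮 : SignalStructure S) {x y : ℝ} (h : x ≤ y) : 𝒮.G0 x ≤ 𝒮.G0 y := by
  haveI := 𝒮.prob0
  apply ENNReal.toReal_mono (measure_ne_top _ _)
  exact measure_mono fun s hs => lt_of_lt_of_le hs h

lemma G0_le_one (𝒮 : SignalStructure S) (x : ℝ) : 𝒮.G0 x ≤ 1 := by
  haveI := 𝒮.prob0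
  unfold SignalStructure.G0
  rw [← ENNReal.toReal_one]
  exact ENNReal.toReal_mono (by simp) prob_le_one

lemma G0_of_gt_one (𝒮 : SignalStructure S) {x : ℝ} (h : 1 < x) : 𝒮.G0 x = 1 := by
  haveI := 𝒮.prob0
  unfold SignalStructure.G0
  have : {s | 𝒮.p s < x} = univ := eq_univ_of_forall fun s => lt_of_le_of_lt (p_le_one 𝒮 s) h
  rw [this, measure_univ, ENNReal.toReal_one]

lemma G0_of_nonpos (𝒮 : SignalStructure S) {x : ℝ} (h : x ≤ 0) : 𝒮.G0 x = 0 := by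
  unfold SignalStructure.G0
  have : {s | 𝒮.p s < x} = ∅ := by
    ext s; simp only [mem_setOf_eq, mem_empty_iff_false, iff_false, not_lt]
    exact le_trans h (p_nonneg 𝒮 s)
  rw [this, measure_empty, ENNReal.toReal_zero]

lemma setLo_nonempty (𝒮 : SignalStructure S) : {x | 0 < 𝒮.G0 x}.Nonempty :=
  ⟨2, by simp [G0_of_gt_one 𝒮 (by norm_num : (1:ℝ) < 2)]⟩

lemma setLo_bddBelow (𝒮 : SignalStructure S) : BddBelow {x | 0 < 𝒮.G0 x} := by
  refine ⟨0, fun x hx => ?_⟩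
  by_contra h
  push_neg at h
  rw [mem_setOf_eq, G0_of_nonpos 𝒮 h.le] at hx
  exact lt_irrefl _ hx

lemma setHi_nonempty (𝒮 : SignalStructure S) : {x | 𝒮.G0 x < 1}.Nonempty :=
  ⟨0, by simp [G0_of_nonpos 𝒮 (le_refl (0:ℝ))]⟩

lemma setHi_bddAbove (𝒮 : SignalStructure S) : BddAbove {x | 𝒮.G0 x < 1} := by
  refine ⟨1, fun x hx => ?_⟩
  by_contra h
  push_neg at h
  rw [mem_setOf_eq, G0_of_gt_one 𝒮 h] at hx
  exact lt_irrefl _ hx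

lemma alphaLo_mem (𝒮 : SignalStructure S) : 𝒮.alphaLo ∈ Icc (0:ℝ) 1 := by
  constructor
  · exact le_csInf (setLo_nonempty 𝒮) fun x hx => by
      by_contra h
      push_neg at h
      rw [mem_setOf_eq, G0_of_nonpos 𝒮 h.le] at hx
      exact lt_irrefl _ hx
  · have : ∀ ε > (0:ℝ), 𝒮.alphaLo ≤ 1 + ε := by
      intro ε hε
      exact csInf_le (setLo_bddBelow 𝒮)
        (by simp [mem_setOf_eq, G0_of_gt_one 𝒮 (by linarith : (1:ℝ) < 1 + ε)])
    linarith [this 0.0001 (by norm_num), le_of_forall_pos_le_add (fun ε hε => this ε hε)]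

lemma alphaHi_mem (𝒮 : SignalStructure S) : 𝒮.alphaHi ∈ Icc (0:ℝ) 1 := by
  constructor
  · exact le_csSup (setHi_bddAbove 𝒮) (by simp [mem_setOf_eq, G0_of_nonpos 𝒮 (le_refl (0:ℝ))])
  · exact csSup_le (setHi_nonempty 𝒮) fun x hx => by
      by_contra h
      push_neg at h
      rw [mem_setOf_eq, G0_of_gt_one 𝒮 h] at hx
      exact lt_irrefl _ hx

lemma G0_eq_zero_of_lt_alphaLo (𝒮 : SignalStructure S) {x : ℝ} (h : x < 𝒮.alphaLo) :
    𝒮.F0 {s | 𝒮.p s < x} = 0 := by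
  haveI := 𝒮.prob0
  by_contra hne
  have hpos : 0 < 𝒮.G0 x := by
    unfold SignalStructure.G0
    exact ENNReal.toReal_pos hne (measure_ne_top _ _)
  exact absurd (csInf_le (setLo_bddBelow 𝒮) hpos) (not_le.mpr h)

lemma G0_eq_one_of_gt_alphaHi (𝒮 : SignalStructure S) {x : ℝ} (h : 𝒮.alphaHi < x) :
    𝒮.F0 {s | x ≤ 𝒮.p s} = 0 := by
  haveI := 𝒮.prob0
  have h1 : 𝒮.F0 {s | 𝒮.p s < x} = 1 := by
    by_contra hne
    have hlt : 𝒮.G0 x < 1 := by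
      rcases lt_or_eq_of_le (prob_le_one (μ := 𝒮.F0) (s := {s | 𝒮.p s < x})) with h' | h'
      · unfold SignalStructure.G0
        rw [← ENNReal.toReal_one]
        exact ENNReal.toReal_strict_mono (by simp) h'
      · exact absurd h' hne
    exact absurd (le_csSup (setHi_bddAbove 𝒮) hlt) (not_le.mpr h)
  have hms : MeasurableSet {s | 𝒮.p s < x} := measurableSet_lt (measurable_p 𝒮) measurable_const
  have : {s | x ≤ 𝒮.p s} = {s | 𝒮.p s < x}ᶜ := by ext s; simp [not_lt]
  rw [this, measure_compl hms (measure_ne_top _ _), h1, measure_univ, tsub_self]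

lemma F0_p_lt_alphaLo (𝒮 : SignalStructure S) : 𝒮.F0 {s | 𝒮.p s < 𝒮.alphaLo} = 0 := by
  have : {s | 𝒮.p s < 𝒮.alphaLo} = ⋃ n : ℕ, {s | 𝒮.p s < 𝒮.alphaLo - 1 / (n + 1)} := by
    ext s
    simp only [mem_setOf_eq, mem_iUnion]
    constructor
    · intro h
      obtain ⟨n, hn⟩ := exists_nat_one_div_lt (by linarith : (0:ℝ) < 𝒮.alphaLo - 𝒮.p s)
      exact ⟨n, by linarith⟩
    · rintro ⟨n, hn⟩
      have : (0:ℝ) < 1 / (n + 1) := by positivity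
      linarith
  rw [this]
  refine measure_iUnion_null fun n => G0_eq_zero_of_lt_alphaLo 𝒮 ?_
  have : (0:ℝ) < 1 / ((n:ℝ) + 1) := by positivity
  linarith

lemma F0_p_gt_alphaHi (𝒮 : SignalStructure S) : 𝒮.F0 {s | 𝒮.alphaHi < 𝒮.p s} = 0 := by
  have : {s | 𝒮.alphaHi < 𝒮.p s} = ⋃ n : ℕ, {s | 𝒮.alphaHi + 1 / (n + 1) ≤ 𝒮.p s} := by
    ext s
    simp only [mem_setOf_eq, mem_iUnion]
    constructor
    · intro h
      obtain ⟨n, hn⟩ := exists_nat_one_div_lt (by linarith : (0:ℝ) < 𝒮.p s - 𝒮.alphaHi)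
      exact ⟨n, by linarith⟩
    · rintro ⟨n, hn⟩
      have : (0:ℝ) < 1 / (n + 1) := by positivity
      linarith
  rw [this]
  refine measure_iUnion_null fun n => G0_eq_one_of_gt_alphaHi 𝒮 ?_
  have : (0:ℝ) < 1 / ((n:ℝ) + 1) := by positivity
  linarith

/-! ### The mixture measure and the posterior belief -/

/-- The consumer's posterior belief as a function of the signal. -/
def qq (𝒮 : SignalStructure S) (μ : ℝ) (s : S) : ℝ := posterior μ (𝒮.p s)

lemma qq_mem (𝒮 : SignalStructure S) {μ : ℝ} (hμ : μ ∈ Ioo (0:ℝ) 1) (s : S) :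
    qq 𝒮 μ s ∈ Icc (0:ℝ) 1 :=
  posterior_mem hμ ⟨p_nonneg 𝒮 s, p_le_one 𝒮 s⟩

lemma measurable_qq (𝒮 : SignalStructure S) (μ : ℝ) : Measurable (qq 𝒮 μ) := by
  unfold qq posterior
  exact ((measurable_const.mul (measurable_p 𝒮)).div
    ((measurable_const.mul (measurable_p 𝒮)).add
      (measurable_const.mul (measurable_const.sub (measurable_p 𝒮)))))

lemma Fmix_prob (𝒮 : SignalStructure S) {μ : ℝ} (hμ : μ ∈ Ioo (0:ℝ) 1) :
    IsProbabilityMeasure (𝒮.Fmix μ) := by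
  haveI := 𝒮.prob0; haveI := 𝒮.prob1
  constructor
  unfold SignalStructure.Fmix
  rw [Measure.add_apply, Measure.smul_apply, Measure.smul_apply, measure_univ, measure_univ,
    smul_eq_mul, smul_eq_mul, mul_one, mul_one, ← ENNReal.ofReal_add hμ.1.le (by linarith [hμ.2])]
  norm_num

lemma Fmix_null (𝒮 : SignalStructure S) (μ : ℝ) {E : Set S} (hE : 𝒮.F0 E = 0) :
    𝒮.Fmix μ E = 0 := by
  have h1 : 𝒮.F1 E = 0 := 𝒮.ac10 hE
  unfold SignalStructure.Fmix
  rw [Measure.add_apply, Measure.smul_apply, Measure.smul_apply, hE, h1]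
  simp

lemma Fmix_ne_zero (𝒮 : SignalStructure S) {μ : ℝ} (hμ : 0 < μ) {E B : Set S} (hEB : E ⊆ B)
    (hE : 𝒮.F0 E ≠ 0) : 𝒮.Fmix μ B ≠ 0 := by
  intro h0
  apply hE
  have hB : 𝒮.Fmix μ E = 0 := measure_mono_null hEB h0
  unfold SignalStructure.Fmix at hB
  rw [Measure.add_apply, Measure.smul_apply, Measure.smul_apply] at hB
  have h1 := (add_eq_zero.mp hB).1
  rw [smul_eq_mul, mul_eq_zero] at h1
  rcases h1 with h1 | h1
  · exact absurd h1 (by simp [ENNReal.ofReal_eq_zero, not_le, hμ])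
  · exact h1

lemma qq_ae_mem (𝒮 : SignalStructure S) {μ : ℝ} (hμ : μ ∈ Ioo (0:ℝ) 1) :
    ∀ᵐ s ∂(𝒮.Fmix μ),
      posterior μ 𝒮.alphaLo ≤ qq 𝒮 μ s ∧ qq 𝒮 μ s ≤ posterior μ 𝒮.alphaHi := by
  have h1 : ∀ᵐ s ∂(𝒮.Fmix μ), 𝒮.alphaLo ≤ 𝒮.p s := by
    rw [ae_iff]
    have : {s | ¬ 𝒮.alphaLo ≤ 𝒮.p s} = {s | 𝒮.p s < 𝒮.alphaLo} := by
      ext s; simp [not_le]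
    rw [this]
    exact Fmix_null 𝒮 μ (F0_p_lt_alphaLo 𝒮)
  have h2 : ∀ᵐ s ∂(𝒮.Fmix μ), 𝒮.p s ≤ 𝒮.alphaHi := by
    rw [ae_iff]
    have : {s | ¬ 𝒮.p s ≤ 𝒮.alphaHi} = {s | 𝒮.alphaHi < 𝒮.p s} := by
      ext s; simp [not_le]
    rw [this]
    exact Fmix_null 𝒮 μ (F0_p_gt_alphaHi 𝒮)
  filter_upwards [h1, h2] with s hs1 hs2
  exact ⟨posterior_mono hμ (alphaLo_mem 𝒮) ⟨p_nonneg 𝒮 s, p_le_one 𝒮 s⟩ hs1,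
    posterior_mono hμ ⟨p_nonneg 𝒮 s, p_le_one 𝒮 s⟩ (alphaHi_mem 𝒮) hs2⟩

lemma posterior_continuousAt {μ x : ℝ} (hμ : μ ∈ Ioo (0:ℝ) 1) (hx : x ∈ Icc (0:ℝ) 1) :
    ContinuousAt (fun y => posterior μ y) x := by
  unfold posterior
  exact ContinuousAt.div (by fun_prop) (by fun_prop) (ne_of_gt (posterior_denom_pos hμ hx))

lemma pos_upper (𝒮 : SignalStructure S) {μ : ℝ} (hμ : μ ∈ Ioo (0:ℝ) 1) {t : ℝ}
    (ht : t < posterior μ 𝒮.alphaHi) : 𝒮.Fmix μ {s | t < qq 𝒮 μ s} ≠ 0 := by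
  haveI := 𝒮.prob0
  haveI := Fmix_prob 𝒮 hμ
  rcases eq_or_lt_of_le (alphaHi_mem 𝒮).1 with hz | hz
  · -- alphaHi = 0, so t < posterior μ 0 = 0 and the set is everything
    have hb : posterior μ 𝒮.alphaHi = 0 := by
      rw [← hz]; unfold posterior; simp
    have : {s | t < qq 𝒮 μ s} = univ :=
      eq_univ_of_forall fun s => lt_of_lt_of_le (hb ▸ ht) (qq_mem 𝒮 hμ s).1
    rw [this, measure_univ]; norm_num
  · -- alphaHi > 0: find r' < alphaHi with posterior μ r' > t
    have hcont := posterior_continuousAt hμ (alphaHi_mem 𝒮)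
    have hev : ∀ᶠ y in 𝓝 𝒮.alphaHi, t < posterior μ y :=
      hcont.eventually (eventually_gt_nhds ht)
    obtain ⟨ε, hε, hball⟩ := Metric.eventually_nhds_iff.mp hev
    set r : ℝ := max (𝒮.alphaHi - ε / 2) (𝒮.alphaHi / 2) with hr
    have hrlt : r < 𝒮.alphaHi := by
      apply max_lt <;> [linarith; linarith]
    have hr0 : 0 ≤ r := le_max_of_le_right (by linarith)
    have hrt : t < posterior μ r := by
      apply hball
      rw [Real.dist_eq, abs_lt]
      constructor
      · have : 𝒮.alphaHi - ε / 2 ≤ r := le_max_left _ _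
        linarith
      · linarith
    have hG : 𝒮.G0 r < 1 := by
      obtain ⟨y, hy, hry⟩ := exists_lt_of_lt_csSup (setHi_nonempty 𝒮) hrlt
      exact lt_of_le_of_lt (G0_mono 𝒮 hry.le) hy
    have hF0 : 𝒮.F0 {s | r ≤ 𝒮.p s} ≠ 0 := by
      intro h0
      have hms : MeasurableSet {s | r ≤ 𝒮.p s} := measurableSet_le measurable_const (measurable_p 𝒮)
      have hco : {s | r ≤ 𝒮.p s}ᶜ = {s | 𝒮.p s < r} := by ext s; simp [not_le]
      have : 𝒮.F0 {s | 𝒮.p s < r} = 1 := by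
        rw [← hco, measure_compl hms (measure_ne_top _ _), h0, measure_univ, tsub_zero]
      have : 𝒮.G0 r = 1 := by unfold SignalStructure.G0; rw [this, ENNReal.toReal_one]
      linarith
    refine Fmix_ne_zero 𝒮 hμ.1 (fun s hs => ?_) hF0
    have hsr : r ≤ 𝒮.p s := hs
    calc t < posterior μ r := hrt
    _ ≤ posterior μ (𝒮.p s) :=
        posterior_mono hμ ⟨hr0, le_trans hsr (p_le_one 𝒮 s)⟩ ⟨p_nonneg 𝒮 s, p_le_one 𝒮 s⟩ hsr

lemma pos_lower (𝒮 : SignalStructure S) {μ : ℝ} (hμ : μ ∈ Ioo (0:ℝ) 1) {t : ℝ}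
    (ht : posterior μ 𝒮.alphaLo < t) : 𝒮.Fmix μ {s | qq 𝒮 μ s < t} ≠ 0 := by
  haveI := 𝒮.prob0
  haveI := Fmix_prob 𝒮 hμ
  rcases eq_or_lt_of_le (alphaLo_mem 𝒮).2 with hz | hz
  · -- alphaLo = 1, so t > posterior μ 1 = 1 and the set is everything
    have hb : posterior μ 𝒮.alphaLo = 1 := by
      rw [hz]; unfold posterior
      rw [mul_one, sub_self, mul_zero, add_zero, div_self (ne_of_gt hμ.1)]
    have : {s | qq 𝒮 μ s < t} = univ :=
      eq_univ_of_forall fun s => lt_of_le_of_lt (qq_mem 𝒮 hμ s).2 (hb ▸ ht)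
    rw [this, measure_univ]; norm_num
  · have hcont := posterior_continuousAt hμ (alphaLo_mem 𝒮)
    have hev : ∀ᶠ y in 𝓝 𝒮.alphaLo, posterior μ y < t :=
      hcont.eventually (eventually_lt_nhds ht)
    obtain ⟨ε, hε, hball⟩ := Metric.eventually_nhds_iff.mp hev
    set r : ℝ := min (𝒮.alphaLo + ε / 2) ((𝒮.alphaLo + 1) / 2) with hr
    have hrgt : 𝒮.alphaLo < r := by
      apply lt_min <;> [linarith; linarith]
    have hr1 : r ≤ 1 := le_trans (min_le_right _ _) (by linarith)
    have hr0 : 0 ≤ r := le_trans (alphaLo_mem 𝒮).1 hrgt.le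
    have hrt : posterior μ r < t := by
      apply hball
      rw [Real.dist_eq, abs_lt]
      constructor
      · linarith
      · have : r ≤ 𝒮.alphaLo + ε / 2 := min_le_left _ _
        linarith
    have hG : 0 < 𝒮.G0 r := by
      obtain ⟨y, hy, hry⟩ := exists_lt_of_csInf_lt (setLo_nonempty 𝒮) hrgt
      exact lt_of_lt_of_le hy (G0_mono 𝒮 hry.le)
    have hF0 : 𝒮.F0 {s | 𝒮.p s < r} ≠ 0 := by
      intro h0
      unfold SignalStructure.G0 at hG
      rw [h0] at hG
      simp at hG
    refine Fmix_ne_zero 𝒮 hμ.1 (fun s hs => ?_) hF0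
    have hsr : 𝒮.p s < r := hs
    calc posterior μ (𝒮.p s)
        ≤ posterior μ r := posterior_mono hμ ⟨p_nonneg 𝒮 s, p_le_one 𝒮 s⟩ ⟨hr0, hr1⟩ hsr.le
    _ < t := hrt

/-! ### Countability of atoms of the posterior belief distribution -/

lemma countable_atoms (𝒮 : SignalStructure S) {μ : ℝ} (hμ : μ ∈ Ioo (0:ℝ) 1) :
    {t : ℝ | 𝒮.Fmix μ {s | qq 𝒮 μ s = t} ≠ 0}.Countable := by
  haveI := Fmix_prob 𝒮 hμ
  set W : ℝ → ℝ := fun t => (𝒮.Fmix μ {s | qq 𝒮 μ s ≤ t}).toReal with hW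
  have hWmono : Monotone W := by
    intro x y hxy
    exact ENNReal.toReal_mono (measure_ne_top _ _)
      (measure_mono fun s hs => le_trans hs hxy)
  refine (hWmono.countable_not_continuousAt).mono fun t ht => ?_
  simp only [mem_setOf_eq] at ht ⊢
  intro hcont
  set ε : ℝ := (𝒮.Fmix μ {s | qq 𝒮 μ s = t}).toReal with hε
  have hεpos : 0 < ε := ENNReal.toReal_pos ht (measure_ne_top _ _)
  have hkey : ∀ t' : ℝ, t' < t → W t' + ε ≤ W t := by
    intro t' ht'
    have hdisj : Disjoint {s | qq 𝒮 μ s ≤ t'} {s | qq 𝒮 μ s = t} := by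
      rw [Set.disjoint_left]
      intro s hs1 hs2
      rw [mem_setOf_eq] at hs1 hs2
      rw [hs2] at hs1
      exact absurd hs1 (not_le.mpr ht')
    have hsub : {s | qq 𝒮 μ s ≤ t'} ∪ {s | qq 𝒮 μ s = t} ⊆ {s | qq 𝒮 μ s ≤ t} := by
      rintro s (hs | hs)
      · exact le_trans hs ht'.le
      · exact le_of_eq hs
    have hms : MeasurableSet {s | qq 𝒮 μ s = t} :=
      (measurable_qq 𝒮 μ) (measurableSet_singleton t)
    have hmu := measure_union (μ := 𝒮.Fmix μ) hdisj hms
    have hle : 𝒮.Fmix μ {s | qq 𝒮 μ s ≤ t'} + 𝒮.Fmix μ {s | qq 𝒮 μ s = t}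
        ≤ 𝒮.Fmix μ {s | qq 𝒮 μ s ≤ t} := hmu ▸ measure_mono hsub
    have h1 : W t' + ε =
        (𝒮.Fmix μ {s | qq 𝒮 μ s ≤ t'} + 𝒮.Fmix μ {s | qq 𝒮 μ s = t}).toReal := by
      rw [ENNReal.toReal_add (measure_ne_top _ _) (measure_ne_top _ _)]
    rw [h1]
    exact ENNReal.toReal_mono (measure_ne_top _ _) hle
  have hseq : Tendsto (fun n : ℕ => t - 1 / (n + 1)) atTop (𝓝 t) := by
    have h0 : Tendsto (fun n : ℕ => 1 / ((n:ℝ) + 1)) atTop (𝓝 0) :=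
      tendsto_one_div_add_atTop_nhds_zero_nat
    have := tendsto_const_nhds (x := t) (f := atTop (α := ℕ)) |>.sub h0
    simpa using this
  have hWt : Tendsto (fun n : ℕ => W (t - 1 / (n + 1))) atTop (𝓝 (W t)) :=
    (hcont.tendsto).comp hseq
  have hbnd : ∀ n : ℕ, W (t - 1 / (n + 1)) ≤ W t - ε := by
    intro n
    have hlt : t - 1 / ((n:ℝ) + 1) < t := by
      have : (0:ℝ) < 1 / ((n:ℝ) + 1) := by positivity
      linarith
    linarith [hkey _ hlt]
  have := le_of_tendsto hWt (Filter.Eventually.of_forall hbnd)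
  linarith

/-! ### Measurability helpers -/

lemma measurable_of_eq_off_countable {f g : ℝ → ℝ} (hg : Measurable g) {C : Set ℝ}
    (hC : C.Countable) (h : ∀ x, x ∉ C → f x = g x) : Measurable f := by
  intro E hE
  have hset : f ⁻¹' E = (g ⁻¹' E \ C) ∪ (C ∩ f ⁻¹' E) := by
    ext x
    by_cases hx : x ∈ C
    · simp [hx]
    · simp [hx, mem_preimage, h x hx]
  rw [hset]
  exact ((hg hE).diff hC.measurableSet).union
    ((hC.mono inter_subset_left).measurableSet)

lemma exists_notMem_of_countable {C : Set ℝ} (hC : C.Countable) {l u : ℝ} (h : l < u) :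
    ∃ x, x ∈ Ioo l u ∧ x ∉ C := by
  by_contra hcon
  push_neg at hcon
  have hsub : Ioo l u ⊆ C := fun x hx => hcon x hx
  have h2 : volume (Ioo l u) = 0 := measure_mono_null hsub (hC.measure_zero volume)
  rw [Real.volume_Ioo] at h2
  rw [ENNReal.ofReal_eq_zero] at h2
  linarith

lemma meas_mono_ae' {α : Type*} [MeasurableSpace α] {μ : Measure α} {A B : Set α}
    (h : ∀ᵐ x ∂μ, x ∈ A → x ∈ B) : μ A ≤ μ B := by
  apply measure_mono_ae
  rw [ae_le_set]
  refine measure_mono_null ?_ (ae_iff.mp h)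
  rintro x ⟨hxA, hxB⟩
  simp only [mem_setOf_eq]
  exact fun hi => hxB (hi hxA)

lemma meas_eq_zero_of_ae_nmem {α : Type*} [MeasurableSpace α] {μ : Measure α} {A : Set α}
    (h : ∀ᵐ x ∂μ, x ∉ A) : μ A = 0 := by
  refine measure_mono_null ?_ (ae_iff.mp h)
  intro x hx
  simp only [mem_setOf_eq, not_not]
  exact hx

/-! ### Demand lemmas from the consumer's best reply -/

section Demand

variable (𝒮 : SignalStructure S) {μ : ℝ} (σ : CStrategy S)

lemma actProb_nonneg (τ0 τ1 : ℝ) (a : CAction) : 0 ≤ 𝒮.actProb μ σ τ0 τ1 a :=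
  ENNReal.toReal_nonneg

lemma actProb_le_one (hμ : μ ∈ Ioo (0:ℝ) 1) (τ0 τ1 : ℝ) (a : CAction) :
    𝒮.actProb μ σ τ0 τ1 a ≤ 1 := by
  haveI := Fmix_prob 𝒮 hμ
  unfold SignalStructure.actProb
  rw [← ENNReal.toReal_one]
  exact ENNReal.toReal_mono (by simp) prob_le_one

lemma actProb_sum_le (hμ : μ ∈ Ioo (0:ℝ) 1) (hmeas : ∀ τ0 τ1, Measurable (σ τ0 τ1))
    (τ0 τ1 : ℝ) :
    𝒮.actProb μ σ τ0 τ1 CAction.buy0 + 𝒮.actProb μ σ τ0 τ1 CAction.buy1 ≤ 1 := by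
  haveI := Fmix_prob 𝒮 hμ
  unfold SignalStructure.actProb
  rw [← ENNReal.toReal_add (measure_ne_top _ _) (measure_ne_top _ _), ← ENNReal.toReal_one]
  apply ENNReal.toReal_mono (by simp)
  have hdisj : Disjoint {s | σ τ0 τ1 s = CAction.buy0} {s | σ τ0 τ1 s = CAction.buy1} := by
    rw [Set.disjoint_left]
    intro s hs1 hs2
    rw [mem_setOf_eq] at hs1 hs2
    rw [hs1] at hs2
    exact CAction.noConfusion hs2
  have hms : MeasurableSet {s | σ τ0 τ1 s = CAction.buy1} := by
    have ht : MeasurableSet[⊤] {x : CAction | x = CAction.buy1} := MeasurableSpace.measurableSet_top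
    exact hmeas τ0 τ1 ht
  rw [← measure_union hdisj hms]
  exact prob_le_one

variable {𝒮} {σ} {φ0 φ1 : Measure ℝ}

lemma vanish0 (hμ : μ ∈ Ioo (0:ℝ) 1) (hSPE : 𝒮.IsSPE μ φ0 φ1 σ) {τ0 τ1 : ℝ}
    (hτ0 : τ0 ∈ Icc (0:ℝ) 1) (hτ1 : τ1 ∈ Icc (0:ℝ) 1)
    (hb : posterior μ 𝒮.alphaHi < τ0) : 𝒮.actProb μ σ τ0 τ1 CAction.buy0 = 0 := by
  unfold SignalStructure.actProb
  rw [meas_eq_zero_of_ae_nmem ?_, ENNReal.toReal_zero]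
  filter_upwards [hSPE.consumerBR τ0 hτ0 τ1 hτ1, qq_ae_mem 𝒮 hμ] with s h1 h2
  intro heq
  have heq' : σ τ0 τ1 s = _ := heq
  have := h1 CAction.exit
  rw [heq'] at this
  simp only [cUtil] at this
  have hq : qq 𝒮 μ s ≤ posterior μ 𝒮.alphaHi := h2.2
  unfold qq at hq
  linarith

lemma vanish1 (hμ : μ ∈ Ioo (0:ℝ) 1) (hSPE : 𝒮.IsSPE μ φ0 φ1 σ) {τ0 τ1 : ℝ}
    (hτ0 : τ0 ∈ Icc (0:ℝ) 1) (hτ1 : τ1 ∈ Icc (0:ℝ) 1)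
    (ha : 1 - posterior μ 𝒮.alphaLo < τ1) : 𝒮.actProb μ σ τ0 τ1 CAction.buy1 = 0 := by
  unfold SignalStructure.actProb
  rw [meas_eq_zero_of_ae_nmem ?_, ENNReal.toReal_zero]
  filter_upwards [hSPE.consumerBR τ0 hτ0 τ1 hτ1, qq_ae_mem 𝒮 hμ] with s h1 h2
  intro heq
  have heq' : σ τ0 τ1 s = _ := heq
  have := h1 CAction.exit
  rw [heq'] at this
  simp only [cUtil] at this
  have hq : posterior μ 𝒮.alphaLo ≤ qq 𝒮 μ s := h2.1
  unfold qq at hq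
  linarith

lemma cap0 (hμ : μ ∈ Ioo (0:ℝ) 1) (hSPE : 𝒮.IsSPE μ φ0 φ1 σ) {τ0 τ1 : ℝ}
    (hτ0 : τ0 ∈ Icc (0:ℝ) 1) (hτ1 : τ1 ∈ Icc (0:ℝ) 1)
    (hdom : ∀ᵐ s ∂(𝒮.Fmix μ),
      0 < qq 𝒮 μ s - τ0 ∧ 1 - qq 𝒮 μ s - τ1 < qq 𝒮 μ s - τ0) :
    𝒮.actProb μ σ τ0 τ1 CAction.buy0 = 1 := by
  haveI := Fmix_prob 𝒮 hμ
  unfold SignalStructure.actProb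
  have hae : ∀ᵐ s ∂(𝒮.Fmix μ), s ∈ {s | σ τ0 τ1 s = CAction.buy0} := by
    filter_upwards [hSPE.consumerBR τ0 hτ0 τ1 hτ1, hdom] with s h1 h2
    have hb0 := h1 CAction.buy0
    unfold qq at h2
    show σ τ0 τ1 s = CAction.buy0
    rcases hcase : σ τ0 τ1 s with _ | _ | _ <;> rw [hcase] at hb0 <;>
      simp only [cUtil] at hb0
    · exfalso; linarith [h2.2]
    · exfalso; linarith [h2.1]
  have hcongr : {s | σ τ0 τ1 s = CAction.buy0} =ᵐ[𝒮.Fmix μ] (univ : Set S) := by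
    apply ae_eq_univ.mpr
    apply meas_eq_zero_of_ae_nmem
    filter_upwards [hae] with s hs
    simp only [mem_compl_iff, not_not]
    exact hs
  rw [measure_congr hcongr, measure_univ, ENNReal.toReal_one]

lemma cap1 (hμ : μ ∈ Ioo (0:ℝ) 1) (hSPE : 𝒮.IsSPE μ φ0 φ1 σ) {τ0 τ1 : ℝ}
    (hτ0 : τ0 ∈ Icc (0:ℝ) 1) (hτ1 : τ1 ∈ Icc (0:ℝ) 1)
    (hdom : ∀ᵐ s ∂(𝒮.Fmix μ),
      0 < 1 - qq 𝒮 μ s - τ1 ∧ qq 𝒮 μ s - τ0 < 1 - qq 𝒮 μ s - τ1) :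
    𝒮.actProb μ σ τ0 τ1 CAction.buy1 = 1 := by
  haveI := Fmix_prob 𝒮 hμ
  unfold SignalStructure.actProb
  have hae : ∀ᵐ s ∂(𝒮.Fmix μ), s ∈ {s | σ τ0 τ1 s = CAction.buy1} := by
    filter_upwards [hSPE.consumerBR τ0 hτ0 τ1 hτ1, hdom] with s h1 h2
    have hb1 := h1 CAction.buy1
    unfold qq at h2
    show σ τ0 τ1 s = CAction.buy1
    rcases hcase : σ τ0 τ1 s with _ | _ | _ <;> rw [hcase] at hb1 <;>
      simp only [cUtil] at hb1
    · exfalso; linarith [h2.2]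
    · exfalso; linarith [h2.1]
  have hcongr : {s | σ τ0 τ1 s = CAction.buy1} =ᵐ[𝒮.Fmix μ] (univ : Set S) := by
    apply ae_eq_univ.mpr
    apply meas_eq_zero_of_ae_nmem
    filter_upwards [hae] with s hs
    simp only [mem_compl_iff, not_not]
    exact hs
  rw [measure_congr hcongr, measure_univ, ENNReal.toReal_one]

lemma low0 (hμ : μ ∈ Ioo (0:ℝ) 1) (hSPE : 𝒮.IsSPE μ φ0 φ1 σ) {τ0 τ1 : ℝ}
    (hτ0 : τ0 ∈ Icc (0:ℝ) 1) (hτ1 : τ1 ∈ Icc (0:ℝ) 1) {t : ℝ}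
    (hθ : max τ0 ((1 + τ0 - τ1) / 2) ≤ t) :
    (𝒮.Fmix μ {s | t < qq 𝒮 μ s}).toReal ≤ 𝒮.actProb μ σ τ0 τ1 CAction.buy0 := by
  haveI := Fmix_prob 𝒮 hμ
  unfold SignalStructure.actProb
  apply ENNReal.toReal_mono (measure_ne_top _ _)
  apply meas_mono_ae'
  filter_upwards [hSPE.consumerBR τ0 hτ0 τ1 hτ1] with s h1 hs
  have hq0 : τ0 < qq 𝒮 μ s := lt_of_le_of_lt (le_trans (le_max_left _ _) hθ) hs
  have hq1 : (1 + τ0 - τ1) / 2 < qq 𝒮 μ s := lt_of_le_of_lt (le_trans (le_max_right _ _) hθ) hs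
  have hb0 := h1 CAction.buy0
  unfold qq at hq0 hq1
  show σ τ0 τ1 s = CAction.buy0
  rcases hcase : σ τ0 τ1 s with _ | _ | _ <;> rw [hcase] at hb0 <;>
    simp only [cUtil] at hb0
  · exfalso; linarith
  · exfalso; linarith

lemma low1 (hμ : μ ∈ Ioo (0:ℝ) 1) (hSPE : 𝒮.IsSPE μ φ0 φ1 σ) {τ0 τ1 : ℝ}
    (hτ0 : τ0 ∈ Icc (0:ℝ) 1) (hτ1 : τ1 ∈ Icc (0:ℝ) 1) {t : ℝ}
    (hθ : t ≤ min (1 - τ1) ((1 + τ0 - τ1) / 2)) :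
    (𝒮.Fmix μ {s | qq 𝒮 μ s < t}).toReal ≤ 𝒮.actProb μ σ τ0 τ1 CAction.buy1 := by
  haveI := Fmix_prob 𝒮 hμ
  unfold SignalStructure.actProb
  apply ENNReal.toReal_mono (measure_ne_top _ _)
  apply meas_mono_ae'
  filter_upwards [hSPE.consumerBR τ0 hτ0 τ1 hτ1] with s h1 hs
  have hq0 : qq 𝒮 μ s < 1 - τ1 := lt_of_lt_of_le hs (le_trans hθ (min_le_left _ _))
  have hq1 : qq 𝒮 μ s < (1 + τ0 - τ1) / 2 := lt_of_lt_of_le hs (le_trans hθ (min_le_right _ _))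
  have hb1 := h1 CAction.buy1
  unfold qq at hq0 hq1
  show σ τ0 τ1 s = CAction.buy1
  rcases hcase : σ τ0 τ1 s with _ | _ | _ <;> rw [hcase] at hb1 <;>
    simp only [cUtil] at hb1
  · exfalso; linarith
  · exfalso; linarith

lemma pin0 (hμ : μ ∈ Ioo (0:ℝ) 1) (hSPE : 𝒮.IsSPE μ φ0 φ1 σ) {τ0 τ1 : ℝ}
    (hτ0 : τ0 ∈ Icc (0:ℝ) 1) (hτ1 : τ1 ∈ Icc (0:ℝ) 1)
    (hatom : 𝒮.Fmix μ {s | qq 𝒮 μ s = max τ0 ((1 + τ0 - τ1) / 2)} = 0) :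
    𝒮.actProb μ σ τ0 τ1 CAction.buy0
      = (𝒮.Fmix μ {s | max τ0 ((1 + τ0 - τ1) / 2) < qq 𝒮 μ s}).toReal := by
  haveI := Fmix_prob 𝒮 hμ
  set θ : ℝ := max τ0 ((1 + τ0 - τ1) / 2) with hθdef
  have hlow := low0 hμ hSPE hτ0 hτ1 (le_refl θ)
  apply le_antisymm ?_ hlow
  unfold SignalStructure.actProb
  apply ENNReal.toReal_mono (measure_ne_top _ _)
  have h2 : 𝒮.Fmix μ {s | σ τ0 τ1 s = CAction.buy0} ≤ 𝒮.Fmix μ {s | θ ≤ qq 𝒮 μ s} := by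
    apply meas_mono_ae'
    filter_upwards [hSPE.consumerBR τ0 hτ0 τ1 hτ1] with s h1 hs
    have hs' : σ τ0 τ1 s = CAction.buy0 := hs
    have he := h1 CAction.exit
    have hb1 := h1 CAction.buy1
    rw [hs'] at he hb1
    simp only [cUtil] at he hb1
    apply max_le
    · unfold qq; linarith
    · unfold qq; linarith
  have h3 : 𝒮.Fmix μ {s | θ ≤ qq 𝒮 μ s} ≤ 𝒮.Fmix μ {s | θ < qq 𝒮 μ s} := by
    have hsub : {s | θ ≤ qq 𝒮 μ s} ⊆ {s | θ < qq 𝒮 μ s} ∪ {s | qq 𝒮 μ s = θ} := by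
      intro s hs
      rcases lt_or_eq_of_le (show θ ≤ qq 𝒮 μ s from hs) with h | h
      · exact Or.inl h
      · exact Or.inr h.symm
    calc 𝒮.Fmix μ {s | θ ≤ qq 𝒮 μ s}
        ≤ 𝒮.Fmix μ ({s | θ < qq 𝒮 μ s} ∪ {s | qq 𝒮 μ s = θ}) := measure_mono hsub
      _ ≤ 𝒮.Fmix μ {s | θ < qq 𝒮 μ s} + 𝒮.Fmix μ {s | qq 𝒮 μ s = θ} := measure_union_le _ _
      _ = 𝒮.Fmix μ {s | θ < qq 𝒮 μ s} := by rw [hatom, add_zero]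
  exact le_trans h2 h3

lemma pin1 (hμ : μ ∈ Ioo (0:ℝ) 1) (hSPE : 𝒮.IsSPE μ φ0 φ1 σ) {τ0 τ1 : ℝ}
    (hτ0 : τ0 ∈ Icc (0:ℝ) 1) (hτ1 : τ1 ∈ Icc (0:ℝ) 1)
    (hatom : 𝒮.Fmix μ {s | qq 𝒮 μ s = min (1 - τ1) ((1 + τ0 - τ1) / 2)} = 0) :
    𝒮.actProb μ σ τ0 τ1 CAction.buy1
      = (𝒮.Fmix μ {s | qq 𝒮 μ s < min (1 - τ1) ((1 + τ0 - τ1) / 2)}).toReal := by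
  haveI := Fmix_prob 𝒮 hμ
  set θ : ℝ := min (1 - τ1) ((1 + τ0 - τ1) / 2) with hθdef
  have hlow := low1 hμ hSPE hτ0 hτ1 (le_refl θ)
  apply le_antisymm ?_ hlow
  unfold SignalStructure.actProb
  apply ENNReal.toReal_mono (measure_ne_top _ _)
  have h2 : 𝒮.Fmix μ {s | σ τ0 τ1 s = CAction.buy1} ≤ 𝒮.Fmix μ {s | qq 𝒮 μ s ≤ θ} := by
    apply meas_mono_ae'
    filter_upwards [hSPE.consumerBR τ0 hτ0 τ1 hτ1] with s h1 hs
    have hs' : σ τ0 τ1 s = CAction.buy1 := hs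
    have he := h1 CAction.exit
    have hb0 := h1 CAction.buy0
    rw [hs'] at he hb0
    simp only [cUtil] at he hb0
    apply le_min
    · unfold qq; linarith
    · unfold qq; linarith
  have h3 : 𝒮.Fmix μ {s | qq 𝒮 μ s ≤ θ} ≤ 𝒮.Fmix μ {s | qq 𝒮 μ s < θ} := by
    have hsub : {s | qq 𝒮 μ s ≤ θ} ⊆ {s | qq 𝒮 μ s < θ} ∪ {s | qq 𝒮 μ s = θ} := by
      intro s hs
      rcases lt_or_eq_of_le (show qq 𝒮 μ s ≤ θ from hs) with h | h
      · exact Or.inl h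
      · exact Or.inr h
    calc 𝒮.Fmix μ {s | qq 𝒮 μ s ≤ θ}
        ≤ 𝒮.Fmix μ ({s | qq 𝒮 μ s < θ} ∪ {s | qq 𝒮 μ s = θ}) := measure_mono hsub
      _ ≤ 𝒮.Fmix μ {s | qq 𝒮 μ s < θ} + 𝒮.Fmix μ {s | qq 𝒮 μ s = θ} := measure_union_le _ _
      _ = 𝒮.Fmix μ {s | qq 𝒮 μ s < θ} := by rw [hatom, add_zero]
  exact le_trans h2 h3

end Demand

/-! ### Integration helpers -/

lemma price_ae_Icc {φ : Measure ℝ} (h : IsPriceStrategy φ) : ∀ᵐ t ∂φ, t ∈ Icc (0:ℝ) 1 := by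
  haveI := h.1
  rw [ae_iff]
  have hset : {t : ℝ | ¬ t ∈ Icc (0:ℝ) 1} = (Icc (0:ℝ) 1)ᶜ := rfl
  rw [hset, prob_compl_eq_zero_iff measurableSet_Icc]
  exact h.2

lemma dirac_price {x : ℝ} (hx : x ∈ Icc (0:ℝ) 1) : IsPriceStrategy (Measure.dirac x) :=
  ⟨inferInstance, by rw [Measure.dirac_apply_of_mem hx]⟩

lemma prod_ae_Icc {φ0 φ1 : Measure ℝ} (h0 : IsPriceStrategy φ0) (h1 : IsPriceStrategy φ1) :
    ∀ᵐ τ ∂(φ0.prod φ1), τ.1 ∈ Icc (0:ℝ) 1 ∧ τ.2 ∈ Icc (0:ℝ) 1 := by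
  haveI := h0.1; haveI := h1.1
  rw [ae_iff]
  apply measure_mono_null
    (?_ : _ ⊆ ((Icc (0:ℝ) 1)ᶜ ×ˢ (univ : Set ℝ)) ∪ ((univ : Set ℝ) ×ˢ (Icc (0:ℝ) 1)ᶜ))
  · apply measure_union_null
    · rw [Measure.prod_prod, prob_compl_eq_zero_iff measurableSet_Icc |>.mpr h0.2, zero_mul]
    · rw [Measure.prod_prod, prob_compl_eq_zero_iff measurableSet_Icc |>.mpr h1.2, mul_zero]
  · intro τ hτ
    simp only [mem_setOf_eq, not_and_or] at hτ
    rcases hτ with hτ | hτ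
    · exact Or.inl ⟨hτ, mem_univ _⟩
    · exact Or.inr ⟨mem_univ _, hτ⟩

lemma smul_prod'' (c : ℝ≥0∞) (hc : c ≠ ⊤) (m ν : Measure ℝ) [IsFiniteMeasure m]
    [IsFiniteMeasure ν] : (c • m).prod ν = c • (m.prod ν) := by
  haveI : IsFiniteMeasure (c • m) := ⟨by
    rw [Measure.smul_apply, smul_eq_mul]
    exact ENNReal.mul_lt_top hc.lt_top (measure_lt_top m univ)⟩
  apply Measure.prod_eq
  intro s t hs ht
  rw [Measure.smul_apply, Measure.smul_apply, Measure.prod_prod, smul_eq_mul, smul_eq_mul,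
    mul_assoc]

lemma prod_smul'' (c : ℝ≥0∞) (hc : c ≠ ⊤) (m ν : Measure ℝ) [IsFiniteMeasure m]
    [IsFiniteMeasure ν] : m.prod (c • ν) = c • (m.prod ν) := by
  haveI : IsFiniteMeasure (c • ν) := ⟨by
    rw [Measure.smul_apply, smul_eq_mul]
    exact ENNReal.mul_lt_top hc.lt_top (measure_lt_top ν univ)⟩
  apply Measure.prod_eq
  intro s t hs ht
  rw [Measure.smul_apply, Measure.smul_apply, Measure.prod_prod, smul_eq_mul, smul_eq_mul]
  ring

section Main

variable {𝒮 : SignalStructure S} {μ : ℝ} {φ0 φ1 : Measure ℝ} {σ : CStrategy S}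

lemma Pi0_dirac [SFinite φ1] (x : ℝ) :
    𝒮.Pi0 μ (Measure.dirac x) φ1 σ
      = ∫ τ1, 𝒮.actProb μ σ x τ1 CAction.buy0 * x ∂φ1 := by
  unfold SignalStructure.Pi0
  rw [Measure.dirac_prod, (measurableEmbedding_prodMk_left x).integral_map]

lemma Pi1_dirac [SFinite φ0] (y : ℝ) :
    𝒮.Pi1 μ φ0 (Measure.dirac y) σ
      = ∫ τ0, 𝒮.actProb μ σ τ0 y CAction.buy1 * y ∂φ0 := by
  unfold SignalStructure.Pi1
  rw [Measure.prod_dirac, (measurableEmbedding_prod_mk_right y).integral_map]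

lemma slice0_meas (hμ : μ ∈ Ioo (0:ℝ) 1) (hSPE : 𝒮.IsSPE μ φ0 φ1 σ) {x : ℝ}
    (hx : x ∈ Icc (0:ℝ) 1) (hxA : 𝒮.Fmix μ {s | qq 𝒮 μ s = x} = 0) :
    AEStronglyMeasurable (fun τ1 => 𝒮.actProb μ σ x τ1 CAction.buy0) φ1 := by
  haveI := Fmix_prob 𝒮 hμ
  set Nf : ℝ → ℝ :=
    fun τ1 => (𝒮.Fmix μ {s | max x ((1 + x - τ1) / 2) < qq 𝒮 μ s}).toReal with hNf
  have hNmono : Monotone Nf := by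
    intro u v huv
    apply ENNReal.toReal_mono (measure_ne_top _ _)
    apply measure_mono
    intro s hs
    refine lt_of_le_of_lt (max_le_max (le_refl x) ?_) hs
    linarith
  set C : Set ℝ := (fun τ1 => (1 + x - τ1) / 2) ⁻¹' {t | 𝒮.Fmix μ {s | qq 𝒮 μ s = t} ≠ 0}
    with hC
  have hCc : C.Countable := by
    apply (countable_atoms 𝒮 hμ).preimage
    intro u v huv
    simp only at huv
    linarith
  set g : ℝ → ℝ := fun τ1 =>
    if τ1 ∈ Icc (0:ℝ) 1 then 𝒮.actProb μ σ x τ1 CAction.buy0 else Nf τ1 with hgdef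
  have hg : Measurable g := by
    apply measurable_of_eq_off_countable hNmono.measurable hCc
    intro τ1 hτ1
    by_cases hmem : τ1 ∈ Icc (0:ℝ) 1
    · have hatom : 𝒮.Fmix μ {s | qq 𝒮 μ s = max x ((1 + x - τ1) / 2)} = 0 := by
        rcases max_choice x ((1 + x - τ1) / 2) with h | h
        · rw [h]; exact hxA
        · rw [h]
          by_contra hne
          exact hτ1 hne
      simp only [hgdef, if_pos hmem]
      exact pin0 hμ hSPE hx hmem hatom
    · simp only [hgdef, if_neg hmem]
  refine ⟨g, hg.stronglyMeasurable, ?_⟩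
  filter_upwards [price_ae_Icc hSPE.strat1] with τ1 hτ1
  simp only [hgdef, if_pos hτ1]

lemma slice1_meas (hμ : μ ∈ Ioo (0:ℝ) 1) (hSPE : 𝒮.IsSPE μ φ0 φ1 σ) {y : ℝ}
    (hy : y ∈ Icc (0:ℝ) 1) (hyA : 𝒮.Fmix μ {s | qq 𝒮 μ s = 1 - y} = 0) :
    AEStronglyMeasurable (fun τ0 => 𝒮.actProb μ σ τ0 y CAction.buy1) φ0 := by
  haveI := Fmix_prob 𝒮 hμ
  set Nf : ℝ → ℝ :=
    fun τ0 => (𝒮.Fmix μ {s | qq 𝒮 μ s < min (1 - y) ((1 + τ0 - y) / 2)}).toReal with hNf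
  have hNmono : Monotone Nf := by
    intro u v huv
    apply ENNReal.toReal_mono (measure_ne_top _ _)
    apply measure_mono
    intro s hs
    refine lt_of_lt_of_le hs (min_le_min (le_refl (1 - y)) ?_)
    linarith
  set C : Set ℝ := (fun τ0 => (1 + τ0 - y) / 2) ⁻¹' {t | 𝒮.Fmix μ {s | qq 𝒮 μ s = t} ≠ 0}
    with hC
  have hCc : C.Countable := by
    apply (countable_atoms 𝒮 hμ).preimage
    intro u v huv
    simp only at huv
    linarith
  set g : ℝ → ℝ := fun τ0 =>
    if τ0 ∈ Icc (0:ℝ) 1 then 𝒮.actProb μ σ τ0 y CAction.buy1 else Nf τ0 with hgdef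
  have hg : Measurable g := by
    apply measurable_of_eq_off_countable hNmono.measurable hCc
    intro τ0 hτ0
    by_cases hmem : τ0 ∈ Icc (0:ℝ) 1
    · have hatom : 𝒮.Fmix μ {s | qq 𝒮 μ s = min (1 - y) ((1 + τ0 - y) / 2)} = 0 := by
        rcases min_choice (1 - y) ((1 + τ0 - y) / 2) with h | h
        · rw [h]; exact hyA
        · rw [h]
          by_contra hne
          exact hτ0 hne
      simp only [hgdef, if_pos hmem]
      exact pin1 hμ hSPE hmem hy hatom
    · simp only [hgdef, if_neg hmem]
  refine ⟨g, hg.stronglyMeasurable, ?_⟩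
  filter_upwards [price_ae_Icc hSPE.strat0] with τ0 hτ0
  simp only [hgdef, if_pos hτ0]

/-! ### Claim C2: no mass of `φ0` below `2a - 1` -/

lemma claimC2 (hμ : μ ∈ Ioo (0:ℝ) 1) (hSPE : 𝒮.IsSPE μ φ0 φ1 σ) :
    φ0 (Icc (0:ℝ) 1 ∩ Iio (2 * posterior μ 𝒮.alphaLo - 1)) = 0 := by
  haveI := hSPE.strat0.1
  haveI := hSPE.strat1.1
  haveI := Fmix_prob 𝒮 hμ
  set a : ℝ := posterior μ 𝒮.alphaLo with ha
  have ha1 : a ≤ 1 := (posterior_mem hμ (alphaLo_mem 𝒮)).2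
  by_contra hm
  -- find a sub-level set with positive mass
  have hcup : Icc (0:ℝ) 1 ∩ Iio (2 * a - 1)
      = ⋃ n : ℕ, Icc (0:ℝ) 1 ∩ Iic (2 * a - 1 - 1 / (n + 1)) := by
    ext τ
    simp only [mem_inter_iff, mem_Iio, mem_Iic, mem_iUnion]
    constructor
    · rintro ⟨hτ, hlt⟩
      obtain ⟨n, hn⟩ := exists_nat_one_div_lt (by linarith : (0:ℝ) < 2 * a - 1 - τ)
      exact ⟨n, hτ, by linarith⟩
    · rintro ⟨n, hτ, hle⟩
      have : (0:ℝ) < 1 / ((n:ℝ) + 1) := by positivity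
      exact ⟨hτ, by linarith⟩
  have hexn : ∃ n : ℕ, φ0 (Icc (0:ℝ) 1 ∩ Iic (2 * a - 1 - 1 / (n + 1))) ≠ 0 := by
    by_contra hall
    push_neg at hall
    exact hm (hcup ▸ measure_iUnion_null hall)
  obtain ⟨n, hn⟩ := hexn
  set L : ℝ := 2 * a - 1 - 1 / (n + 1) with hL
  set Sn : Set ℝ := Icc (0:ℝ) 1 ∩ Iic L with hSn
  have hSnm : MeasurableSet Sn := measurableSet_Icc.inter measurableSet_Iic
  have hSnsub : Sn ⊆ Icc (0:ℝ) 1 := inter_subset_left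
  obtain ⟨tb, htb⟩ := nonempty_of_measure_ne_zero hn
  have hL0 : 0 ≤ L := le_trans htb.1.1 htb.2
  have hinv : (0:ℝ) < 1 / ((n:ℝ) + 1) := by positivity
  set x : ℝ := L + 1 / (2 * (n + 1)) with hx
  have hhalf : 1 / (2 * ((n:ℝ) + 1)) < 1 / ((n:ℝ) + 1) :=
    one_div_lt_one_div_of_lt (by positivity) (by linarith)
  have hxL : L < x := by
    rw [hx]
    have : (0:ℝ) < 1 / (2 * ((n:ℝ) + 1)) := by positivity
    linarith
  have hx2a : x < 2 * a - 1 := by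
    rw [hx, hL]
    linarith
  have hxIcc : x ∈ Icc (0:ℝ) 1 := by
    constructor
    · have : (0:ℝ) < 1 / (2 * ((n:ℝ) + 1)) := by positivity
      linarith
    · linarith
  -- full capture below 2a - 1
  have hcap : ∀ τ0 ∈ Icc (0:ℝ) 1, τ0 < 2 * a - 1 → ∀ τ1 ∈ Icc (0:ℝ) 1,
      𝒮.actProb μ σ τ0 τ1 CAction.buy0 = 1 := by
    intro τ0 hτ0 hτ0lt τ1 hτ1
    apply cap0 hμ hSPE hτ0 hτ1
    filter_upwards [qq_ae_mem 𝒮 hμ] with s hs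
    have hq : a ≤ qq 𝒮 μ s := hs.1
    constructor
    · linarith
    · have := hτ1.1
      linarith
  -- the deviation payoff at the single price x
  have hdev : 𝒮.Pi0 μ (Measure.dirac x) φ1 σ = x := by
    rw [Pi0_dirac]
    have hae : (fun τ1 => 𝒮.actProb μ σ x τ1 CAction.buy0 * x) =ᵐ[φ1] fun _ => x := by
      filter_upwards [price_ae_Icc hSPE.strat1] with τ1 hτ1
      rw [hcap x hxIcc hx2a τ1 hτ1, one_mul]
    rw [integral_congr_ae hae, integral_const, probReal_univ, one_smul]
  have hxpos : 0 < x := by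
    have : (0:ℝ) < 1 / (2 * ((n:ℝ) + 1)) := by positivity
    linarith
  -- integrand of firm 0's payoff
  set f₀ : ℝ × ℝ → ℝ := fun τ => 𝒮.actProb μ σ τ.1 τ.2 CAction.buy0 * τ.1 with hf₀
  by_cases hInt1 : Integrable f₀ ((φ0.restrict Snᶜ).prod φ1)
  · -- the integrable case: compare the equilibrium payoff with the deviation ψ
    -- on Sn, the integrand is a.e. equal to τ.1
    have haeSn : ∀ᵐ τ ∂((φ0.restrict Sn).prod φ1),
        f₀ τ = τ.1 ∧ τ.1 ∈ Icc (0:ℝ) 1 ∧ τ.1 ≤ L := by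
      have hae1 : ∀ᵐ τ ∂((φ0.restrict Sn).prod φ1), τ.1 ∈ Sn ∧ τ.2 ∈ Icc (0:ℝ) 1 := by
        rw [ae_iff]
        apply measure_mono_null
          (?_ : _ ⊆ (Snᶜ ×ˢ (univ : Set ℝ)) ∪ ((univ : Set ℝ) ×ˢ (Icc (0:ℝ) 1)ᶜ))
        · apply measure_union_null
          · rw [Measure.prod_prod, Measure.restrict_apply hSnm.compl]
            simp
          · rw [Measure.prod_prod,
              prob_compl_eq_zero_iff measurableSet_Icc |>.mpr hSPE.strat1.2, mul_zero]
        · intro τ hτ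
          simp only [mem_setOf_eq, not_and_or] at hτ
          rcases hτ with hτ | hτ
          · exact Or.inl ⟨hτ, mem_univ _⟩
          · exact Or.inr ⟨mem_univ _, hτ⟩
      filter_upwards [hae1] with τ hτ
      have hτ0lt : τ.1 < 2 * a - 1 := lt_of_le_of_lt hτ.1.2 (by linarith)
      refine ⟨?_, hSnsub hτ.1, hτ.1.2⟩
      rw [hf₀]
      simp only
      rw [hcap τ.1 (hSnsub hτ.1) hτ0lt τ.2 hτ.2, one_mul]
    have hIntSn : Integrable f₀ ((φ0.restrict Sn).prod φ1) := by
      haveI : IsFiniteMeasure (φ0.restrict Sn) := inferInstance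
      have hIfst : Integrable (fun τ : ℝ × ℝ => τ.1) ((φ0.restrict Sn).prod φ1) := by
        apply (integrable_const (1:ℝ)).mono' measurable_fst.aestronglyMeasurable
        filter_upwards [haeSn] with τ hτ
        rw [Real.norm_eq_abs, abs_le]
        exact ⟨by linarith [hτ.2.1.1], hτ.2.1.2⟩
      exact hIfst.congr (by filter_upwards [haeSn] with τ hτ; exact hτ.1.symm)
    -- equilibrium payoff decomposition
    have hPi0eq : 𝒮.Pi0 μ φ0 φ1 σ = (∫ τ, f₀ τ ∂((φ0.restrict Sn).prod φ1))
        + (∫ τ, f₀ τ ∂((φ0.restrict Snᶜ).prod φ1)) := by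
      have hsplit : φ0.prod φ1
          = (φ0.restrict Sn).prod φ1 + (φ0.restrict Snᶜ).prod φ1 := by
        nth_rewrite 1 [← Measure.restrict_add_restrict_compl (μ := φ0) hSnm]
        exact Measure.add_prod _
      show ∫ τ, f₀ τ ∂(φ0.prod φ1) = _
      rw [hsplit, integral_add_measure hIntSn hInt1]
    -- bound for the Sn part
    have hI2 : ∫ τ, f₀ τ ∂((φ0.restrict Sn).prod φ1) ≤ (φ0 Sn).toReal * L := by
      have hmass : ((φ0.restrict Sn).prod φ1) univ = φ0 Sn := by
        rw [← univ_prod_univ, Measure.prod_prod, Measure.restrict_apply_univ, measure_univ,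
          mul_one]
      calc ∫ τ, f₀ τ ∂((φ0.restrict Sn).prod φ1)
          ≤ ∫ _, L ∂((φ0.restrict Sn).prod φ1) := by
            apply integral_mono_ae hIntSn (integrable_const L)
            filter_upwards [haeSn] with τ hτ
            rw [hτ.1]
            exact hτ.2.2
        _ = (φ0 Sn).toReal * L := by
            rw [integral_const, measureReal_def, hmass, smul_eq_mul]
    -- deviation price strategy
    set ψ : Measure ℝ := φ0.restrict Snᶜ + (φ0 Sn) • Measure.dirac x with hψdef
    have hψprob : IsProbabilityMeasure ψ := by
      constructor
      rw [hψdef, Measure.add_apply, Measure.restrict_apply_univ, Measure.smul_apply,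
        measure_univ, smul_eq_mul, mul_one, add_comm]
      rw [measure_add_measure_compl hSnm]
      exact measure_univ
    have hψIcc : ψ (Icc (0:ℝ) 1) = 1 := by
      rw [hψdef, Measure.add_apply, Measure.restrict_apply measurableSet_Icc,
        Measure.smul_apply, Measure.dirac_apply_of_mem hxIcc, smul_eq_mul, mul_one]
      have hdisj : Disjoint (Icc (0:ℝ) 1 ∩ Snᶜ) Sn := by
        rw [Set.disjoint_left]
        rintro t ⟨_, ht2⟩ hts
        exact ht2 hts
      rw [← measure_union hdisj hSnm]
      have hseteq : Icc (0:ℝ) 1 ∩ Snᶜ ∪ Sn = Icc (0:ℝ) 1 := by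
        ext t
        constructor
        · rintro (⟨ht, _⟩ | ht)
          · exact ht
          · exact hSnsub ht
        · intro ht
          by_cases hts : t ∈ Sn
          · exact Or.inr hts
          · exact Or.inl ⟨ht, hts⟩
      rw [hseteq]
      exact hSPE.strat0.2
    -- deviation payoff
    have hdev' : ∫ τ, f₀ τ ∂((Measure.dirac x).prod φ1) = x := hdev
    have hIntD : Integrable f₀ ((Measure.dirac x).prod φ1) := by
      by_contra h
      rw [integral_undef h] at hdev'
      linarith
    haveI : IsFiniteMeasure ((φ0 Sn) • Measure.dirac x) := ⟨by
      rw [Measure.smul_apply, smul_eq_mul]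
      exact ENNReal.mul_lt_top (measure_lt_top φ0 Sn) (measure_lt_top _ univ)⟩
    have hψprod : ψ.prod φ1 = (φ0.restrict Snᶜ).prod φ1
        + (φ0 Sn) • ((Measure.dirac x).prod φ1) := by
      rw [hψdef, Measure.add_prod, smul_prod'' _ (measure_ne_top φ0 Sn)]
    have hPiψ : 𝒮.Pi0 μ ψ φ1 σ = (∫ τ, f₀ τ ∂((φ0.restrict Snᶜ).prod φ1))
        + (φ0 Sn).toReal * x := by
      show ∫ τ, f₀ τ ∂(ψ.prod φ1) = _
      rw [hψprod, integral_add_measure hInt1 (hIntD.smul_measure (measure_ne_top φ0 Sn)),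
        integral_smul_measure, hdev', smul_eq_mul]
    have hopt := hSPE.firm0opt ψ ⟨hψprob, hψIcc⟩
    rw [hPiψ, hPi0eq] at hopt
    have hmasspos : 0 < (φ0 Sn).toReal := ENNReal.toReal_pos hn (measure_ne_top _ _)
    nlinarith [hI2, hopt, hxL, hmasspos]
  · -- non-integrable case: the equilibrium payoff is 0, beaten by the deviation
    have hnotP : ¬ Integrable f₀ (φ0.prod φ1) := by
      intro h
      apply hInt1
      rw [Measure.restrict_prod_eq_prod_univ]
      exact h.restrict
    have hPi0 : 𝒮.Pi0 μ φ0 φ1 σ = 0 := integral_undef hnotP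
    have := hSPE.firm0opt (Measure.dirac x) (dirac_price hxIcc)
    rw [hdev, hPi0] at this
    linarith

/-! ### Claim C4: no mass of `φ1` below `1 - 2b` -/

lemma claimC4 (hμ : μ ∈ Ioo (0:ℝ) 1) (hSPE : 𝒮.IsSPE μ φ0 φ1 σ) :
    φ1 (Icc (0:ℝ) 1 ∩ Iio (1 - 2 * posterior μ 𝒮.alphaHi)) = 0 := by
  haveI := hSPE.strat0.1
  haveI := hSPE.strat1.1
  haveI := Fmix_prob 𝒮 hμ
  set b : ℝ := posterior μ 𝒮.alphaHi with hb
  have hb0 : 0 ≤ b := (posterior_mem hμ (alphaHi_mem 𝒮)).1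
  by_contra hm
  have hcup : Icc (0:ℝ) 1 ∩ Iio (1 - 2 * b)
      = ⋃ n : ℕ, Icc (0:ℝ) 1 ∩ Iic (1 - 2 * b - 1 / (n + 1)) := by
    ext τ
    simp only [mem_inter_iff, mem_Iio, mem_Iic, mem_iUnion]
    constructor
    · rintro ⟨hτ, hlt⟩
      obtain ⟨n, hn⟩ := exists_nat_one_div_lt (by linarith : (0:ℝ) < 1 - 2 * b - τ)
      exact ⟨n, hτ, by linarith⟩
    · rintro ⟨n, hτ, hle⟩
      have : (0:ℝ) < 1 / ((n:ℝ) + 1) := by positivity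
      exact ⟨hτ, by linarith⟩
  have hexn : ∃ n : ℕ, φ1 (Icc (0:ℝ) 1 ∩ Iic (1 - 2 * b - 1 / (n + 1))) ≠ 0 := by
    by_contra hall
    push_neg at hall
    exact hm (hcup ▸ measure_iUnion_null hall)
  obtain ⟨n, hn⟩ := hexn
  set L : ℝ := 1 - 2 * b - 1 / (n + 1) with hL
  set Sn : Set ℝ := Icc (0:ℝ) 1 ∩ Iic L with hSn
  have hSnm : MeasurableSet Sn := measurableSet_Icc.inter measurableSet_Iic
  have hSnsub : Sn ⊆ Icc (0:ℝ) 1 := inter_subset_left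
  obtain ⟨tb, htb⟩ := nonempty_of_measure_ne_zero hn
  have hL0 : 0 ≤ L := le_trans htb.1.1 htb.2
  have hinv : (0:ℝ) < 1 / ((n:ℝ) + 1) := by positivity
  have hhalf : 1 / (2 * ((n:ℝ) + 1)) < 1 / ((n:ℝ) + 1) :=
    one_div_lt_one_div_of_lt (by positivity) (by linarith)
  set x : ℝ := L + 1 / (2 * (n + 1)) with hx
  have hxL : L < x := by
    rw [hx]
    have : (0:ℝ) < 1 / (2 * ((n:ℝ) + 1)) := by positivity
    linarith
  have hx2b : x < 1 - 2 * b := by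
    rw [hx, hL]
    linarith
  have hxIcc : x ∈ Icc (0:ℝ) 1 := by
    constructor
    · have : (0:ℝ) < 1 / (2 * ((n:ℝ) + 1)) := by positivity
      linarith
    · linarith
  have hcap : ∀ τ1 ∈ Icc (0:ℝ) 1, τ1 < 1 - 2 * b → ∀ τ0 ∈ Icc (0:ℝ) 1,
      𝒮.actProb μ σ τ0 τ1 CAction.buy1 = 1 := by
    intro τ1 hτ1 hτ1lt τ0 hτ0
    apply cap1 hμ hSPE hτ0 hτ1
    filter_upwards [qq_ae_mem 𝒮 hμ] with s hs
    have hq : qq 𝒮 μ s ≤ b := hs.2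
    constructor
    · linarith
    · have := hτ0.1
      linarith
  have hdev : 𝒮.Pi1 μ φ0 (Measure.dirac x) σ = x := by
    rw [Pi1_dirac]
    have hae : (fun τ0 => 𝒮.actProb μ σ τ0 x CAction.buy1 * x) =ᵐ[φ0] fun _ => x := by
      filter_upwards [price_ae_Icc hSPE.strat0] with τ0 hτ0
      rw [hcap x hxIcc hx2b τ0 hτ0, one_mul]
    rw [integral_congr_ae hae, integral_const, probReal_univ, one_smul]
  have hxpos : 0 < x := by
    have : (0:ℝ) < 1 / (2 * ((n:ℝ) + 1)) := by positivity
    linarith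
  set f₁ : ℝ × ℝ → ℝ := fun τ => 𝒮.actProb μ σ τ.1 τ.2 CAction.buy1 * τ.2 with hf₁
  by_cases hInt1 : Integrable f₁ (φ0.prod (φ1.restrict Snᶜ))
  · have haeSn : ∀ᵐ τ ∂(φ0.prod (φ1.restrict Sn)),
        f₁ τ = τ.2 ∧ τ.2 ∈ Icc (0:ℝ) 1 ∧ τ.2 ≤ L := by
      have hae1 : ∀ᵐ τ ∂(φ0.prod (φ1.restrict Sn)), τ.2 ∈ Sn ∧ τ.1 ∈ Icc (0:ℝ) 1 := by
        rw [ae_iff]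
        apply measure_mono_null
          (?_ : _ ⊆ ((univ : Set ℝ) ×ˢ Snᶜ) ∪ ((Icc (0:ℝ) 1)ᶜ ×ˢ (univ : Set ℝ)))
        · apply measure_union_null
          · rw [Measure.prod_prod, Measure.restrict_apply hSnm.compl]
            simp
          · rw [Measure.prod_prod,
              prob_compl_eq_zero_iff measurableSet_Icc |>.mpr hSPE.strat0.2, zero_mul]
        · intro τ hτ
          simp only [mem_setOf_eq, not_and_or] at hτ
          rcases hτ with hτ | hτ
          · exact Or.inl ⟨mem_univ _, hτ⟩
          · exact Or.inr ⟨hτ, mem_univ _⟩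
      filter_upwards [hae1] with τ hτ
      have hτ1lt : τ.2 < 1 - 2 * b := lt_of_le_of_lt hτ.1.2 (by linarith)
      refine ⟨?_, hSnsub hτ.1, hτ.1.2⟩
      rw [hf₁]
      simp only
      rw [hcap τ.2 (hSnsub hτ.1) hτ1lt τ.1 hτ.2, one_mul]
    have hIntSn : Integrable f₁ (φ0.prod (φ1.restrict Sn)) := by
      have hIsnd : Integrable (fun τ : ℝ × ℝ => τ.2) (φ0.prod (φ1.restrict Sn)) := by
        apply (integrable_const (1:ℝ)).mono' measurable_snd.aestronglyMeasurable
        filter_upwards [haeSn] with τ hτ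
        rw [Real.norm_eq_abs, abs_le]
        exact ⟨by linarith [hτ.2.1.1], hτ.2.1.2⟩
      exact hIsnd.congr (by filter_upwards [haeSn] with τ hτ; exact hτ.1.symm)
    have hPi1eq : 𝒮.Pi1 μ φ0 φ1 σ = (∫ τ, f₁ τ ∂(φ0.prod (φ1.restrict Sn)))
        + (∫ τ, f₁ τ ∂(φ0.prod (φ1.restrict Snᶜ))) := by
      have hsplit : φ0.prod φ1
          = φ0.prod (φ1.restrict Sn) + φ0.prod (φ1.restrict Snᶜ) := by
        nth_rewrite 1 [← Measure.restrict_add_restrict_compl (μ := φ1) hSnm]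
        exact Measure.prod_add _
      show ∫ τ, f₁ τ ∂(φ0.prod φ1) = _
      rw [hsplit, integral_add_measure hIntSn hInt1]
    have hI2 : ∫ τ, f₁ τ ∂(φ0.prod (φ1.restrict Sn)) ≤ (φ1 Sn).toReal * L := by
      have hmass : (φ0.prod (φ1.restrict Sn)) univ = φ1 Sn := by
        rw [← univ_prod_univ, Measure.prod_prod, Measure.restrict_apply_univ, measure_univ,
          one_mul]
      calc ∫ τ, f₁ τ ∂(φ0.prod (φ1.restrict Sn))
          ≤ ∫ _, L ∂(φ0.prod (φ1.restrict Sn)) := by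
            apply integral_mono_ae hIntSn (integrable_const L)
            filter_upwards [haeSn] with τ hτ
            rw [hτ.1]
            exact hτ.2.2
        _ = (φ1 Sn).toReal * L := by
            rw [integral_const, measureReal_def, hmass, smul_eq_mul]
    set ψ : Measure ℝ := φ1.restrict Snᶜ + (φ1 Sn) • Measure.dirac x with hψdef
    have hψprob : IsProbabilityMeasure ψ := by
      constructor
      rw [hψdef, Measure.add_apply, Measure.restrict_apply_univ, Measure.smul_apply,
        measure_univ, smul_eq_mul, mul_one, add_comm]
      rw [measure_add_measure_compl hSnm]
      exact measure_univ
    have hψIcc : ψ (Icc (0:ℝ) 1) = 1 := by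
      rw [hψdef, Measure.add_apply, Measure.restrict_apply measurableSet_Icc,
        Measure.smul_apply, Measure.dirac_apply_of_mem hxIcc, smul_eq_mul, mul_one]
      have hdisj : Disjoint (Icc (0:ℝ) 1 ∩ Snᶜ) Sn := by
        rw [Set.disjoint_left]
        rintro t ⟨_, ht2⟩ hts
        exact ht2 hts
      rw [← measure_union hdisj hSnm]
      have hseteq : Icc (0:ℝ) 1 ∩ Snᶜ ∪ Sn = Icc (0:ℝ) 1 := by
        ext t
        constructor
        · rintro (⟨ht, _⟩ | ht)
          · exact ht
          · exact hSnsub ht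
        · intro ht
          by_cases hts : t ∈ Sn
          · exact Or.inr hts
          · exact Or.inl ⟨ht, hts⟩
      rw [hseteq]
      exact hSPE.strat1.2
    have hdev' : ∫ τ, f₁ τ ∂(φ0.prod (Measure.dirac x)) = x := hdev
    have hIntD : Integrable f₁ (φ0.prod (Measure.dirac x)) := by
      by_contra h
      rw [integral_undef h] at hdev'
      linarith
    haveI : IsFiniteMeasure ((φ1 Sn) • Measure.dirac x) := ⟨by
      rw [Measure.smul_apply, smul_eq_mul]
      exact ENNReal.mul_lt_top (measure_lt_top φ1 Sn) (measure_lt_top _ univ)⟩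
    have hψprod : φ0.prod ψ = φ0.prod (φ1.restrict Snᶜ)
        + (φ1 Sn) • (φ0.prod (Measure.dirac x)) := by
      rw [hψdef, Measure.prod_add, prod_smul'' _ (measure_ne_top φ1 Sn)]
    have hPiψ : 𝒮.Pi1 μ φ0 ψ σ = (∫ τ, f₁ τ ∂(φ0.prod (φ1.restrict Snᶜ)))
        + (φ1 Sn).toReal * x := by
      show ∫ τ, f₁ τ ∂(φ0.prod ψ) = _
      rw [hψprod, integral_add_measure hInt1 (hIntD.smul_measure (measure_ne_top φ1 Sn)),
        integral_smul_measure, hdev', smul_eq_mul]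
    have hopt := hSPE.firm1opt ψ ⟨hψprob, hψIcc⟩
    rw [hPiψ, hPi1eq] at hopt
    have hmasspos : 0 < (φ1 Sn).toReal := ENNReal.toReal_pos hn (measure_ne_top _ _)
    nlinarith [hI2, hopt, hxL, hmasspos]
  · have hnotP : ¬ Integrable f₁ (φ0.prod φ1) := by
      intro h
      apply hInt1
      have : φ0.prod (φ1.restrict Snᶜ) = (φ0.prod φ1).restrict (univ ×ˢ Snᶜ) := by
        nth_rewrite 1 [← Measure.restrict_univ (μ := φ0)]
        exact Measure.prod_restrict _ _
      rw [this]
      exact h.restrict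
    have hPi1 : 𝒮.Pi1 μ φ0 φ1 σ = 0 := integral_undef hnotP
    have := hSPE.firm1opt (Measure.dirac x) (dirac_price hxIcc)
    rw [hdev, hPi1] at this
    linarith

/-! ### Claim C1: no mass of `φ0` above `b` -/

set_option maxHeartbeats 2000000 in
lemma claimC1 (hμ : μ ∈ Ioo (0:ℝ) 1) (hSPE : 𝒮.IsSPE μ φ0 φ1 σ)
    (hnd0 : 𝒮.actProbMix μ φ0 φ1 σ CAction.buy0 ≠ 0)
    (hnd1 : 𝒮.actProbMix μ φ0 φ1 σ CAction.buy1 ≠ 0) :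
    φ0 (Icc (0:ℝ) 1 ∩ Ioi (posterior μ 𝒮.alphaHi)) = 0 := by
  haveI := hSPE.strat0.1
  haveI := hSPE.strat1.1
  haveI := Fmix_prob 𝒮 hμ
  set b : ℝ := posterior μ 𝒮.alphaHi with hb
  have hb0 : 0 ≤ b := (posterior_mem hμ (alphaHi_mem 𝒮)).1
  have hb1 : b ≤ 1 := (posterior_mem hμ (alphaHi_mem 𝒮)).2
  set B : Set ℝ := Icc (0:ℝ) 1 ∩ Ioi b with hBdef
  have hBm : MeasurableSet B := measurableSet_Icc.inter measurableSet_Ioi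
  have hBsub : B ⊆ Icc (0:ℝ) 1 := inter_subset_left
  by_contra hcB
  -- integrands
  set f₀ : ℝ × ℝ → ℝ := fun τ => 𝒮.actProb μ σ τ.1 τ.2 CAction.buy0 * τ.1 with hf₀
  set fb0 : ℝ × ℝ → ℝ := fun τ => 𝒮.actProb μ σ τ.1 τ.2 CAction.buy0 with hfb0
  set fb1 : ℝ × ℝ → ℝ := fun τ => 𝒮.actProb μ σ τ.1 τ.2 CAction.buy1 with hfb1
  set f₁ : ℝ × ℝ → ℝ := fun τ => 𝒮.actProb μ σ τ.1 τ.2 CAction.buy1 * τ.2 with hf₁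
  have hint0 : Integrable fb0 (φ0.prod φ1) := by
    by_contra h
    exact hnd0 (integral_undef h)
  have hint1 : Integrable fb1 (φ0.prod φ1) := by
    by_contra h
    exact hnd1 (integral_undef h)
  have hβ0pos : 0 < 𝒮.actProbMix μ φ0 φ1 σ CAction.buy0 := by
    rcases lt_or_eq_of_le (integral_nonneg (fun τ => actProb_nonneg 𝒮 σ τ.1 τ.2 _)
      : (0:ℝ) ≤ 𝒮.actProbMix μ φ0 φ1 σ CAction.buy0) with h | h
    · exact h
    · exact absurd h.symm hnd0
  have hβ1pos : 0 < 𝒮.actProbMix μ φ0 φ1 σ CAction.buy1 := by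
    rcases lt_or_eq_of_le (integral_nonneg (fun τ => actProb_nonneg 𝒮 σ τ.1 τ.2 _)
      : (0:ℝ) ≤ 𝒮.actProbMix μ φ0 φ1 σ CAction.buy1) with h | h
    · exact h
    · exact absurd h.symm hnd1
  have hsum : 𝒮.actProbMix μ φ0 φ1 σ CAction.buy0
      + 𝒮.actProbMix μ φ0 φ1 σ CAction.buy1 ≤ 1 := by
    have h1 : 𝒮.actProbMix μ φ0 φ1 σ CAction.buy0 + 𝒮.actProbMix μ φ0 φ1 σ CAction.buy1
        = ∫ τ, (fb0 τ + fb1 τ) ∂(φ0.prod φ1) := (integral_add hint0 hint1).symm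
    rw [h1]
    calc ∫ τ, (fb0 τ + fb1 τ) ∂(φ0.prod φ1)
        ≤ ∫ _, (1:ℝ) ∂(φ0.prod φ1) :=
          integral_mono (hint0.add hint1) (integrable_const 1)
            (fun τ => actProb_sum_le 𝒮 σ hμ hSPE.meas τ.1 τ.2)
      _ = 1 := by rw [integral_const, probReal_univ, one_smul]
  -- vanishing of firm 0's demand above b
  have hvan : ∀ τ0 ∈ Icc (0:ℝ) 1, b < τ0 → ∀ τ1 ∈ Icc (0:ℝ) 1,
      𝒮.actProb μ σ τ0 τ1 CAction.buy0 = 0 :=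
    fun τ0 hτ0 hbτ τ1 hτ1 => vanish0 hμ hSPE hτ0 hτ1 hbτ
  -- dichotomy on firm 1's prices above 1 - 2b
  set T : Set ℝ := Icc (0:ℝ) 1 ∩ Ioi (1 - 2 * b) with hTdef
  by_cases hT : φ1 T = 0
  · -- Case (i): φ1-a.e. price is ≤ 1 - 2b
    have hae1 : ∀ᵐ τ1 ∂φ1, τ1 ∈ Icc (0:ℝ) 1 ∧ τ1 ≤ 1 - 2 * b := by
      filter_upwards [price_ae_Icc hSPE.strat1, measure_eq_zero_iff_ae_notMem.mp hT]
        with τ1 h1 h2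
      refine ⟨h1, ?_⟩
      by_contra hgt
      exact h2 ⟨h1, by simpa using not_le.mp hgt⟩
    rcases lt_trichotomy (1 - 2 * b) 0 with h2b | h2b | h2b
    · -- impossible: a.e. τ1 ≤ negative yet τ1 ≥ 0
      have : ∀ᵐ τ1 ∂φ1, False := by
        filter_upwards [hae1] with τ1 h
        have := h.1.1
        linarith [h.2]
      have h0 : φ1 {x : ℝ | ¬False} = 0 := ae_iff.mp this
      have h0' : φ1 (univ : Set ℝ) = 0 := by
        have : {x : ℝ | ¬False} = (univ : Set ℝ) := by simp
        rwa [this] at h0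
      rw [measure_univ] at h0'
      exact one_ne_zero h0' 
    · -- 1 - 2b = 0 : φ1 is essentially the Dirac measure at 0
      have haez : ∀ᵐ τ1 ∂φ1, τ1 = 0 := by
        filter_upwards [hae1] with τ1 h
        have := h.1.1
        linarith [h.2]
      -- firm 1's equilibrium payoff is 0
      have hPi1z : 𝒮.Pi1 μ φ0 φ1 σ = 0 := by
        have haeP : ∀ᵐ τ ∂(φ0.prod φ1), f₁ τ = 0 := by
          have hzero : φ1 {τ1 : ℝ | τ1 ≠ 0} = 0 := by
            rw [measure_eq_zero_iff_ae_notMem]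
            filter_upwards [haez] with τ1 h
            simpa using h
          have hset : {τ : ℝ × ℝ | τ.2 ≠ 0} = (univ : Set ℝ) ×ˢ {τ1 : ℝ | τ1 ≠ 0} := by
            ext τ; simp
          have : (φ0.prod φ1) {τ : ℝ × ℝ | τ.2 ≠ 0} = 0 := by
            rw [hset, Measure.prod_prod, hzero, mul_zero]
          filter_upwards [measure_eq_zero_iff_ae_notMem.mp this] with τ h
          have hτ2 : τ.2 = 0 := by simpa using h
          rw [hf₁]
          simp only
          rw [hτ2, mul_zero]
        show ∫ τ, f₁ τ ∂(φ0.prod φ1) = 0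
        rw [integral_congr_ae haeP, integral_zero]
      -- deviation for firm 1 capturing all of B
      have hbhalf : b = 1/2 := by linarith
      have hinj : Function.Injective (fun y : ℝ => 1 - y) := by
        intro u v huv
        simp only at huv
        linarith
      obtain ⟨y, hyIoo, hyA⟩ := exists_notMem_of_countable
        ((countable_atoms 𝒮 hμ).preimage hinj)
        (by linarith : (0:ℝ) < 1 - b)
      have hyIcc : y ∈ Icc (0:ℝ) 1 := ⟨hyIoo.1.le, by linarith [hyIoo.2]⟩
      have hyatom : 𝒮.Fmix μ {s | qq 𝒮 μ s = 1 - y} = 0 := by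
        by_contra h
        exact hyA h
      have hcapB : ∀ τ0 ∈ Icc (0:ℝ) 1, b < τ0 →
          𝒮.actProb μ σ τ0 y CAction.buy1 = 1 := by
        intro τ0 hτ0 hbτ
        apply cap1 hμ hSPE hτ0 hyIcc
        filter_upwards [qq_ae_mem 𝒮 hμ] with s hs
        have hq : qq 𝒮 μ s ≤ b := hs.2
        constructor
        · linarith [hyIoo.2]
        · linarith [hyIoo.2]
      have hslice := slice1_meas hμ hSPE hyIcc hyatom
      have hIntSlice : Integrable (fun τ0 => 𝒮.actProb μ σ τ0 y CAction.buy1 * y) φ0 := by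
        apply (integrable_const y).mono' (hslice.mul_const y)
        filter_upwards with τ0
        show ‖𝒮.actProb μ σ τ0 y CAction.buy1 * y‖ ≤ y
        rw [Real.norm_eq_abs, abs_of_nonneg
          (mul_nonneg (actProb_nonneg 𝒮 σ _ _ _) hyIoo.1.le)]
        calc 𝒮.actProb μ σ τ0 y CAction.buy1 * y ≤ 1 * y :=
              mul_le_mul_of_nonneg_right (actProb_le_one 𝒮 σ hμ _ _ _) hyIoo.1.le
          _ = y := one_mul y
      have hdevge : y * (φ0 B).toReal ≤ 𝒮.Pi1 μ φ0 (Measure.dirac y) σ := by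
        rw [Pi1_dirac]
        calc y * (φ0 B).toReal = ∫ τ0, B.indicator (fun _ => y) τ0 ∂φ0 := by
              rw [integral_indicator_const _ hBm, measureReal_def, smul_eq_mul, mul_comm]
          _ ≤ ∫ τ0, 𝒮.actProb μ σ τ0 y CAction.buy1 * y ∂φ0 := by
              apply integral_mono (((integrable_const y)).indicator hBm) hIntSlice
              intro τ0
              show B.indicator (fun _ => y) τ0 ≤ 𝒮.actProb μ σ τ0 y CAction.buy1 * y
              by_cases hτ0 : τ0 ∈ B
              · rw [indicator_of_mem hτ0, hcapB τ0 (hBsub hτ0) hτ0.2, one_mul]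
              · rw [indicator_of_notMem hτ0]
                exact mul_nonneg (actProb_nonneg 𝒮 σ _ _ _) hyIoo.1.le
      have hopt := hSPE.firm1opt (Measure.dirac y) (dirac_price hyIcc)
      rw [hPi1z] at hopt
      have hBpos : 0 < (φ0 B).toReal := ENNReal.toReal_pos hcB (measure_ne_top _ _)
      nlinarith [hyIoo.1]
    · -- 1 - 2b > 0 : firm 1 would capture the whole market just below 1 - 2b
      have hPi1ge : 1 - 2 * b ≤ 𝒮.Pi1 μ φ0 φ1 σ := by
        have hdev : ∀ δ' : ℝ, 0 < δ' → δ' < 1 - 2 * b →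
            1 - 2 * b - δ' ≤ 𝒮.Pi1 μ φ0 φ1 σ := by
          intro δ' hδ'0 hδ'lt
          set y : ℝ := 1 - 2 * b - δ' with hy
          have hyIcc : y ∈ Icc (0:ℝ) 1 := ⟨by linarith, by linarith⟩
          have hcapd : ∀ τ0 ∈ Icc (0:ℝ) 1, 𝒮.actProb μ σ τ0 y CAction.buy1 = 1 := by
            intro τ0 hτ0
            apply cap1 hμ hSPE hτ0 hyIcc
            filter_upwards [qq_ae_mem 𝒮 hμ] with s hs
            have hq : qq 𝒮 μ s ≤ b := hs.2
            constructor
            · linarith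
            · linarith [hτ0.1]
          have hdevy : 𝒮.Pi1 μ φ0 (Measure.dirac y) σ = y := by
            rw [Pi1_dirac]
            have hae : (fun τ0 => 𝒮.actProb μ σ τ0 y CAction.buy1 * y) =ᵐ[φ0] fun _ => y := by
              filter_upwards [price_ae_Icc hSPE.strat0] with τ0 hτ0
              rw [hcapd τ0 hτ0, one_mul]
            rw [integral_congr_ae hae, integral_const, probReal_univ,
              one_smul]
          have := hSPE.firm1opt (Measure.dirac y) (dirac_price hyIcc)
          rw [hdevy] at this
          exact this
        by_contra hlt
        push_neg at hlt
        set δ' : ℝ := min ((1 - 2 * b - 𝒮.Pi1 μ φ0 φ1 σ) / 2) ((1 - 2 * b) / 2) with hδ'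
        have hδ'0 : 0 < δ' := lt_min (by linarith) (by linarith)
        have hδ'lt : δ' < 1 - 2 * b :=
          lt_of_le_of_lt (min_le_right _ _) (by linarith)
        have := hdev δ' hδ'0 hδ'lt
        have hδ'le : δ' ≤ (1 - 2 * b - 𝒮.Pi1 μ φ0 φ1 σ) / 2 := min_le_left _ _
        linarith
      have hPi1pos : 0 < 𝒮.Pi1 μ φ0 φ1 σ := lt_of_lt_of_le h2b hPi1ge
      have hIntf₁ : Integrable f₁ (φ0.prod φ1) := by
        by_contra h
        have : 𝒮.Pi1 μ φ0 φ1 σ = 0 := integral_undef h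
        linarith
      -- upper bound on firm 1's payoff
      have haeP2 : ∀ᵐ τ ∂(φ0.prod φ1), τ.2 ≤ 1 - 2 * b := by
        have hzero : φ1 {τ1 : ℝ | ¬ (τ1 ∈ Icc (0:ℝ) 1 ∧ τ1 ≤ 1 - 2 * b)} = 0 :=
          ae_iff.mp hae1
        have hset : {τ : ℝ × ℝ | ¬ (τ.2 ∈ Icc (0:ℝ) 1 ∧ τ.2 ≤ 1 - 2 * b)}
            = (univ : Set ℝ) ×ˢ {τ1 : ℝ | ¬ (τ1 ∈ Icc (0:ℝ) 1 ∧ τ1 ≤ 1 - 2 * b)} := by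
          ext τ; simp
        have hz2 : (φ0.prod φ1) {τ : ℝ × ℝ | ¬ (τ.2 ∈ Icc (0:ℝ) 1 ∧ τ.2 ≤ 1 - 2 * b)} = 0 := by
          rw [hset, Measure.prod_prod, hzero, mul_zero]
        filter_upwards [measure_eq_zero_iff_ae_notMem.mp hz2] with τ h
        have : τ.2 ∈ Icc (0:ℝ) 1 ∧ τ.2 ≤ 1 - 2 * b := by
          by_contra hcon
          exact h hcon
        exact this.2
      have hub : 𝒮.Pi1 μ φ0 φ1 σ ≤ (1 - 2 * b) * 𝒮.actProbMix μ φ0 φ1 σ CAction.buy1 := by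
        have : 𝒮.Pi1 μ φ0 φ1 σ = ∫ τ, f₁ τ ∂(φ0.prod φ1) := rfl
        rw [this]
        have h2 : (1 - 2 * b) * 𝒮.actProbMix μ φ0 φ1 σ CAction.buy1
            = ∫ τ, (1 - 2 * b) * fb1 τ ∂(φ0.prod φ1) := by
          rw [integral_const_mul]
          rfl
        rw [h2]
        apply integral_mono_ae hIntf₁ (hint1.const_mul _)
        filter_upwards [haeP2] with τ hτ
        rw [hf₁]
        simp only
        rw [mul_comm (1 - 2*b) (fb1 τ)]
        exact mul_le_mul_of_nonneg_left hτ (actProb_nonneg 𝒮 σ _ _ _)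
      have hβ1ub : 𝒮.actProbMix μ φ0 φ1 σ CAction.buy1
          ≤ 1 - 𝒮.actProbMix μ φ0 φ1 σ CAction.buy0 := by linarith
      nlinarith [hPi1ge, hub, hβ0pos, h2b,
        mul_le_mul_of_nonneg_left hβ1ub (le_of_lt h2b)]
  · -- Case (ii): φ1 puts mass above 1 - 2b; firm 0 has a profitable price
    have hcupT : T = ⋃ n : ℕ, Icc (0:ℝ) 1 ∩ Ici (1 - 2 * b + 1 / (n + 1)) := by
      ext τ
      simp only [hTdef, mem_inter_iff, mem_Ioi, mem_Ici, mem_iUnion]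
      constructor
      · rintro ⟨hτ, hlt⟩
        obtain ⟨n, hn⟩ := exists_nat_one_div_lt (by linarith : (0:ℝ) < τ - (1 - 2 * b))
        exact ⟨n, hτ, by linarith⟩
      · rintro ⟨n, hτ, hle⟩
        have : (0:ℝ) < 1 / ((n:ℝ) + 1) := by positivity
        exact ⟨hτ, by linarith⟩
    have hexn : ∃ n : ℕ, φ1 (Icc (0:ℝ) 1 ∩ Ici (1 - 2 * b + 1 / (n + 1))) ≠ 0 := by
      by_contra hall
      push_neg at hall
      exact hT (hcupT ▸ measure_iUnion_null hall)
    obtain ⟨n, hTn⟩ := hexn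
    set δ : ℝ := 1 / (n + 1) with hδ
    have hδ0 : 0 < δ := by positivity
    set Tn : Set ℝ := Icc (0:ℝ) 1 ∩ Ici (1 - 2 * b + δ) with hTndef
    have hTnm : MeasurableSet Tn := measurableSet_Icc.inter measurableSet_Ici
    obtain ⟨tb, htb⟩ := nonempty_of_measure_ne_zero hTn
    have hbδ : δ / 2 ≤ b := by
      have h1 : 1 - 2 * b + δ ≤ tb := htb.2
      have h2 : tb ≤ 1 := htb.1.2
      linarith
    have hbpos : 0 < b := lt_of_lt_of_le (by linarith) hbδ
    obtain ⟨ε, hεIoo, hεA⟩ := exists_notMem_of_countable (countable_atoms 𝒮 hμ)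
      (by positivity : (0:ℝ) < min b δ / 2)
    have hεb : ε < b := by
      have h1 : min b δ ≤ b := min_le_left _ _
      have := hεIoo.2
      linarith [hbpos]
    have hεδ : ε ≤ δ / 2 := by
      have h1 : min b δ ≤ δ := min_le_right _ _
      linarith [hεIoo.2]
    have hε0 : 0 < ε := hεIoo.1
    have hεIcc : ε ∈ Icc (0:ℝ) 1 := ⟨hε0.le, by linarith [hεb, hb1]⟩
    set tstar : ℝ := max ε (b - δ / 4) with htstar
    have htstarb : tstar < b := max_lt hεb (by linarith)
    have hposM : 𝒮.Fmix μ {s | tstar < qq 𝒮 μ s} ≠ 0 := pos_upper 𝒮 hμ (hb ▸ htstarb)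
    set hgap : ℝ := (𝒮.Fmix μ {s | tstar < qq 𝒮 μ s}).toReal with hhgap
    have hhpos : 0 < hgap := ENNReal.toReal_pos hposM (measure_ne_top _ _)
    have hTnsub : Tn ⊆ Icc (0:ℝ) 1 := inter_subset_left
    have hlowbd : ∀ τ1 ∈ Tn, hgap ≤ 𝒮.actProb μ σ ε τ1 CAction.buy0 := by
      intro τ1 hτ1
      apply low0 hμ hSPE hεIcc (hTnsub hτ1)
      apply max_le
      · exact le_max_left _ _
      · have hτ1ge : 1 - 2 * b + δ ≤ τ1 := hτ1.2
        have hmid : (1 + ε - τ1) / 2 ≤ b - δ / 4 := by linarith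
        exact le_trans hmid (le_max_right _ _)
    have hεatom : 𝒮.Fmix μ {s | qq 𝒮 μ s = ε} = 0 := by
      by_contra hq
      exact hεA hq
    have hslice := slice0_meas hμ hSPE hεIcc hεatom
    have hIntSlice : Integrable (fun τ1 => 𝒮.actProb μ σ ε τ1 CAction.buy0 * ε) φ1 := by
      apply (integrable_const ε).mono' (hslice.mul_const ε)
      filter_upwards with τ1
      show ‖𝒮.actProb μ σ ε τ1 CAction.buy0 * ε‖ ≤ ε
      rw [Real.norm_eq_abs, abs_of_nonneg
        (mul_nonneg (actProb_nonneg 𝒮 σ _ _ _) hε0.le)]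
      calc 𝒮.actProb μ σ ε τ1 CAction.buy0 * ε ≤ 1 * ε :=
            mul_le_mul_of_nonneg_right (actProb_le_one 𝒮 σ hμ _ _ _) hε0.le
        _ = ε := one_mul ε
    set D : ℝ := 𝒮.Pi0 μ (Measure.dirac ε) φ1 σ with hD
    have hDge : ε * hgap * (φ1 Tn).toReal ≤ D := by
      rw [hD, Pi0_dirac]
      calc ε * hgap * (φ1 Tn).toReal
          = ∫ τ1, Tn.indicator (fun _ => ε * hgap) τ1 ∂φ1 := by
            rw [integral_indicator_const _ hTnm, measureReal_def, smul_eq_mul]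
            ring
        _ ≤ ∫ τ1, 𝒮.actProb μ σ ε τ1 CAction.buy0 * ε ∂φ1 := by
            apply integral_mono ((integrable_const _).indicator hTnm) hIntSlice
            intro τ1
            show Tn.indicator (fun _ => ε * hgap) τ1 ≤ 𝒮.actProb μ σ ε τ1 CAction.buy0 * ε
            by_cases hτ1 : τ1 ∈ Tn
            · rw [indicator_of_mem hτ1]
              have := hlowbd τ1 hτ1
              nlinarith
            · rw [indicator_of_notMem hτ1]
              exact mul_nonneg (actProb_nonneg 𝒮 σ _ _ _) hε0.le
    have hTnpos : 0 < (φ1 Tn).toReal := ENNReal.toReal_pos hTn (measure_ne_top _ _)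
    have hDpos : 0 < D := lt_of_lt_of_le (by positivity) hDge
    have hoptd := hSPE.firm0opt (Measure.dirac ε) (dirac_price hεIcc)
    have hPi0pos : 0 < 𝒮.Pi0 μ φ0 φ1 σ := lt_of_lt_of_le hDpos hoptd
    have hIntf₀ : Integrable f₀ (φ0.prod φ1) := by
      by_contra hI
      have : 𝒮.Pi0 μ φ0 φ1 σ = 0 := integral_undef hI
      linarith
    have hIntBc : Integrable f₀ ((φ0.restrict Bᶜ).prod φ1) := by
      have hrw : (φ0.restrict Bᶜ).prod φ1 = (φ0.prod φ1).restrict (Bᶜ ×ˢ univ) :=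
        Measure.restrict_prod_eq_prod_univ Bᶜ
      rw [hrw]
      exact hIntf₀.restrict
    have hIntB : Integrable f₀ ((φ0.restrict B).prod φ1) := by
      have hrw : (φ0.restrict B).prod φ1 = (φ0.prod φ1).restrict (B ×ˢ univ) :=
        Measure.restrict_prod_eq_prod_univ B
      rw [hrw]
      exact hIntf₀.restrict
    have haeB : ∀ᵐ τ ∂((φ0.restrict B).prod φ1), f₀ τ = 0 := by
      have hae1 : ∀ᵐ τ ∂((φ0.restrict B).prod φ1), τ.1 ∈ B ∧ τ.2 ∈ Icc (0:ℝ) 1 := by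
        rw [ae_iff]
        apply measure_mono_null
          (?_ : _ ⊆ (Bᶜ ×ˢ (univ : Set ℝ)) ∪ ((univ : Set ℝ) ×ˢ (Icc (0:ℝ) 1)ᶜ))
        · apply measure_union_null
          · rw [Measure.prod_prod, Measure.restrict_apply hBm.compl]
            simp
          · rw [Measure.prod_prod,
              prob_compl_eq_zero_iff measurableSet_Icc |>.mpr hSPE.strat1.2, mul_zero]
        · intro τ hτ
          simp only [mem_setOf_eq, not_and_or] at hτ
          rcases hτ with hτ | hτ
          · exact Or.inl ⟨hτ, mem_univ _⟩
          · exact Or.inr ⟨mem_univ _, hτ⟩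
      filter_upwards [hae1] with τ hτ
      rw [hf₀]
      simp only
      rw [hvan τ.1 (hBsub hτ.1) hτ.1.2 τ.2 hτ.2, zero_mul]
    have hIB0 : ∫ τ, f₀ τ ∂((φ0.restrict B).prod φ1) = 0 := by
      rw [integral_congr_ae haeB, integral_zero]
    have hPi0eq : 𝒮.Pi0 μ φ0 φ1 σ = ∫ τ, f₀ τ ∂((φ0.restrict Bᶜ).prod φ1) := by
      have hsplit : φ0.prod φ1
          = (φ0.restrict B).prod φ1 + (φ0.restrict Bᶜ).prod φ1 := by
        nth_rewrite 1 [← Measure.restrict_add_restrict_compl (μ := φ0) hBm]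
        exact Measure.add_prod _
      show ∫ τ, f₀ τ ∂(φ0.prod φ1) = _
      rw [hsplit, integral_add_measure hIntB hIntBc, hIB0, zero_add]
    have hIntD : Integrable f₀ ((Measure.dirac ε).prod φ1) := by
      rw [Measure.dirac_prod]
      rw [(measurableEmbedding_prodMk_left ε).integrable_map_iff]
      exact hIntSlice
    have hdev' : ∫ τ, f₀ τ ∂((Measure.dirac ε).prod φ1) = D := rfl
    set ψ : Measure ℝ := φ0.restrict Bᶜ + (φ0 B) • Measure.dirac ε with hψdef
    have hψprob : IsProbabilityMeasure ψ := by
      constructor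
      rw [hψdef, Measure.add_apply, Measure.restrict_apply_univ, Measure.smul_apply,
        measure_univ, smul_eq_mul, mul_one, add_comm]
      rw [measure_add_measure_compl hBm]
      exact measure_univ
    have hψIcc : ψ (Icc (0:ℝ) 1) = 1 := by
      rw [hψdef, Measure.add_apply, Measure.restrict_apply measurableSet_Icc,
        Measure.smul_apply, Measure.dirac_apply_of_mem hεIcc, smul_eq_mul, mul_one]
      have hdisj : Disjoint (Icc (0:ℝ) 1 ∩ Bᶜ) B := by
        rw [Set.disjoint_left]
        rintro t ⟨_, ht2⟩ hts
        exact ht2 hts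
      rw [← measure_union hdisj hBm]
      have hseteq : Icc (0:ℝ) 1 ∩ Bᶜ ∪ B = Icc (0:ℝ) 1 := by
        ext t
        constructor
        · rintro (⟨ht, _⟩ | ht)
          · exact ht
          · exact hBsub ht
        · intro ht
          by_cases hts : t ∈ B
          · exact Or.inr hts
          · exact Or.inl ⟨ht, hts⟩
      rw [hseteq]
      exact hSPE.strat0.2
    haveI : IsFiniteMeasure ((φ0 B) • Measure.dirac ε) := ⟨by
      rw [Measure.smul_apply, smul_eq_mul]
      exact ENNReal.mul_lt_top (measure_lt_top φ0 B) (measure_lt_top _ univ)⟩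
    have hψprod : ψ.prod φ1 = (φ0.restrict Bᶜ).prod φ1
        + (φ0 B) • ((Measure.dirac ε).prod φ1) := by
      rw [hψdef, Measure.add_prod, smul_prod'' _ (measure_ne_top φ0 B)]
    have hPiψ : 𝒮.Pi0 μ ψ φ1 σ = (∫ τ, f₀ τ ∂((φ0.restrict Bᶜ).prod φ1))
        + (φ0 B).toReal * D := by
      show ∫ τ, f₀ τ ∂(ψ.prod φ1) = _
      rw [hψprod, integral_add_measure hIntBc (hIntD.smul_measure (measure_ne_top φ0 B)),
        integral_smul_measure, hdev', smul_eq_mul]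
    have hopt := hSPE.firm0opt ψ ⟨hψprob, hψIcc⟩
    rw [hPiψ, hPi0eq] at hopt
    have hBpos : 0 < (φ0 B).toReal := ENNReal.toReal_pos hcB (measure_ne_top _ _)
    nlinarith [hopt, hBpos, hDpos]

/-! ### Claim C3: no mass of `φ1` above `1 - a` -/

set_option maxHeartbeats 2000000 in
lemma claimC3 (hμ : μ ∈ Ioo (0:ℝ) 1) (hSPE : 𝒮.IsSPE μ φ0 φ1 σ)
    (hnd0 : 𝒮.actProbMix μ φ0 φ1 σ CAction.buy0 ≠ 0)
    (hnd1 : 𝒮.actProbMix μ φ0 φ1 σ CAction.buy1 ≠ 0) :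
    φ1 (Icc (0:ℝ) 1 ∩ Ioi (1 - posterior μ 𝒮.alphaLo)) = 0 := by
  haveI := hSPE.strat0.1
  haveI := hSPE.strat1.1
  haveI := Fmix_prob 𝒮 hμ
  set a : ℝ := posterior μ 𝒮.alphaLo with ha
  have ha0 : 0 ≤ a := (posterior_mem hμ (alphaLo_mem 𝒮)).1
  have ha1 : a ≤ 1 := (posterior_mem hμ (alphaLo_mem 𝒮)).2
  set B : Set ℝ := Icc (0:ℝ) 1 ∩ Ioi (1 - a) with hBdef
  have hBm : MeasurableSet B := measurableSet_Icc.inter measurableSet_Ioi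
  have hBsub : B ⊆ Icc (0:ℝ) 1 := inter_subset_left
  by_contra hcB
  set f₀ : ℝ × ℝ → ℝ := fun τ => 𝒮.actProb μ σ τ.1 τ.2 CAction.buy0 * τ.1 with hf₀
  set fb0 : ℝ × ℝ → ℝ := fun τ => 𝒮.actProb μ σ τ.1 τ.2 CAction.buy0 with hfb0
  set fb1 : ℝ × ℝ → ℝ := fun τ => 𝒮.actProb μ σ τ.1 τ.2 CAction.buy1 with hfb1
  set f₁ : ℝ × ℝ → ℝ := fun τ => 𝒮.actProb μ σ τ.1 τ.2 CAction.buy1 * τ.2 with hf₁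
  have hint0 : Integrable fb0 (φ0.prod φ1) := by
    by_contra h
    exact hnd0 (integral_undef h)
  have hint1 : Integrable fb1 (φ0.prod φ1) := by
    by_contra h
    exact hnd1 (integral_undef h)
  have hβ0pos : 0 < 𝒮.actProbMix μ φ0 φ1 σ CAction.buy0 := by
    rcases lt_or_eq_of_le (integral_nonneg (fun τ => actProb_nonneg 𝒮 σ τ.1 τ.2 _)
      : (0:ℝ) ≤ 𝒮.actProbMix μ φ0 φ1 σ CAction.buy0) with h | h
    · exact h
    · exact absurd h.symm hnd0
  have hβ1pos : 0 < 𝒮.actProbMix μ φ0 φ1 σ CAction.buy1 := by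
    rcases lt_or_eq_of_le (integral_nonneg (fun τ => actProb_nonneg 𝒮 σ τ.1 τ.2 _)
      : (0:ℝ) ≤ 𝒮.actProbMix μ φ0 φ1 σ CAction.buy1) with h | h
    · exact h
    · exact absurd h.symm hnd1
  have hsum : 𝒮.actProbMix μ φ0 φ1 σ CAction.buy0
      + 𝒮.actProbMix μ φ0 φ1 σ CAction.buy1 ≤ 1 := by
    have h1 : 𝒮.actProbMix μ φ0 φ1 σ CAction.buy0 + 𝒮.actProbMix μ φ0 φ1 σ CAction.buy1
        = ∫ τ, (fb0 τ + fb1 τ) ∂(φ0.prod φ1) := (integral_add hint0 hint1).symm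
    rw [h1]
    calc ∫ τ, (fb0 τ + fb1 τ) ∂(φ0.prod φ1)
        ≤ ∫ _, (1:ℝ) ∂(φ0.prod φ1) :=
          integral_mono (hint0.add hint1) (integrable_const 1)
            (fun τ => actProb_sum_le 𝒮 σ hμ hSPE.meas τ.1 τ.2)
      _ = 1 := by rw [integral_const, probReal_univ, one_smul]
  have hvan : ∀ τ1 ∈ Icc (0:ℝ) 1, 1 - a < τ1 → ∀ τ0 ∈ Icc (0:ℝ) 1,
      𝒮.actProb μ σ τ0 τ1 CAction.buy1 = 0 :=
    fun τ1 hτ1 haτ τ0 hτ0 => vanish1 hμ hSPE hτ0 hτ1 haτ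
  set T : Set ℝ := Icc (0:ℝ) 1 ∩ Ioi (2 * a - 1) with hTdef
  by_cases hT : φ0 T = 0
  · -- Case (i): φ0-a.e. price is ≤ 2a - 1
    have hae1 : ∀ᵐ τ0 ∂φ0, τ0 ∈ Icc (0:ℝ) 1 ∧ τ0 ≤ 2 * a - 1 := by
      filter_upwards [price_ae_Icc hSPE.strat0, measure_eq_zero_iff_ae_notMem.mp hT]
        with τ0 h1 h2
      refine ⟨h1, ?_⟩
      by_contra hgt
      exact h2 ⟨h1, by simpa using not_le.mp hgt⟩
    rcases lt_trichotomy (2 * a - 1) 0 with h2a | h2a | h2a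
    · have : ∀ᵐ τ0 ∂φ0, False := by
        filter_upwards [hae1] with τ0 h
        have := h.1.1
        linarith [h.2]
      have h0 : φ0 {x : ℝ | ¬False} = 0 := ae_iff.mp this
      have h0' : φ0 (univ : Set ℝ) = 0 := by
        have : {x : ℝ | ¬False} = (univ : Set ℝ) := by simp
        rwa [this] at h0
      rw [measure_univ] at h0'
      exact one_ne_zero h0'
    · -- 2a - 1 = 0 : φ0 is essentially the Dirac measure at 0
      have haez : ∀ᵐ τ0 ∂φ0, τ0 = 0 := by
        filter_upwards [hae1] with τ0 h
        have := h.1.1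
        linarith [h.2]
      have hPi0z : 𝒮.Pi0 μ φ0 φ1 σ = 0 := by
        have haeP : ∀ᵐ τ ∂(φ0.prod φ1), f₀ τ = 0 := by
          have hzero : φ0 {τ0 : ℝ | τ0 ≠ 0} = 0 := by
            rw [measure_eq_zero_iff_ae_notMem]
            filter_upwards [haez] with τ0 h
            simpa using h
          have hset : {τ : ℝ × ℝ | τ.1 ≠ 0} = {τ0 : ℝ | τ0 ≠ 0} ×ˢ (univ : Set ℝ) := by
            ext τ; simp
          have : (φ0.prod φ1) {τ : ℝ × ℝ | τ.1 ≠ 0} = 0 := by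
            rw [hset, Measure.prod_prod, hzero, zero_mul]
          filter_upwards [measure_eq_zero_iff_ae_notMem.mp this] with τ h
          have hτ1 : τ.1 = 0 := by simpa using h
          rw [hf₀]
          simp only
          rw [hτ1, mul_zero]
        show ∫ τ, f₀ τ ∂(φ0.prod φ1) = 0
        rw [integral_congr_ae haeP, integral_zero]
      have hahalf : a = 1/2 := by linarith
      obtain ⟨ε, hεIoo, hεA⟩ := exists_notMem_of_countable (countable_atoms 𝒮 hμ)
        (by linarith : (0:ℝ) < a)
      have hεIcc : ε ∈ Icc (0:ℝ) 1 := ⟨hεIoo.1.le, by linarith [hεIoo.2]⟩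
      have hεatom : 𝒮.Fmix μ {s | qq 𝒮 μ s = ε} = 0 := by
        by_contra h
        exact hεA h
      have hcapB : ∀ τ1 ∈ Icc (0:ℝ) 1, 1 - a < τ1 →
          𝒮.actProb μ σ ε τ1 CAction.buy0 = 1 := by
        intro τ1 hτ1 haτ
        apply cap0 hμ hSPE hεIcc hτ1
        filter_upwards [qq_ae_mem 𝒮 hμ] with s hs
        have hq : a ≤ qq 𝒮 μ s := hs.1
        constructor
        · linarith [hεIoo.2]
        · linarith [hεIoo.2]
      have hslice := slice0_meas hμ hSPE hεIcc hεatom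
      have hIntSlice : Integrable (fun τ1 => 𝒮.actProb μ σ ε τ1 CAction.buy0 * ε) φ1 := by
        apply (integrable_const ε).mono' (hslice.mul_const ε)
        filter_upwards with τ1
        show ‖𝒮.actProb μ σ ε τ1 CAction.buy0 * ε‖ ≤ ε
        rw [Real.norm_eq_abs, abs_of_nonneg
          (mul_nonneg (actProb_nonneg 𝒮 σ _ _ _) hεIoo.1.le)]
        calc 𝒮.actProb μ σ ε τ1 CAction.buy0 * ε ≤ 1 * ε :=
              mul_le_mul_of_nonneg_right (actProb_le_one 𝒮 σ hμ _ _ _) hεIoo.1.le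
          _ = ε := one_mul ε
      have hdevge : ε * (φ1 B).toReal ≤ 𝒮.Pi0 μ (Measure.dirac ε) φ1 σ := by
        rw [Pi0_dirac]
        calc ε * (φ1 B).toReal = ∫ τ1, B.indicator (fun _ => ε) τ1 ∂φ1 := by
              rw [integral_indicator_const _ hBm, measureReal_def, smul_eq_mul, mul_comm]
          _ ≤ ∫ τ1, 𝒮.actProb μ σ ε τ1 CAction.buy0 * ε ∂φ1 := by
              apply integral_mono (((integrable_const ε)).indicator hBm) hIntSlice
              intro τ1
              show B.indicator (fun _ => ε) τ1 ≤ 𝒮.actProb μ σ ε τ1 CAction.buy0 * ε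
              by_cases hτ1 : τ1 ∈ B
              · rw [indicator_of_mem hτ1, hcapB τ1 (hBsub hτ1) hτ1.2, one_mul]
              · rw [indicator_of_notMem hτ1]
                exact mul_nonneg (actProb_nonneg 𝒮 σ _ _ _) hεIoo.1.le
      have hopt := hSPE.firm0opt (Measure.dirac ε) (dirac_price hεIcc)
      rw [hPi0z] at hopt
      have hBpos : 0 < (φ1 B).toReal := ENNReal.toReal_pos hcB (measure_ne_top _ _)
      nlinarith [hεIoo.1]
    · -- 2a - 1 > 0 : firm 0 would capture the whole market just below 2a - 1
      have hPi0ge : 2 * a - 1 ≤ 𝒮.Pi0 μ φ0 φ1 σ := by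
        have hdev : ∀ δ' : ℝ, 0 < δ' → δ' < 2 * a - 1 →
            2 * a - 1 - δ' ≤ 𝒮.Pi0 μ φ0 φ1 σ := by
          intro δ' hδ'0 hδ'lt
          set x : ℝ := 2 * a - 1 - δ' with hx
          have hxIcc : x ∈ Icc (0:ℝ) 1 := ⟨by linarith, by linarith⟩
          have hcapd : ∀ τ1 ∈ Icc (0:ℝ) 1, 𝒮.actProb μ σ x τ1 CAction.buy0 = 1 := by
            intro τ1 hτ1
            apply cap0 hμ hSPE hxIcc hτ1
            filter_upwards [qq_ae_mem 𝒮 hμ] with s hs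
            have hq : a ≤ qq 𝒮 μ s := hs.1
            constructor
            · linarith
            · linarith [hτ1.1]
          have hdevx : 𝒮.Pi0 μ (Measure.dirac x) φ1 σ = x := by
            rw [Pi0_dirac]
            have hae : (fun τ1 => 𝒮.actProb μ σ x τ1 CAction.buy0 * x) =ᵐ[φ1] fun _ => x := by
              filter_upwards [price_ae_Icc hSPE.strat1] with τ1 hτ1
              rw [hcapd τ1 hτ1, one_mul]
            rw [integral_congr_ae hae, integral_const, probReal_univ,
              one_smul]
          have := hSPE.firm0opt (Measure.dirac x) (dirac_price hxIcc)
          rw [hdevx] at this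
          exact this
        by_contra hlt
        push_neg at hlt
        set δ' : ℝ := min ((2 * a - 1 - 𝒮.Pi0 μ φ0 φ1 σ) / 2) ((2 * a - 1) / 2) with hδ'
        have hδ'0 : 0 < δ' := lt_min (by linarith) (by linarith)
        have hδ'lt : δ' < 2 * a - 1 :=
          lt_of_le_of_lt (min_le_right _ _) (by linarith)
        have := hdev δ' hδ'0 hδ'lt
        have hδ'le : δ' ≤ (2 * a - 1 - 𝒮.Pi0 μ φ0 φ1 σ) / 2 := min_le_left _ _
        linarith
      have hPi0pos : 0 < 𝒮.Pi0 μ φ0 φ1 σ := lt_of_lt_of_le h2a hPi0ge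
      have hIntf₀ : Integrable f₀ (φ0.prod φ1) := by
        by_contra h
        have : 𝒮.Pi0 μ φ0 φ1 σ = 0 := integral_undef h
        linarith
      have haeP2 : ∀ᵐ τ ∂(φ0.prod φ1), τ.1 ≤ 2 * a - 1 := by
        have hzero : φ0 {τ0 : ℝ | ¬ (τ0 ∈ Icc (0:ℝ) 1 ∧ τ0 ≤ 2 * a - 1)} = 0 :=
          ae_iff.mp hae1
        have hset : {τ : ℝ × ℝ | ¬ (τ.1 ∈ Icc (0:ℝ) 1 ∧ τ.1 ≤ 2 * a - 1)}
            = {τ0 : ℝ | ¬ (τ0 ∈ Icc (0:ℝ) 1 ∧ τ0 ≤ 2 * a - 1)} ×ˢ (univ : Set ℝ) := by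
          ext τ; simp
        have hz2 : (φ0.prod φ1) {τ : ℝ × ℝ | ¬ (τ.1 ∈ Icc (0:ℝ) 1 ∧ τ.1 ≤ 2 * a - 1)} = 0 := by
          rw [hset, Measure.prod_prod, hzero, zero_mul]
        filter_upwards [measure_eq_zero_iff_ae_notMem.mp hz2] with τ h
        have : τ.1 ∈ Icc (0:ℝ) 1 ∧ τ.1 ≤ 2 * a - 1 := by
          by_contra hcon
          exact h hcon
        exact this.2
      have hub : 𝒮.Pi0 μ φ0 φ1 σ ≤ (2 * a - 1) * 𝒮.actProbMix μ φ0 φ1 σ CAction.buy0 := by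
        have : 𝒮.Pi0 μ φ0 φ1 σ = ∫ τ, f₀ τ ∂(φ0.prod φ1) := rfl
        rw [this]
        have h2 : (2 * a - 1) * 𝒮.actProbMix μ φ0 φ1 σ CAction.buy0
            = ∫ τ, (2 * a - 1) * fb0 τ ∂(φ0.prod φ1) := by
          rw [integral_const_mul]
          rfl
        rw [h2]
        apply integral_mono_ae hIntf₀ (hint0.const_mul _)
        filter_upwards [haeP2] with τ hτ
        rw [hf₀]
        simp only
        rw [mul_comm (2 * a - 1) (fb0 τ)]
        exact mul_le_mul_of_nonneg_left hτ (actProb_nonneg 𝒮 σ _ _ _)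
      have hβ0ub : 𝒮.actProbMix μ φ0 φ1 σ CAction.buy0
          ≤ 1 - 𝒮.actProbMix μ φ0 φ1 σ CAction.buy1 := by linarith
      nlinarith [hPi0ge, hub, hβ1pos, h2a,
        mul_le_mul_of_nonneg_left hβ0ub (le_of_lt h2a)]
  · -- Case (ii): φ0 puts mass above 2a - 1; firm 1 has a profitable price
    have hcupT : T = ⋃ n : ℕ, Icc (0:ℝ) 1 ∩ Ici (2 * a - 1 + 1 / (n + 1)) := by
      ext τ
      simp only [hTdef, mem_inter_iff, mem_Ioi, mem_Ici, mem_iUnion]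
      constructor
      · rintro ⟨hτ, hlt⟩
        obtain ⟨n, hn⟩ := exists_nat_one_div_lt (by linarith : (0:ℝ) < τ - (2 * a - 1))
        exact ⟨n, hτ, by linarith⟩
      · rintro ⟨n, hτ, hle⟩
        have : (0:ℝ) < 1 / ((n:ℝ) + 1) := by positivity
        exact ⟨hτ, by linarith⟩
    have hexn : ∃ n : ℕ, φ0 (Icc (0:ℝ) 1 ∩ Ici (2 * a - 1 + 1 / (n + 1))) ≠ 0 := by
      by_contra hall
      push_neg at hall
      exact hT (hcupT ▸ measure_iUnion_null hall)
    obtain ⟨n, hTn⟩ := hexn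
    set δ : ℝ := 1 / (n + 1) with hδ
    have hδ0 : 0 < δ := by positivity
    set Tn : Set ℝ := Icc (0:ℝ) 1 ∩ Ici (2 * a - 1 + δ) with hTndef
    have hTnm : MeasurableSet Tn := measurableSet_Icc.inter measurableSet_Ici
    obtain ⟨tb, htb⟩ := nonempty_of_measure_ne_zero hTn
    have haδ : δ / 2 ≤ 1 - a := by
      have h1 : 2 * a - 1 + δ ≤ tb := htb.2
      have h2 : tb ≤ 1 := htb.1.2
      linarith
    have h1apos : 0 < 1 - a := lt_of_lt_of_le (by linarith) haδ
    have hinj : Function.Injective (fun y : ℝ => 1 - y) := by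
      intro u v huv
      simp only at huv
      linarith
    obtain ⟨y, hyIoo, hyA⟩ := exists_notMem_of_countable
      ((countable_atoms 𝒮 hμ).preimage hinj)
      (by positivity : (0:ℝ) < min (1 - a) δ / 2)
    have hya : y < 1 - a := by
      have h1 : min (1 - a) δ ≤ 1 - a := min_le_left _ _
      linarith [hyIoo.2]
    have hyδ : y ≤ δ / 2 := by
      have h1 : min (1 - a) δ ≤ δ := min_le_right _ _
      linarith [hyIoo.2]
    have hy0 : 0 < y := hyIoo.1
    have hyIcc : y ∈ Icc (0:ℝ) 1 := ⟨hy0.le, by linarith⟩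
    have hyatom : 𝒮.Fmix μ {s | qq 𝒮 μ s = 1 - y} = 0 := by
      by_contra hq
      exact hyA hq
    set tstar : ℝ := min (1 - y) (a + δ / 4) with htstar
    have htstara : a < tstar := lt_min (by linarith) (by linarith)
    have hposM : 𝒮.Fmix μ {s | qq 𝒮 μ s < tstar} ≠ 0 := pos_lower 𝒮 hμ (ha ▸ htstara)
    set hgap : ℝ := (𝒮.Fmix μ {s | qq 𝒮 μ s < tstar}).toReal with hhgap
    have hhpos : 0 < hgap := ENNReal.toReal_pos hposM (measure_ne_top _ _)
    have hTnsub : Tn ⊆ Icc (0:ℝ) 1 := inter_subset_left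
    have hlowbd : ∀ τ0 ∈ Tn, hgap ≤ 𝒮.actProb μ σ τ0 y CAction.buy1 := by
      intro τ0 hτ0
      apply low1 hμ hSPE (hTnsub hτ0) hyIcc
      apply le_min
      · exact min_le_left _ _
      · have hτ0ge : 2 * a - 1 + δ ≤ τ0 := hτ0.2
        have hmid : a + δ / 4 ≤ (1 + τ0 - y) / 2 := by linarith
        exact le_trans (min_le_right _ _) hmid
    have hslice := slice1_meas hμ hSPE hyIcc hyatom
    have hIntSlice : Integrable (fun τ0 => 𝒮.actProb μ σ τ0 y CAction.buy1 * y) φ0 := by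
      apply (integrable_const y).mono' (hslice.mul_const y)
      filter_upwards with τ0
      show ‖𝒮.actProb μ σ τ0 y CAction.buy1 * y‖ ≤ y
      rw [Real.norm_eq_abs, abs_of_nonneg
        (mul_nonneg (actProb_nonneg 𝒮 σ _ _ _) hy0.le)]
      calc 𝒮.actProb μ σ τ0 y CAction.buy1 * y ≤ 1 * y :=
            mul_le_mul_of_nonneg_right (actProb_le_one 𝒮 σ hμ _ _ _) hy0.le
        _ = y := one_mul y
    set D : ℝ := 𝒮.Pi1 μ φ0 (Measure.dirac y) σ with hD
    have hDge : y * hgap * (φ0 Tn).toReal ≤ D := by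
      rw [hD, Pi1_dirac]
      calc y * hgap * (φ0 Tn).toReal
          = ∫ τ0, Tn.indicator (fun _ => y * hgap) τ0 ∂φ0 := by
            rw [integral_indicator_const _ hTnm, measureReal_def, smul_eq_mul]
            ring
        _ ≤ ∫ τ0, 𝒮.actProb μ σ τ0 y CAction.buy1 * y ∂φ0 := by
            apply integral_mono ((integrable_const _).indicator hTnm) hIntSlice
            intro τ0
            show Tn.indicator (fun _ => y * hgap) τ0 ≤ 𝒮.actProb μ σ τ0 y CAction.buy1 * y
            by_cases hτ0 : τ0 ∈ Tn
            · rw [indicator_of_mem hτ0]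
              have := hlowbd τ0 hτ0
              nlinarith
            · rw [indicator_of_notMem hτ0]
              exact mul_nonneg (actProb_nonneg 𝒮 σ _ _ _) hy0.le
    have hTnpos : 0 < (φ0 Tn).toReal := ENNReal.toReal_pos hTn (measure_ne_top _ _)
    have hDpos : 0 < D := lt_of_lt_of_le (by positivity) hDge
    have hoptd := hSPE.firm1opt (Measure.dirac y) (dirac_price hyIcc)
    have hPi1pos : 0 < 𝒮.Pi1 μ φ0 φ1 σ := lt_of_lt_of_le hDpos hoptd
    have hIntf₁ : Integrable f₁ (φ0.prod φ1) := by
      by_contra hI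
      have : 𝒮.Pi1 μ φ0 φ1 σ = 0 := integral_undef hI
      linarith
    have hIntBc : Integrable f₁ (φ0.prod (φ1.restrict Bᶜ)) := by
      have hrw : φ0.prod (φ1.restrict Bᶜ) = (φ0.prod φ1).restrict (univ ×ˢ Bᶜ) := by
        nth_rewrite 1 [← Measure.restrict_univ (μ := φ0)]
        exact Measure.prod_restrict _ _
      rw [hrw]
      exact hIntf₁.restrict
    have hIntB : Integrable f₁ (φ0.prod (φ1.restrict B)) := by
      have hrw : φ0.prod (φ1.restrict B) = (φ0.prod φ1).restrict (univ ×ˢ B) := by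
        nth_rewrite 1 [← Measure.restrict_univ (μ := φ0)]
        exact Measure.prod_restrict _ _
      rw [hrw]
      exact hIntf₁.restrict
    have haeB : ∀ᵐ τ ∂(φ0.prod (φ1.restrict B)), f₁ τ = 0 := by
      have hae1 : ∀ᵐ τ ∂(φ0.prod (φ1.restrict B)), τ.2 ∈ B ∧ τ.1 ∈ Icc (0:ℝ) 1 := by
        rw [ae_iff]
        apply measure_mono_null
          (?_ : _ ⊆ ((univ : Set ℝ) ×ˢ Bᶜ) ∪ ((Icc (0:ℝ) 1)ᶜ ×ˢ (univ : Set ℝ)))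
        · apply measure_union_null
          · rw [Measure.prod_prod, Measure.restrict_apply hBm.compl]
            simp
          · rw [Measure.prod_prod,
              prob_compl_eq_zero_iff measurableSet_Icc |>.mpr hSPE.strat0.2, zero_mul]
        · intro τ hτ
          simp only [mem_setOf_eq, not_and_or] at hτ
          rcases hτ with hτ | hτ
          · exact Or.inl ⟨mem_univ _, hτ⟩
          · exact Or.inr ⟨hτ, mem_univ _⟩
      filter_upwards [hae1] with τ hτ
      rw [hf₁]
      simp only
      rw [hvan τ.2 (hBsub hτ.1) hτ.1.2 τ.1 hτ.2, zero_mul]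
    have hIB0 : ∫ τ, f₁ τ ∂(φ0.prod (φ1.restrict B)) = 0 := by
      rw [integral_congr_ae haeB, integral_zero]
    have hPi1eq : 𝒮.Pi1 μ φ0 φ1 σ = ∫ τ, f₁ τ ∂(φ0.prod (φ1.restrict Bᶜ)) := by
      have hsplit : φ0.prod φ1
          = φ0.prod (φ1.restrict B) + φ0.prod (φ1.restrict Bᶜ) := by
        nth_rewrite 1 [← Measure.restrict_add_restrict_compl (μ := φ1) hBm]
        exact Measure.prod_add _
      show ∫ τ, f₁ τ ∂(φ0.prod φ1) = _
      rw [hsplit, integral_add_measure hIntB hIntBc, hIB0, zero_add]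
    have hIntD : Integrable f₁ (φ0.prod (Measure.dirac y)) := by
      rw [Measure.prod_dirac]
      rw [(measurableEmbedding_prod_mk_right y).integrable_map_iff]
      exact hIntSlice
    have hdev' : ∫ τ, f₁ τ ∂(φ0.prod (Measure.dirac y)) = D := rfl
    set ψ : Measure ℝ := φ1.restrict Bᶜ + (φ1 B) • Measure.dirac y with hψdef
    have hψprob : IsProbabilityMeasure ψ := by
      constructor
      rw [hψdef, Measure.add_apply, Measure.restrict_apply_univ, Measure.smul_apply,
        measure_univ, smul_eq_mul, mul_one, add_comm]
      rw [measure_add_measure_compl hBm]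
      exact measure_univ
    have hψIcc : ψ (Icc (0:ℝ) 1) = 1 := by
      rw [hψdef, Measure.add_apply, Measure.restrict_apply measurableSet_Icc,
        Measure.smul_apply, Measure.dirac_apply_of_mem hyIcc, smul_eq_mul, mul_one]
      have hdisj : Disjoint (Icc (0:ℝ) 1 ∩ Bᶜ) B := by
        rw [Set.disjoint_left]
        rintro t ⟨_, ht2⟩ hts
        exact ht2 hts
      rw [← measure_union hdisj hBm]
      have hseteq : Icc (0:ℝ) 1 ∩ Bᶜ ∪ B = Icc (0:ℝ) 1 := by
        ext t
        constructor
        · rintro (⟨ht, _⟩ | ht)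
          · exact ht
          · exact hBsub ht
        · intro ht
          by_cases hts : t ∈ B
          · exact Or.inr hts
          · exact Or.inl ⟨ht, hts⟩
      rw [hseteq]
      exact hSPE.strat1.2
    haveI : IsFiniteMeasure ((φ1 B) • Measure.dirac y) := ⟨by
      rw [Measure.smul_apply, smul_eq_mul]
      exact ENNReal.mul_lt_top (measure_lt_top φ1 B) (measure_lt_top _ univ)⟩
    have hψprod : φ0.prod ψ = φ0.prod (φ1.restrict Bᶜ)
        + (φ1 B) • (φ0.prod (Measure.dirac y)) := by
      rw [hψdef, Measure.prod_add, prod_smul'' _ (measure_ne_top φ1 B)]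
    have hPiψ : 𝒮.Pi1 μ φ0 ψ σ = (∫ τ, f₁ τ ∂(φ0.prod (φ1.restrict Bᶜ)))
        + (φ1 B).toReal * D := by
      show ∫ τ, f₁ τ ∂(φ0.prod ψ) = _
      rw [hψprod, integral_add_measure hIntBc (hIntD.smul_measure (measure_ne_top φ1 B)),
        integral_smul_measure, hdev', smul_eq_mul]
    have hopt := hSPE.firm1opt ψ ⟨hψprob, hψIcc⟩
    rw [hPiψ, hPi1eq] at hopt
    have hBpos : 0 < (φ1 B).toReal := ENNReal.toReal_pos hcB (measure_ne_top _ _)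
    nlinarith [hopt, hBpos, hDpos]

end Main

end Stmt12Aux

/-- In a non-deterrence SPE of Γ(μ), φ₀([2α⁻_μ−1, α⁺_μ]) = 1 and
φ₁([1−2α⁺_μ, 1−α⁻_μ]) = 1. -/
theorem stmt12 {S : Type} [MeasurableSpace S] (𝒮 : SignalStructure S)
    (g0 g1 : ℝ → ℝ) (hA : 𝒮.Assumption1 g0 g1)
    (μ : ℝ) (hμ : μ ∈ Ioo (0:ℝ) 1)
    (φ0 φ1 : Measure ℝ) (σ : CStrategy S)
    (hSPE : 𝒮.IsSPE μ φ0 φ1 σ) (hND : ¬ 𝒮.IsDeterrence μ φ0 φ1 σ) :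
    φ0 (Icc (2 * posterior μ 𝒮.alphaLo - 1) (posterior μ 𝒮.alphaHi)) = 1 ∧
      φ1 (Icc (1 - 2 * posterior μ 𝒮.alphaHi) (1 - posterior μ 𝒮.alphaLo)) = 1 := by
  classical
  haveI := hSPE.strat0.1
  haveI := hSPE.strat1.1
  have hnd : ¬ (𝒮.actProbMix μ φ0 φ1 σ CAction.buy0 = 0
      ∨ 𝒮.actProbMix μ φ0 φ1 σ CAction.buy1 = 0) := fun h => hND ⟨hSPE, h⟩
  push_neg at hnd
  obtain ⟨hnd0, hnd1⟩ := hnd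
  have hC1 := Stmt12Aux.claimC1 hμ hSPE hnd0 hnd1
  have hC2 := Stmt12Aux.claimC2 hμ hSPE
  have hC3 := Stmt12Aux.claimC3 hμ hSPE hnd0 hnd1
  have hC4 := Stmt12Aux.claimC4 hμ hSPE
  set a : ℝ := posterior μ 𝒮.alphaLo with ha
  set b : ℝ := posterior μ 𝒮.alphaHi with hb
  constructor
  · have hIcc01 : φ0 (Icc (0:ℝ) 1) = 1 := hSPE.strat0.2
    have hsub : Icc (0:ℝ) 1 ⊆ Icc (2 * a - 1) b
        ∪ ((Icc (0:ℝ) 1 ∩ Iio (2 * a - 1)) ∪ (Icc (0:ℝ) 1 ∩ Ioi b)) := by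
      intro t ht
      by_cases h1 : 2 * a - 1 ≤ t
      · by_cases h2 : t ≤ b
        · exact Or.inl ⟨h1, h2⟩
        · exact Or.inr (Or.inr ⟨ht, not_le.mp h2⟩)
      · exact Or.inr (Or.inl ⟨ht, not_le.mp h1⟩)
    have hbad : φ0 ((Icc (0:ℝ) 1 ∩ Iio (2 * a - 1)) ∪ (Icc (0:ℝ) 1 ∩ Ioi b)) = 0 :=
      measure_union_null hC2 hC1
    have hge : (1:ℝ≥0∞) ≤ φ0 (Icc (2 * a - 1) b) := by
      calc (1:ℝ≥0∞) = φ0 (Icc (0:ℝ) 1) := hIcc01.symm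
        _ ≤ φ0 (Icc (2 * a - 1) b
            ∪ ((Icc (0:ℝ) 1 ∩ Iio (2 * a - 1)) ∪ (Icc (0:ℝ) 1 ∩ Ioi b))) :=
          measure_mono hsub
        _ ≤ φ0 (Icc (2 * a - 1) b)
            + φ0 ((Icc (0:ℝ) 1 ∩ Iio (2 * a - 1)) ∪ (Icc (0:ℝ) 1 ∩ Ioi b)) :=
          measure_union_le _ _
        _ = φ0 (Icc (2 * a - 1) b) := by rw [hbad, add_zero]
    exact le_antisymm prob_le_one hge
  · have hIcc01 : φ1 (Icc (0:ℝ) 1) = 1 := hSPE.strat1.2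
    have hsub : Icc (0:ℝ) 1 ⊆ Icc (1 - 2 * b) (1 - a)
        ∪ ((Icc (0:ℝ) 1 ∩ Iio (1 - 2 * b)) ∪ (Icc (0:ℝ) 1 ∩ Ioi (1 - a))) := by
      intro t ht
      by_cases h1 : 1 - 2 * b ≤ t
      · by_cases h2 : t ≤ 1 - a
        · exact Or.inl ⟨h1, h2⟩
        · exact Or.inr (Or.inr ⟨ht, not_le.mp h2⟩)
      · exact Or.inr (Or.inl ⟨ht, not_le.mp h1⟩)
    have hbad : φ1 ((Icc (0:ℝ) 1 ∩ Iio (1 - 2 * b)) ∪ (Icc (0:ℝ) 1 ∩ Ioi (1 - a))) = 0 :=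
      measure_union_null hC4 hC3
    have hge : (1:ℝ≥0∞) ≤ φ1 (Icc (1 - 2 * b) (1 - a)) := by
      calc (1:ℝ≥0∞) = φ1 (Icc (0:ℝ) 1) := hIcc01.symm
        _ ≤ φ1 (Icc (1 - 2 * b) (1 - a)
            ∪ ((Icc (0:ℝ) 1 ∩ Iio (1 - 2 * b)) ∪ (Icc (0:ℝ) 1 ∩ Ioi (1 - a)))) :=
          measure_mono hsub
        _ ≤ φ1 (Icc (1 - 2 * b) (1 - a))
            + φ1 ((Icc (0:ℝ) 1 ∩ Iio (1 - 2 * b)) ∪ (Icc (0:ℝ) 1 ∩ Ioi (1 - a))) :=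
          measure_union_le _ _
        _ = φ1 (Icc (1 - 2 * b) (1 - a)) := by rw [hbad, add_zero]
    exact le_antisymm prob_le_one hge
end
end

section
/- Let (F₀,F₁,S) be a signal structure with private-belief CDFs G₀, G₁. Then the ratio G₁(r)/G₀(r) is non-increasing in r on the set where G₀(r) > 0, and G₁(r)/G₀(r) > 1 for all r ∈ (α⁻, α⁺). In particular, G₀(x) ≤ G₁(x) for all x, i.e., G₀ first-order stochastically dominates G₁. -/
open MeasureTheory Set Filter Topology
open scoped ENNReal NNReal

noncomputable section

namespace Stmt14Aux

open SignalStructure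

variable {S : Type} [MeasurableSpace S] (𝒮 : SignalStructure S)

lemma prob_ref : IsProbabilityMeasure 𝒮.ref := by
  haveI := 𝒮.prob0; haveI := 𝒮.prob1
  constructor
  simp only [SignalStructure.ref, Measure.smul_apply, Measure.coe_add, Pi.add_apply,
    measure_univ, smul_eq_mul]
  rw [one_add_one_eq_two, ENNReal.inv_mul_cancel two_ne_zero ENNReal.ofNat_ne_top]

lemma F0_ac : 𝒮.F0 ≪ 𝒮.ref := by
  intro A hA
  simp only [SignalStructure.ref, Measure.smul_apply, Measure.coe_add, Pi.add_apply,
    smul_eq_mul] at hA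
  rcases mul_eq_zero.mp hA with h | h
  · exact absurd h (by simp)
  · exact (add_eq_zero.mp h).1

lemma F1_ac : 𝒮.F1 ≪ 𝒮.ref := 𝒮.ac10.trans (F0_ac 𝒮)

lemma setF0 (A : Set S) : ∫⁻ s in A, 𝒮.f0 s ∂𝒮.ref = 𝒮.F0 A := by
  haveI := 𝒮.prob0; haveI := 𝒮.prob1; haveI := prob_ref 𝒮
  exact Measure.setLIntegral_rnDeriv (F0_ac 𝒮) A

lemma setF1 (A : Set S) : ∫⁻ s in A, 𝒮.f1 s ∂𝒮.ref = 𝒮.F1 A := by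
  haveI := 𝒮.prob0; haveI := 𝒮.prob1; haveI := prob_ref 𝒮
  exact Measure.setLIntegral_rnDeriv (F1_ac 𝒮) A

lemma meas_f0 : Measurable 𝒮.f0 := Measure.measurable_rnDeriv _ _
lemma meas_f1 : Measurable 𝒮.f1 := Measure.measurable_rnDeriv _ _

/-- "Good" points: both densities finite, not both zero. -/
def Good (s : S) : Prop := 𝒮.f0 s ≠ ⊤ ∧ 𝒮.f1 s ≠ ⊤ ∧ ¬(𝒮.f0 s = 0 ∧ 𝒮.f1 s = 0)

lemma ae_good : ∀ᵐ s ∂𝒮.ref, Good 𝒮 s := by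
  haveI := 𝒮.prob0; haveI := 𝒮.prob1; haveI := prob_ref 𝒮
  have h0 : ∀ᵐ s ∂𝒮.ref, 𝒮.f0 s ≠ ⊤ :=
    (Measure.rnDeriv_lt_top _ _).mono fun s h => h.ne
  have h1 : ∀ᵐ s ∂𝒮.ref, 𝒮.f1 s ≠ ⊤ :=
    (Measure.rnDeriv_lt_top _ _).mono fun s h => h.ne
  have h2 : ∀ᵐ s ∂𝒮.ref, ¬(𝒮.f0 s = 0 ∧ 𝒮.f1 s = 0) := by
    have hNm : MeasurableSet {s | 𝒮.f0 s = 0 ∧ 𝒮.f1 s = 0} := by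
      refine MeasurableSet.inter ?_ ?_
      · exact (Measure.measurable_rnDeriv _ _) (measurableSet_singleton 0)
      · exact (Measure.measurable_rnDeriv _ _) (measurableSet_singleton 0)
    have hF0 : 𝒮.F0 {s | 𝒮.f0 s = 0 ∧ 𝒮.f1 s = 0} = 0 := by
      rw [← setF0 𝒮 _]
      rw [setLIntegral_congr_fun hNm (fun s hs => hs.1)]
      simp
    have hF1 : 𝒮.F1 {s | 𝒮.f0 s = 0 ∧ 𝒮.f1 s = 0} = 0 := by
      rw [← setF1 𝒮 _]
      rw [setLIntegral_congr_fun hNm (fun s hs => hs.2)]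
      simp
    have hrefN : 𝒮.ref {s | 𝒮.f0 s = 0 ∧ 𝒮.f1 s = 0} = 0 := by
      simp only [SignalStructure.ref, Measure.smul_apply, Measure.coe_add, Pi.add_apply,
        smul_eq_mul, hF0, hF1, add_zero, mul_zero]
    exact ae_iff.mpr (by simpa using hrefN)
  filter_upwards [h0, h1, h2] with s hs0 hs1 hs2
  exact ⟨hs0, hs1, hs2⟩

lemma p_nonneg (s : S) : 0 ≤ 𝒮.p s :=
  div_nonneg ENNReal.toReal_nonneg (add_nonneg ENNReal.toReal_nonneg ENNReal.toReal_nonneg)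

lemma p_le_one (s : S) : 𝒮.p s ≤ 1 := by
  apply div_le_one_of_le₀
  · exact le_add_of_nonneg_right ENNReal.toReal_nonneg
  · exact add_nonneg ENNReal.toReal_nonneg ENNReal.toReal_nonneg

lemma good_ab {s : S} (hs : Good 𝒮 s) : 0 < (𝒮.f0 s).toReal + (𝒮.f1 s).toReal := by
  obtain ⟨h0, h1, h01⟩ := hs
  by_contra h
  push_neg at h
  have ha0 : 0 ≤ (𝒮.f0 s).toReal := ENNReal.toReal_nonneg
  have hb0 : 0 ≤ (𝒮.f1 s).toReal := ENNReal.toReal_nonneg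
  have ha : (𝒮.f0 s).toReal = 0 := by linarith
  have hb : (𝒮.f1 s).toReal = 0 := by linarith
  refine h01 ⟨?_, ?_⟩
  · rcases (ENNReal.toReal_eq_zero_iff _).mp ha with h' | h'
    · exact h'
    · exact absurd h' h0
  · rcases (ENNReal.toReal_eq_zero_iff _).mp hb with h' | h'
    · exact h'
    · exact absurd h' h1

lemma lo_pt {s : S} (hs : Good 𝒮 s) {r : ℝ} (hp : 𝒮.p s < r) :
    ENNReal.ofReal (1 - r) * 𝒮.f0 s ≤ ENNReal.ofReal r * 𝒮.f1 s := by
  have hab := good_ab 𝒮 hs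
  obtain ⟨h0, h1, -⟩ := hs
  have key : (1 - r) * (𝒮.f0 s).toReal ≤ r * (𝒮.f1 s).toReal := by
    have h' := (div_lt_iff₀ hab).mp hp
    nlinarith
  rcases le_or_gt (1 - r) 0 with h | h
  · simp [ENNReal.ofReal_eq_zero.mpr h]
  · have hr0 : 0 ≤ r := le_of_lt (lt_of_le_of_lt (p_nonneg 𝒮 s) hp)
    calc ENNReal.ofReal (1 - r) * 𝒮.f0 s
        = ENNReal.ofReal ((1 - r) * (𝒮.f0 s).toReal) := by
          rw [ENNReal.ofReal_mul h.le, ENNReal.ofReal_toReal h0]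
      _ ≤ ENNReal.ofReal (r * (𝒮.f1 s).toReal) := ENNReal.ofReal_le_ofReal key
      _ = ENNReal.ofReal r * 𝒮.f1 s := by
          rw [ENNReal.ofReal_mul hr0, ENNReal.ofReal_toReal h1]

lemma hi_pt {s : S} (hs : Good 𝒮 s) {r : ℝ} (hr0 : 0 ≤ r) (hp : r ≤ 𝒮.p s) :
    ENNReal.ofReal r * 𝒮.f1 s ≤ ENNReal.ofReal (1 - r) * 𝒮.f0 s := by
  have hab := good_ab 𝒮 hs
  have hr1 : r ≤ 1 := hp.trans (p_le_one 𝒮 s)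
  obtain ⟨h0, h1, -⟩ := hs
  have key : r * (𝒮.f1 s).toReal ≤ (1 - r) * (𝒮.f0 s).toReal := by
    have h' := (le_div_iff₀ hab).mp hp
    nlinarith
  calc ENNReal.ofReal r * 𝒮.f1 s
      = ENNReal.ofReal (r * (𝒮.f1 s).toReal) := by
        rw [ENNReal.ofReal_mul hr0, ENNReal.ofReal_toReal h1]
    _ ≤ ENNReal.ofReal ((1 - r) * (𝒮.f0 s).toReal) := ENNReal.ofReal_le_ofReal key
    _ = ENNReal.ofReal (1 - r) * 𝒮.f0 s := by
        rw [ENNReal.ofReal_mul (by linarith), ENNReal.ofReal_toReal h0]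

lemma lo_pt_strict {s : S} (hs : Good 𝒮 s) {r : ℝ} (hp : 𝒮.p s < r) (hr : r ≤ 1 / 2) :
    𝒮.f0 s < 𝒮.f1 s := by
  have hab := good_ab 𝒮 hs
  obtain ⟨h0, h1, -⟩ := hs
  have key : (𝒮.f0 s).toReal < (𝒮.f1 s).toReal := by
    have h' := (div_lt_iff₀ hab).mp hp
    nlinarith
  rw [← ENNReal.ofReal_toReal h0, ← ENNReal.ofReal_toReal h1]
  exact (ENNReal.ofReal_lt_ofReal_iff (lt_of_le_of_lt ENNReal.toReal_nonneg key)).mpr key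

lemma hi_pt_strict {s : S} (hs : Good 𝒮 s) {r : ℝ} (hr : 1 / 2 < r) (hp : r ≤ 𝒮.p s) :
    𝒮.f1 s < 𝒮.f0 s := by
  have hab := good_ab 𝒮 hs
  obtain ⟨h0, h1, -⟩ := hs
  have key : (𝒮.f1 s).toReal < (𝒮.f0 s).toReal := by
    have h' := (le_div_iff₀ hab).mp hp
    nlinarith
  rw [← ENNReal.ofReal_toReal h0, ← ENNReal.ofReal_toReal h1]
  exact (ENNReal.ofReal_lt_ofReal_iff (lt_of_le_of_lt ENNReal.toReal_nonneg key)).mpr key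

lemma meas_p : Measurable 𝒮.p :=
  ((Measure.measurable_rnDeriv _ _).ennreal_toReal).div
    (((Measure.measurable_rnDeriv _ _).ennreal_toReal).add
      ((Measure.measurable_rnDeriv _ _).ennreal_toReal))

lemma measA (r : ℝ) : MeasurableSet {s : S | 𝒮.p s < r} :=
  measurableSet_lt (meas_p 𝒮) measurable_const

lemma measB (r : ℝ) : MeasurableSet {s : S | r ≤ 𝒮.p s} :=
  measurableSet_le measurable_const (meas_p 𝒮)

lemma measD (r r' : ℝ) : MeasurableSet {s : S | r ≤ 𝒮.p s ∧ 𝒮.p s < r'} :=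
  (measB 𝒮 r).inter (measA 𝒮 r')

lemma lo_set (r : ℝ) :
    ENNReal.ofReal (1 - r) * 𝒮.F0 {s | 𝒮.p s < r} ≤
      ENNReal.ofReal r * 𝒮.F1 {s | 𝒮.p s < r} := by
  rw [← setF0 𝒮 _, ← setF1 𝒮 _,
    ← lintegral_const_mul _ (meas_f0 𝒮),
    ← lintegral_const_mul _ (meas_f1 𝒮)]
  refine lintegral_mono_ae ?_
  filter_upwards [ae_restrict_of_ae (ae_good 𝒮), ae_restrict_mem (measA 𝒮 r)] with s hg hm
  exact lo_pt 𝒮 hg hm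

lemma hi_set {r : ℝ} (hr0 : 0 ≤ r) (D : Set S) (hD : MeasurableSet D)
    (hsub : D ⊆ {s | r ≤ 𝒮.p s}) :
    ENNReal.ofReal r * 𝒮.F1 D ≤ ENNReal.ofReal (1 - r) * 𝒮.F0 D := by
  rw [← setF0 𝒮 _, ← setF1 𝒮 _,
    ← lintegral_const_mul _ (meas_f1 𝒮),
    ← lintegral_const_mul _ (meas_f0 𝒮)]
  refine lintegral_mono_ae ?_
  filter_upwards [ae_restrict_of_ae (ae_good 𝒮), ae_restrict_mem hD] with s hg hm
  exact hi_pt 𝒮 hg hr0 (hsub hm)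

lemma G0_nonneg (r : ℝ) : 0 ≤ 𝒮.G0 r := ENNReal.toReal_nonneg
lemma G1_nonneg (r : ℝ) : 0 ≤ 𝒮.G1 r := ENNReal.toReal_nonneg

lemma rA (r : ℝ) : (1 - r) * 𝒮.G0 r ≤ r * 𝒮.G1 r := by
  haveI := 𝒮.prob0; haveI := 𝒮.prob1
  rcases le_or_gt r 0 with hr | hr
  · have hset : {s : S | 𝒮.p s < r} = ∅ := by
      ext s
      simp only [mem_setOf_eq, mem_empty_iff_false, iff_false, not_lt]
      exact hr.trans (p_nonneg 𝒮 s)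
    simp [SignalStructure.G0, SignalStructure.G1, hset]
  · rcases le_or_gt 1 r with h1 | h1
    · have ha : (1 - r) * 𝒮.G0 r ≤ 0 :=
        mul_nonpos_of_nonpos_of_nonneg (by linarith) (G0_nonneg 𝒮 r)
      have hb : 0 ≤ r * 𝒮.G1 r := mul_nonneg hr.le (G1_nonneg 𝒮 r)
      linarith
    · have h := lo_set 𝒮 r
      have h' := ENNReal.toReal_mono
        (ENNReal.mul_ne_top ENNReal.ofReal_ne_top (measure_ne_top _ _)) h
      rw [ENNReal.toReal_mul, ENNReal.toReal_mul, ENNReal.toReal_ofReal (by linarith),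
        ENNReal.toReal_ofReal hr.le] at h'
      exact h'

lemma rB {r : ℝ} (hr0 : 0 ≤ r) (D : Set S) (hD : MeasurableSet D)
    (hsub : D ⊆ {s | r ≤ 𝒮.p s}) :
    r * (𝒮.F1 D).toReal ≤ (1 - r) * (𝒮.F0 D).toReal := by
  haveI := 𝒮.prob0; haveI := 𝒮.prob1
  rcases le_or_gt r 1 with hr1 | hr1
  · have h := hi_set 𝒮 hr0 D hD hsub
    have h' := ENNReal.toReal_mono
      (ENNReal.mul_ne_top ENNReal.ofReal_ne_top (measure_ne_top _ _)) h
    rw [ENNReal.toReal_mul, ENNReal.toReal_mul, ENNReal.toReal_ofReal hr0,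
      ENNReal.toReal_ofReal (by linarith)] at h'
    exact h'
  · have hD0 : D = ∅ := by
      ext s
      simp only [mem_empty_iff_false, iff_false]
      intro hsD
      exact absurd ((hsub hsD).trans (p_le_one 𝒮 s)) (not_le.mpr hr1)
    simp [hD0]

lemma union_eq (r r' : ℝ) (hrr : r ≤ r') :
    {s : S | 𝒮.p s < r'} = {s | 𝒮.p s < r} ∪ {s | r ≤ 𝒮.p s ∧ 𝒮.p s < r'} := by
  ext s
  simp only [mem_setOf_eq, mem_union]
  constructor
  · intro h
    rcases lt_or_ge (𝒮.p s) r with h' | h'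
    · exact Or.inl h'
    · exact Or.inr ⟨h', h⟩
  · rintro (h | ⟨-, h⟩)
    · exact lt_of_lt_of_le h hrr
    · exact h

lemma Gsplit (μ : Measure S) [IsFiniteMeasure μ] {r r' : ℝ} (hrr : r ≤ r') :
    (μ {s | 𝒮.p s < r'}).toReal =
      (μ {s | 𝒮.p s < r}).toReal + (μ {s | r ≤ 𝒮.p s ∧ 𝒮.p s < r'}).toReal := by
  rw [union_eq 𝒮 r r' hrr, measure_union ?_ (measD 𝒮 r r'),
    ENNReal.toReal_add (measure_ne_top _ _) (measure_ne_top _ _)]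
  exact Set.disjoint_left.mpr fun s hs hs' => absurd hs'.1 (not_le.mpr hs)

lemma compl_eq (r : ℝ) : {s : S | 𝒮.p s < r}ᶜ = {s | r ≤ 𝒮.p s} := by
  ext s; simp [not_lt]

lemma Gcompl (μ : Measure S) [IsProbabilityMeasure μ] (r : ℝ) :
    (μ {s | r ≤ 𝒮.p s}).toReal = 1 - (μ {s | 𝒮.p s < r}).toReal := by
  rw [← compl_eq 𝒮 r, measure_compl (measA 𝒮 r) (measure_ne_top _ _), measure_univ,
    ENNReal.toReal_sub_of_le prob_le_one ENNReal.one_ne_top, ENNReal.toReal_one]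

lemma strict_lt (A : Set S) (hA : MeasurableSet A) (h0 : 𝒮.F0 A ≠ 0)
    (hlt : ∀ s, Good 𝒮 s → s ∈ A → 𝒮.f1 s < 𝒮.f0 s) :
    (𝒮.F1 A).toReal < (𝒮.F0 A).toReal := by
  haveI := 𝒮.prob0; haveI := 𝒮.prob1; haveI := prob_ref 𝒮
  have hrefA : 𝒮.ref A ≠ 0 := fun h => h0 (F0_ac 𝒮 h)
  have hne : 𝒮.ref.restrict A ≠ 0 := by
    simpa [Measure.restrict_eq_zero] using hrefA
  have hfin : ∫⁻ s in A, 𝒮.f1 s ∂𝒮.ref ≠ ⊤ := by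
    rw [setF1 𝒮 A]; exact measure_ne_top _ _
  have hae : ∀ᵐ s ∂(𝒮.ref.restrict A), 𝒮.f1 s < 𝒮.f0 s := by
    filter_upwards [ae_restrict_of_ae (ae_good 𝒮), ae_restrict_mem hA] with s hg hm
    exact hlt s hg hm
  have h := lintegral_strict_mono hne (meas_f0 𝒮).aemeasurable hfin hae
  rw [setF0 𝒮 A, setF1 𝒮 A] at h
  exact ENNReal.toReal_strict_mono (measure_ne_top _ _) h

lemma strict_lt' (A : Set S) (hA : MeasurableSet A) (h0 : 𝒮.F0 A ≠ 0)
    (hlt : ∀ s, Good 𝒮 s → s ∈ A → 𝒮.f0 s < 𝒮.f1 s) :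
    (𝒮.F0 A).toReal < (𝒮.F1 A).toReal := by
  haveI := 𝒮.prob0; haveI := 𝒮.prob1; haveI := prob_ref 𝒮
  have hrefA : 𝒮.ref A ≠ 0 := fun h => h0 (F0_ac 𝒮 h)
  have hne : 𝒮.ref.restrict A ≠ 0 := by
    simpa [Measure.restrict_eq_zero] using hrefA
  have hfin : ∫⁻ s in A, 𝒮.f0 s ∂𝒮.ref ≠ ⊤ := by
    rw [setF0 𝒮 A]; exact measure_ne_top _ _
  have hae : ∀ᵐ s ∂(𝒮.ref.restrict A), 𝒮.f0 s < 𝒮.f1 s := by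
    filter_upwards [ae_restrict_of_ae (ae_good 𝒮), ae_restrict_mem hA] with s hg hm
    exact hlt s hg hm
  have h := lintegral_strict_mono hne (meas_f1 𝒮).aemeasurable hfin hae
  rw [setF0 𝒮 A, setF1 𝒮 A] at h
  exact ENNReal.toReal_strict_mono (measure_ne_top _ _) h

lemma G0_mono {x y : ℝ} (hxy : x ≤ y) : 𝒮.G0 x ≤ 𝒮.G0 y := by
  haveI := 𝒮.prob0
  exact ENNReal.toReal_mono (measure_ne_top _ _)
    (measure_mono fun s hs => lt_of_lt_of_le hs hxy)

lemma G0_pos_of_empty {r : ℝ} (h : 0 < 𝒮.G0 r) : 0 < r := by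
  by_contra hr
  push_neg at hr
  have hset : {s : S | 𝒮.p s < r} = ∅ := by
    ext s
    simp only [mem_setOf_eq, mem_empty_iff_false, iff_false, not_lt]
    exact hr.trans (p_nonneg 𝒮 s)
  rw [SignalStructure.G0, hset] at h
  simp at h

end Stmt14Aux

/-- The ratio G₁(r)/G₀(r) is non-increasing in r on the set where
G₀(r) > 0, and G₁(r)/G₀(r) > 1 for all r ∈ (α⁻,α⁺).  In particular G₀(x) ≤ G₁(x)
for all x, i.e. G₀ first-order stochastically dominates G₁. -/
theorem stmt14 {S : Type} [MeasurableSpace S] (𝒮 : SignalStructure S) :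
    (∀ r r' : ℝ, 0 < 𝒮.G0 r → 0 < 𝒮.G0 r' → r ≤ r' →
        𝒮.G1 r' / 𝒮.G0 r' ≤ 𝒮.G1 r / 𝒮.G0 r) ∧
      (∀ r ∈ Ioo 𝒮.alphaLo 𝒮.alphaHi, 1 < 𝒮.G1 r / 𝒮.G0 r) ∧
      (∀ x : ℝ, 𝒮.G0 x ≤ 𝒮.G1 x) := by
  haveI := 𝒮.prob0; haveI := 𝒮.prob1
  open Stmt14Aux in
  refine ⟨?_, ?_, ?_⟩
  · -- monotone ratio
    intro r r' h0r h0r' hrr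
    have hrpos : 0 < r := G0_pos_of_empty 𝒮 h0r
    have hB := rB 𝒮 hrpos.le {s | r ≤ 𝒮.p s ∧ 𝒮.p s < r'} (measD 𝒮 r r')
      (fun s hs => hs.1)
    have hA := rA 𝒮 r
    have hs0 : 𝒮.G0 r' = 𝒮.G0 r + (𝒮.F0 {s | r ≤ 𝒮.p s ∧ 𝒮.p s < r'}).toReal :=
      Gsplit 𝒮 𝒮.F0 hrr
    have hs1 : 𝒮.G1 r' = 𝒮.G1 r + (𝒮.F1 {s | r ≤ 𝒮.p s ∧ 𝒮.p s < r'}).toReal :=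
      Gsplit 𝒮 𝒮.F1 hrr
    set A0 := (𝒮.F0 {s | r ≤ 𝒮.p s ∧ 𝒮.p s < r'}).toReal with hA0def
    set A1 := (𝒮.F1 {s | r ≤ 𝒮.p s ∧ 𝒮.p s < r'}).toReal with hA1def
    have hA0 : 0 ≤ A0 := ENNReal.toReal_nonneg
    have hA1 : 0 ≤ A1 := ENNReal.toReal_nonneg
    have hG1r : 0 ≤ 𝒮.G1 r := G1_nonneg 𝒮 r
    rw [div_le_div_iff₀ h0r' h0r, hs0, hs1]
    nlinarith [mul_le_mul_of_nonneg_right hB h0r.le,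
      mul_le_mul_of_nonneg_right hA hA0]
  · -- strict ratio on (α⁻, α⁺)
    intro r hr
    obtain ⟨hlo, hhi⟩ := hr
    have hne1 : {x : ℝ | 0 < 𝒮.G0 x}.Nonempty := by
      refine ⟨2, ?_⟩
      have huniv : {s : S | 𝒮.p s < 2} = univ :=
        eq_univ_of_forall fun s => lt_of_le_of_lt (p_le_one 𝒮 s) one_lt_two
      simp only [mem_setOf_eq, SignalStructure.G0, huniv, measure_univ, ENNReal.toReal_one]
      norm_num
    obtain ⟨x, hx, hxr⟩ := exists_lt_of_csInf_lt hne1 hlo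
    have hG0pos : 0 < 𝒮.G0 r := lt_of_lt_of_le hx (G0_mono 𝒮 hxr.le)
    have hne2 : {x : ℝ | 𝒮.G0 x < 1}.Nonempty := by
      refine ⟨0, ?_⟩
      have hempty : {s : S | 𝒮.p s < 0} = ∅ := by
        ext s
        simp only [mem_setOf_eq, mem_empty_iff_false, iff_false, not_lt]
        exact p_nonneg 𝒮 s
      simp only [mem_setOf_eq, SignalStructure.G0, hempty]
      simp
    obtain ⟨y, hy, hry⟩ := exists_lt_of_lt_csSup hne2 hhi
    have hG0lt1 : 𝒮.G0 r < 1 := lt_of_le_of_lt (G0_mono 𝒮 hry.le) hy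
    rw [one_lt_div hG0pos]
    rcases le_or_gt r (1 / 2) with hhalf | hhalf
    · have h0ne : 𝒮.F0 {s | 𝒮.p s < r} ≠ 0 := by
        intro h
        rw [SignalStructure.G0, h] at hG0pos
        simp at hG0pos
      exact strict_lt' 𝒮 _ (measA 𝒮 r) h0ne
        (fun s hg hm => lo_pt_strict 𝒮 hg hm hhalf)
    · have hFB : 0 < (𝒮.F0 {s | r ≤ 𝒮.p s}).toReal := by
        rw [Gcompl 𝒮 𝒮.F0 r]
        have : (𝒮.F0 {s | 𝒮.p s < r}).toReal = 𝒮.G0 r := rfl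
        rw [this]; linarith
      have h0ne : 𝒮.F0 {s | r ≤ 𝒮.p s} ≠ 0 := by
        intro h
        rw [h] at hFB
        simp at hFB
      have hstrict := strict_lt 𝒮 _ (measB 𝒮 r) h0ne
        (fun s hg hm => hi_pt_strict 𝒮 hg hhalf hm)
      have h0 := Gcompl 𝒮 𝒮.F0 r
      have h1 := Gcompl 𝒮 𝒮.F1 r
      show 𝒮.G0 r < 𝒮.G1 r
      have e0 : (𝒮.F0 {s | 𝒮.p s < r}).toReal = 𝒮.G0 r := rfl
      have e1 : (𝒮.F1 {s | 𝒮.p s < r}).toReal = 𝒮.G1 r := rfl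
      rw [e0] at h0; rw [e1] at h1
      linarith
  · -- FOSD
    intro x
    rcases le_or_gt x (1 / 2) with hx | hx
    · rcases le_or_gt x 0 with hx0 | hx0
      · have hempty : {s : S | 𝒮.p s < x} = ∅ := by
          ext s
          simp only [mem_setOf_eq, mem_empty_iff_false, iff_false, not_lt]
          exact hx0.trans (p_nonneg 𝒮 s)
        simp [SignalStructure.G0, SignalStructure.G1, hempty]
      · have hA := rA 𝒮 x
        have h2 : x * 𝒮.G1 x ≤ (1 - x) * 𝒮.G1 x :=
          mul_le_mul_of_nonneg_right (by linarith) (G1_nonneg 𝒮 x)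
        have h1x : 0 < 1 - x := by linarith
        nlinarith
    · have hB := rB 𝒮 (by linarith : (0:ℝ) ≤ x) {s | x ≤ 𝒮.p s} (measB 𝒮 x)
        subset_rfl
      have hF0B : 0 ≤ (𝒮.F0 {s | x ≤ 𝒮.p s}).toReal := ENNReal.toReal_nonneg
      have hle : (𝒮.F1 {s | x ≤ 𝒮.p s}).toReal ≤ (𝒮.F0 {s | x ≤ 𝒮.p s}).toReal := by
        nlinarith
      have h0 := Gcompl 𝒮 𝒮.F0 x
      have h1 := Gcompl 𝒮 𝒮.F1 x
      have e0 : (𝒮.F0 {s | 𝒮.p s < x}).toReal = 𝒮.G0 x := rfl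
      have e1 : (𝒮.F1 {s | 𝒮.p s < x}).toReal = 𝒮.G1 x := rfl
      rw [e0] at h0; rw [e1] at h1
      linarith
end
end

section
/- Suppose signals are bounded and g₀(α⁻) > 0 and g₁(α⁻) > 0. Then for every δ ∈ (0,1) and every constant C > 0 there exists μ' ∈ (0,1) such that for all μ ∈ [μ', 1) and all τ ∈ [0,1]: (1−δ)·[ (2α⁻_μ − 1) − (1 − G_μ(v_μ(τ,0)))·τ ] ≥ δ·C·μ(1−μ)·[ G₁(v_μ(τ,0)) − G₀(v_μ(τ,0)) ], where G_μ = μG₀ + (1−μ)G₁, α⁻_μ = μα⁻/(μα⁻+(1−μ)(1−α⁻)), and v_μ(τ,0) = max{ α⁻, (1−μ)(1+τ)/(2μ − (2μ−1)(1+τ)) } is the consumer's private-belief threshold for buying from Firm 0 when Firm 1 prices at 0 (so the market is full). -/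
open MeasureTheory Set Filter Topology
open scoped ENNReal NNReal

noncomputable section

namespace Aux

variable {S : Type} [MeasurableSpace S] (𝒮 : SignalStructure S)

lemma p_nonneg (s : S) : 0 ≤ 𝒮.p s := div_nonneg ENNReal.toReal_nonneg (by positivity)

lemma p_le_one (s : S) : 𝒮.p s ≤ 1 :=
  div_le_one_of_le₀ (le_add_of_nonneg_right ENNReal.toReal_nonneg) (by positivity)

lemma measurable_p : Measurable 𝒮.p := by
  have h0 : Measurable fun s => (𝒮.f0 s).toReal :=
    (Measure.measurable_rnDeriv _ _).ennreal_toReal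
  have h1 : Measurable fun s => (𝒮.f1 s).toReal :=
    (Measure.measurable_rnDeriv _ _).ennreal_toReal
  exact h0.div (h0.add h1)

lemma G0_mono : Monotone 𝒮.G0 := by
  intro x y hxy
  haveI := 𝒮.prob0
  exact ENNReal.toReal_mono (measure_ne_top _ _)
    (measure_mono (fun s hs => lt_of_lt_of_le hs hxy))

lemma G1_mono : Monotone 𝒮.G1 := by
  intro x y hxy
  haveI := 𝒮.prob1
  exact ENNReal.toReal_mono (measure_ne_top _ _)
    (measure_mono (fun s hs => lt_of_lt_of_le hs hxy))

lemma G0_nonneg (x : ℝ) : 0 ≤ 𝒮.G0 x := ENNReal.toReal_nonneg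
lemma G1_nonneg (x : ℝ) : 0 ≤ 𝒮.G1 x := ENNReal.toReal_nonneg

lemma G0_le_one (x : ℝ) : 𝒮.G0 x ≤ 1 := by
  haveI := 𝒮.prob0
  calc 𝒮.G0 x ≤ (1 : ℝ≥0∞).toReal := ENNReal.toReal_mono (by simp) prob_le_one
  _ = 1 := by simp

lemma G1_le_one (x : ℝ) : 𝒮.G1 x ≤ 1 := by
  haveI := 𝒮.prob1
  calc 𝒮.G1 x ≤ (1 : ℝ≥0∞).toReal := ENNReal.toReal_mono (by simp) prob_le_one
  _ = 1 := by simp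

lemma G0_eq_one (x : ℝ) (hx : 1 < x) : 𝒮.G0 x = 1 := by
  haveI := 𝒮.prob0
  have : {s | 𝒮.p s < x} = univ := by
    ext s; simp only [mem_setOf_eq, mem_univ, iff_true]
    exact lt_of_le_of_lt (p_le_one 𝒮 s) hx
  rw [SignalStructure.G0, this, measure_univ, ENNReal.toReal_one]

lemma alphaLo_lb {y : ℝ} (hy : 0 < 𝒮.G0 y) : 0 < y := by
  by_contra h
  push_neg at h
  have : {s | 𝒮.p s < y} = ∅ := by
    ext s; simp only [mem_setOf_eq, mem_empty_iff_false, iff_false, not_lt]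
    exact le_trans h (p_nonneg 𝒮 s)
  rw [SignalStructure.G0, this] at hy
  simp at hy

lemma alphaLo_pos_set_bddBelow : BddBelow {x | 0 < 𝒮.G0 x} :=
  ⟨0, fun y hy => (alphaLo_lb 𝒮 hy).le⟩

lemma G0_eq_zero_of_lt {x : ℝ} (hx : x < 𝒮.alphaLo) : 𝒮.G0 x = 0 := by
  by_contra h
  have hpos : 0 < 𝒮.G0 x := lt_of_le_of_ne (G0_nonneg 𝒮 x) (Ne.symm h)
  exact absurd (csInf_le (alphaLo_pos_set_bddBelow 𝒮) hpos) (not_le.2 hx)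

lemma F0_eq_zero_of_lt {x : ℝ} (hx : x < 𝒮.alphaLo) : 𝒮.F0 {s | 𝒮.p s < x} = 0 := by
  haveI := 𝒮.prob0
  have := G0_eq_zero_of_lt 𝒮 hx
  rw [SignalStructure.G0] at this
  exact (ENNReal.toReal_eq_zero_iff _).1 this |>.resolve_right (measure_ne_top _ _)

lemma F0_lt_alphaLo : 𝒮.F0 {s | 𝒮.p s < 𝒮.alphaLo} = 0 := by
  have hsub : {s | 𝒮.p s < 𝒮.alphaLo} ⊆ ⋃ n : ℕ, {s | 𝒮.p s < 𝒮.alphaLo - 1/(n+1)} := by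
    intro s hs
    obtain ⟨n, hn⟩ := exists_nat_one_div_lt (sub_pos.2 (show 𝒮.p s < 𝒮.alphaLo from hs))
    exact mem_iUnion.2 ⟨n, by simp only [mem_setOf_eq]; linarith [hn]⟩
  refine measure_mono_null hsub (measure_iUnion_null fun n => ?_)
  refine F0_eq_zero_of_lt 𝒮 ?_
  have : (0:ℝ) < 1/(n+1) := by positivity
  linarith

lemma G0_alphaLo : 𝒮.G0 𝒮.alphaLo = 0 := by
  rw [SignalStructure.G0, F0_lt_alphaLo]; simp

lemma G1_alphaLo : 𝒮.G1 𝒮.alphaLo = 0 := by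
  rw [SignalStructure.G1, 𝒮.ac10 (F0_lt_alphaLo 𝒮)]; simp

lemma alphaHi_set_bddAbove : BddAbove {x | 𝒮.G0 x < 1} := by
  refine ⟨1, fun y hy => ?_⟩
  simp only [mem_setOf_eq] at hy
  by_contra h
  push_neg at h
  rw [G0_eq_one 𝒮 y h] at hy
  exact lt_irrefl 1 hy

lemma alphaLo_le_alphaHi : 𝒮.alphaLo ≤ 𝒮.alphaHi :=
  le_csSup (alphaHi_set_bddAbove 𝒮) (by simp [G0_alphaLo 𝒮])

lemma G0_eq_one_of_gt {x : ℝ} (hx : 𝒮.alphaHi < x) : 𝒮.G0 x = 1 := by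
  refine le_antisymm (G0_le_one 𝒮 x) ?_
  by_contra h
  push_neg at h
  exact absurd (le_csSup (alphaHi_set_bddAbove 𝒮) h) (not_le.2 hx)

end Aux

namespace Aux

lemma le_of_pos_helper {a b : ℝ} (h : ∀ θ : ℝ, 0 < θ → a ≤ b + θ) : a ≤ b := by
  by_contra hc
  push_neg at hc
  have := h ((a - b)/2) (by linarith)
  linarith

variable {S : Type} [MeasurableSpace S] (𝒮 : SignalStructure S)

lemma key (g0 g1 : ℝ → ℝ) (hA : 𝒮.Assumption1 g0 g1) (hb : 𝒮.Bounded)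
    (h0 : 0 < g0 𝒮.alphaLo) (h1 : 0 < g1 𝒮.alphaLo) :
    ∃ c > 0, ∀ w ∈ Ioc 𝒮.alphaLo 1,
      c * 𝒮.G1 w ≤ 𝒮.G0 w ∧ c * (w - 𝒮.alphaLo) ≤ 𝒮.G0 w := by
  haveI := 𝒮.prob0
  haveI := 𝒮.prob1
  set α := 𝒮.alphaLo with hαdef
  have hα0 : 0 < α := hb.1
  by_cases hm : 𝒮.F0 {s | 𝒮.p s ≤ α} = 0
  case neg =>
    refine ⟨(𝒮.F0 {s | 𝒮.p s ≤ α}).toReal, ENNReal.toReal_pos hm (measure_ne_top _ _), ?_⟩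
    intro w hw
    have hge : (𝒮.F0 {s | 𝒮.p s ≤ α}).toReal ≤ 𝒮.G0 w :=
      ENNReal.toReal_mono (measure_ne_top _ _)
        (measure_mono fun s hs => lt_of_le_of_lt hs hw.1)
    constructor
    · nlinarith [G1_le_one 𝒮 w, G1_nonneg 𝒮 w,
        (ENNReal.toReal_nonneg : (0:ℝ) ≤ (𝒮.F0 {s | 𝒮.p s ≤ α}).toReal)]
    · nlinarith [hw.2, hα0,
        (ENNReal.toReal_nonneg : (0:ℝ) ≤ (𝒮.F0 {s | 𝒮.p s ≤ α}).toReal)]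
  case pos =>
    have hm1 : 𝒮.F1 {s | 𝒮.p s ≤ α} = 0 := 𝒮.ac10 hm
    by_cases hαH : 𝒮.alphaHi ≤ α
    · refine ⟨1, one_pos, fun w hw => ?_⟩
      have hG0w : 𝒮.G0 w = 1 := G0_eq_one_of_gt 𝒮 (lt_of_le_of_lt hαH hw.1)
      constructor
      · rw [hG0w, one_mul]; exact G1_le_one 𝒮 w
      · rw [hG0w, one_mul]; nlinarith [hw.2, hα0]
    · push_neg at hαH
      set k := g0 α / 2 with hkdef
      have hkpos : 0 < k := half_pos h0
      set B := g1 α + 1 with hBdef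
      have hBpos : 0 < B := by linarith
      have hmem : α ∈ Icc α 𝒮.alphaHi := ⟨le_refl _, hαH.le⟩
      have hc0 : ContinuousWithinAt g0 (Icc α 𝒮.alphaHi) α := hA.cont0 α hmem
      have hc1 : ContinuousWithinAt g1 (Icc α 𝒮.alphaHi) α := hA.cont1 α hmem
      have hev : ∀ᶠ y in 𝓝[Icc α 𝒮.alphaHi] α, k < g0 y ∧ g1 y < B :=
        (hc0.eventually (eventually_gt_nhds (by linarith))).and
          (hc1.eventually (eventually_lt_nhds (by linarith)))
      rw [Filter.eventually_iff, Metric.mem_nhdsWithin_iff] at hev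
      obtain ⟨η₁, hη₁pos, hball⟩ := hev
      set η := min (η₁/2) ((𝒮.alphaHi - α)/2) with hηdef
      have hηpos : 0 < η := lt_min (by linarith) (by linarith)
      have hηH : α + η < 𝒮.alphaHi := by
        have := min_le_right (η₁/2) ((𝒮.alphaHi - α)/2)
        have : η ≤ (𝒮.alphaHi - α)/2 := this
        linarith
      have hprop : ∀ x ∈ Icc α (α+η), k ≤ g0 x ∧ g1 x ≤ B := by
        intro x hx
        have hx1 : x ∈ Icc α 𝒮.alphaHi := ⟨hx.1, by linarith [hx.2, hηH]⟩
        have hd : x ∈ Metric.ball α η₁ := by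
          rw [Metric.mem_ball, Real.dist_eq, abs_of_nonneg (by linarith [hx.1])]
          have h' : η ≤ η₁/2 := min_le_left _ _
          linarith [hx.2]
        obtain ⟨h1', h2'⟩ := hball ⟨hd, hx1⟩
        exact ⟨h1'.le, h2'.le⟩
      have hMVT : ∀ x w : ℝ, α < x → x < w → w ≤ α + η →
          (𝒮.G0 x + k*(w-x) ≤ 𝒮.G0 w ∧ 𝒮.G1 w ≤ 𝒮.G1 x + B*(w-x)) := by
        intro x w hx hxw hw
        have hsub' : Icc x w ⊆ Ioo α 𝒮.alphaHi := by
          intro y hy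
          exact ⟨lt_of_lt_of_le hx hy.1, lt_of_le_of_lt (hy.2.trans hw) hηH⟩
        have hsubI : Ioo x w ⊆ Ioo α 𝒮.alphaHi := fun y hy => hsub' ⟨hy.1.le, hy.2.le⟩
        have hcont0 : ContinuousOn 𝒮.G0 (Icc x w) := fun y hy =>
          ((hA.hasDeriv0 y (hsub' hy)).continuousAt).continuousWithinAt
        have hcont1 : ContinuousOn 𝒮.G1 (Icc x w) := fun y hy =>
          ((hA.hasDeriv1 y (hsub' hy)).continuousAt).continuousWithinAt
        obtain ⟨ξ, hξ, hξs⟩ := exists_hasDerivAt_eq_slope 𝒮.G0 g0 hxw hcont0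
          (fun y hy => hA.hasDeriv0 y (hsubI hy))
        obtain ⟨ζ, hζ, hζs⟩ := exists_hasDerivAt_eq_slope 𝒮.G1 g1 hxw hcont1
          (fun y hy => hA.hasDeriv1 y (hsubI hy))
        have hne : w - x ≠ 0 := sub_ne_zero.2 hxw.ne'
        have hξm : ξ ∈ Icc α (α+η) := ⟨(hx.trans hξ.1).le, hξ.2.le.trans hw⟩
        have hζm : ζ ∈ Icc α (α+η) := ⟨(hx.trans hζ.1).le, hζ.2.le.trans hw⟩
        have hk' := (hprop ξ hξm).1
        have hB' := (hprop ζ hζm).2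
        have e0 : 𝒮.G0 w - 𝒮.G0 x = g0 ξ * (w - x) := by
          rw [hξs]; field_simp
        have e1 : 𝒮.G1 w - 𝒮.G1 x = g1 ζ * (w - x) := by
          rw [hζs]; field_simp
        have hwx : (0:ℝ) ≤ w - x := by linarith
        constructor
        · nlinarith [mul_le_mul_of_nonneg_right hk' hwx]
        · nlinarith [mul_le_mul_of_nonneg_right hB' hwx]
      have hlow : ∀ w, α < w → w ≤ α + η → k*(w-α) ≤ 𝒮.G0 w := by
        intro w hw hw2
        apply le_of_pos_helper
        intro θ hθ
        set x := α + min ((w-α)/2) (θ/(k+1)) with hxdef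
        have hminpos : 0 < min ((w-α)/2) (θ/(k+1)) := lt_min (by linarith) (by positivity)
        have hx1 : α < x := by rw [hxdef]; linarith
        have hx2 : x < w := by
          have := min_le_left ((w-α)/2) (θ/(k+1))
          rw [hxdef]; linarith
        have hmvt := (hMVT x w hx1 hx2 hw2).1
        have hxle : x - α ≤ θ/(k+1) := by
          rw [hxdef]; simp [min_le_right]
        have hkx : k*(x-α) ≤ θ := by
          have h1' : k*(x-α) ≤ k*(θ/(k+1)) := mul_le_mul_of_nonneg_left hxle hkpos.le
          have h2' : k*(θ/(k+1)) ≤ θ := by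
            rw [mul_div_assoc', div_le_iff₀ (by linarith)]
            nlinarith
          exact le_trans h1' h2'
        nlinarith [G0_nonneg 𝒮 x]
      have hseq : Tendsto (fun n : ℕ => 𝒮.F1 {s | 𝒮.p s < α + 1/(n+1)}) atTop (𝓝 0) := by
        have hmeas : ∀ n : ℕ, NullMeasurableSet {s | 𝒮.p s < α + 1/(n+1)} 𝒮.F1 :=
          fun n => (measurable_p 𝒮 measurableSet_Iio).nullMeasurableSet
        have hanti : Antitone (fun n : ℕ => {s | 𝒮.p s < α + 1/((n:ℝ)+1)}) := by
          intro n m hnm s hs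
          simp only [mem_setOf_eq] at hs ⊢
          have hcast : (n:ℝ)+1 ≤ (m:ℝ)+1 := by exact_mod_cast Nat.succ_le_succ hnm
          have : (1:ℝ)/((m:ℝ)+1) ≤ 1/((n:ℝ)+1) := one_div_le_one_div_of_le (by positivity) hcast
          linarith
        have hinter : (⋂ n : ℕ, {s | 𝒮.p s < α + 1/((n:ℝ)+1)}) = {s | 𝒮.p s ≤ α} := by
          ext s
          simp only [mem_iInter, mem_setOf_eq]
          constructor
          · intro h
            by_contra hc
            push_neg at hc
            obtain ⟨n, hn⟩ := exists_nat_one_div_lt (sub_pos.2 hc)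
            have := h n
            linarith
          · intro h n
            have : (0:ℝ) < 1/((n:ℝ)+1) := by positivity
            linarith
        have htend := tendsto_measure_iInter_atTop (μ := 𝒮.F1) hmeas hanti
          ⟨0, measure_ne_top _ _⟩
        rw [hinter, hm1] at htend
        exact htend
      have hup : ∀ w, α < w → w ≤ α + η → 𝒮.G1 w ≤ B*(w-α) := by
        intro w hw hw2
        apply le_of_pos_helper
        intro θ hθ
        have hev1 : ∀ᶠ n : ℕ in atTop,
            𝒮.F1 {s | 𝒮.p s < α + 1/((n:ℝ)+1)} < ENNReal.ofReal θ :=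
          hseq.eventually_lt_const (by simp [ENNReal.ofReal_pos.2 hθ])
        obtain ⟨N, hN⟩ := exists_nat_one_div_lt (sub_pos.2 hw)
        obtain ⟨M, hM⟩ := eventually_atTop.1 hev1
        set n := max N M with hndef
        have hn1 : 𝒮.F1 {s | 𝒮.p s < α + 1/((n:ℝ)+1)} < ENNReal.ofReal θ :=
          hM n (le_max_right _ _)
        have hcast : (N:ℝ)+1 ≤ (n:ℝ)+1 := by
          exact_mod_cast Nat.succ_le_succ (le_max_left N M)
        have hn2 : (1:ℝ)/((n:ℝ)+1) < w - α :=
          lt_of_le_of_lt (one_div_le_one_div_of_le (by positivity) hcast) hN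
        set x := α + 1/((n:ℝ)+1) with hxdef
        have hx1 : α < x := by
          have : (0:ℝ) < 1/((n:ℝ)+1) := by positivity
          rw [hxdef]; linarith
        have hx2 : x < w := by rw [hxdef]; linarith
        have hG1x : 𝒮.G1 x ≤ θ := by
          rw [SignalStructure.G1]
          exact ENNReal.toReal_le_of_le_ofReal hθ.le hn1.le
        have hmvt := (hMVT x w hx1 hx2 hw2).2
        have hBw : B*(w-x) ≤ B*(w-α) := by
          apply mul_le_mul_of_nonneg_left _ hBpos.le
          have hpos' : (0:ℝ) ≤ 1/((n:ℝ)+1) := by positivity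
          rw [hxdef]; linarith
        linarith
      have hmη : k * η ≤ 𝒮.G0 (α + η) := by
        have := hlow (α+η) (by linarith) (le_refl _)
        calc k * η = k * ((α+η) - α) := by ring
        _ ≤ 𝒮.G0 (α+η) := this
      refine ⟨min (min k (k/B)) (k*η), by positivity, ?_⟩
      intro w hw
      have hcle : min (min k (k/B)) (k*η) ≤ k := le_trans (min_le_left _ _) (min_le_left _ _)
      have hcleB : min (min k (k/B)) (k*η) ≤ k/B := le_trans (min_le_left _ _) (min_le_right _ _)
      have hcleη : min (min k (k/B)) (k*η) ≤ k*η := min_le_right _ _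
      have hcpos : (0:ℝ) < min (min k (k/B)) (k*η) := by positivity
      rcases le_or_gt w (α+η) with hcase | hcase
      · have hl := hlow w hw.1 hcase
        have hu := hup w hw.1 hcase
        constructor
        · calc min (min k (k/B)) (k*η) * 𝒮.G1 w ≤ (k/B) * 𝒮.G1 w :=
               mul_le_mul_of_nonneg_right hcleB (G1_nonneg 𝒮 w)
          _ ≤ (k/B) * (B*(w-α)) := mul_le_mul_of_nonneg_left hu (by positivity)
          _ = k*(w-α) := by field_simp
          _ ≤ 𝒮.G0 w := hl
        · calc min (min k (k/B)) (k*η) * (w-α) ≤ k * (w-α) :=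
               mul_le_mul_of_nonneg_right hcle (by linarith [hw.1])
          _ ≤ 𝒮.G0 w := hl
      · have hmono : 𝒮.G0 (α+η) ≤ 𝒮.G0 w := G0_mono 𝒮 hcase.le
        have hGw : k*η ≤ 𝒮.G0 w := le_trans hmη hmono
        constructor
        · calc min (min k (k/B)) (k*η) * 𝒮.G1 w ≤ min (min k (k/B)) (k*η) * 1 :=
               mul_le_mul_of_nonneg_left (G1_le_one 𝒮 w) hcpos.le
          _ = min (min k (k/B)) (k*η) := mul_one _
          _ ≤ k*η := hcleη
          _ ≤ 𝒮.G0 w := hGw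
        · have hwa : w - α ≤ 1 := by linarith [hw.2]
          calc min (min k (k/B)) (k*η) * (w-α) ≤ min (min k (k/B)) (k*η) * 1 :=
               mul_le_mul_of_nonneg_left hwa hcpos.le
          _ = min (min k (k/B)) (k*η) := mul_one _
          _ ≤ k*η := hcleη
          _ ≤ 𝒮.G0 w := hGw

end Aux

set_option maxHeartbeats 1600000 in
/-- With bounded signals and g₀(α⁻) > 0, g₁(α⁻) > 0: for every
δ ∈ (0,1) and C > 0 there is μ' ∈ (0,1) such that for all μ ∈ [μ',1) and τ ∈ [0,1],
(1−δ)[(2α⁻_μ−1) − (1−G_μ(v_μ(τ,0)))τ] ≥ δCμ(1−μ)[G₁(v_μ(τ,0)) − G₀(v_μ(τ,0))],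
where v_μ(τ,0) = max{α⁻, (1−μ)(1+τ)/(2μ−(2μ−1)(1+τ))}. -/
theorem stmt19 {S : Type} [MeasurableSpace S] (𝒮 : SignalStructure S)
    (g0 g1 : ℝ → ℝ) (hA : 𝒮.Assumption1 g0 g1)
    (hb : 𝒮.Bounded)
    (h0 : 0 < g0 𝒮.alphaLo) (h1 : 0 < g1 𝒮.alphaLo) :
    ∀ δ ∈ Ioo (0:ℝ) 1, ∀ C > (0:ℝ), ∃ μ' ∈ Ioo (0:ℝ) 1, ∀ μ ∈ Ico μ' 1,
      ∀ τ ∈ Icc (0:ℝ) 1, ∀ vτ : ℝ,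
        vτ = max 𝒮.alphaLo ((1 - μ) * (1 + τ) / (2 * μ - (2 * μ - 1) * (1 + τ))) →
          δ * C * (μ * (1 - μ)) * (𝒮.G1 vτ - 𝒮.G0 vτ) ≤
            (1 - δ) *
              ((2 * posterior μ 𝒮.alphaLo - 1) -
                (1 - (μ * 𝒮.G0 vτ + (1 - μ) * 𝒮.G1 vτ)) * τ) := by
  intro δ hδ C hC
  obtain ⟨c, hcpos, hc⟩ := Aux.key 𝒮 g0 g1 hA hb h0 h1
  obtain ⟨α, hαdef⟩ : ∃ a : ℝ, a = 𝒮.alphaLo := ⟨_, rfl⟩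
  have hα0 : 0 < α := hαdef ▸ hb.1
  have hα1 : α < 1 := by
    rw [hαdef]; exact lt_of_le_of_lt (Aux.alphaLo_le_alphaHi 𝒮) hb.2
  have hG0α : 𝒮.G0 α = 0 := by rw [hαdef]; exact Aux.G0_alphaLo 𝒮
  have hG1α : 𝒮.G1 α = 0 := by rw [hαdef]; exact Aux.G1_alphaLo 𝒮
  rw [← hαdef] at hc
  have hδ0 : 0 < δ := hδ.1
  have hδ1 : δ < 1 := hδ.2
  have hden6 : 0 < 6*(δ*C + 2*(1-δ)) := by nlinarith
  obtain ⟨E, hEdef⟩ : ∃ e : ℝ,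
      e = min (min (α/3) (1/2)) ((1-δ)*c*α^2 / (6*(δ*C + 2*(1-δ)))) := ⟨_, rfl⟩
  have hEpos : 0 < E := by
    rw [hEdef]
    apply lt_min (lt_min (by positivity) (by norm_num))
    apply div_pos _ hden6
    have h1a : (0:ℝ) < 1 - δ := by linarith
    positivity
  have hEhalf : E ≤ 1/2 := by
    rw [hEdef]; exact le_trans (min_le_left _ _) (min_le_right _ _)
  refine ⟨1 - E, ⟨by linarith, by linarith⟩, ?_⟩
  intro μ hμ τ hτ vτ hv
  rw [← hαdef] at hv ⊢
  have hμ1 : μ < 1 := hμ.2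
  have hεE : 1 - μ ≤ E := by linarith [hμ.1]
  have hε0 : 0 < 1 - μ := by linarith
  have hε1 : 1 - μ ≤ α/3 := by
    refine le_trans hεE ?_
    rw [hEdef]; exact le_trans (min_le_left _ _) (min_le_left _ _)
  have hε3' : 1 - μ ≤ (1-δ)*c*α^2 / (6*(δ*C + 2*(1-δ))) := by
    refine le_trans hεE ?_
    rw [hEdef]; exact min_le_right _ _
  have hε3 : (1-μ) * (6*(δ*C + 2*(1-δ))) ≤ (1-δ)*c*α^2 := by
    rw [le_div_iff₀ hden6] at hε3'; linarith
  have hμhalf : 1/2 ≤ μ := by linarith [hεE, hEhalf]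
  have hτ0 : 0 ≤ τ := hτ.1
  have hτ1 : τ ≤ 1 := hτ.2
  have hden : 2*μ - (2*μ-1)*(1+τ) = 1 - (2*μ-1)*τ := by ring
  rw [hden] at hv
  have hd2 : 0 < 1 - (2*μ-1)*τ := by nlinarith
  rcases le_or_gt ((1-μ)*(1+τ)/(1-(2*μ-1)*τ)) α with hwle | hwgt
  · -- Case A : threshold at α
    rw [max_eq_left hwle] at hv
    rw [hv, hG0α, hG1α]
    rw [div_le_iff₀ hd2] at hwle
    have hD : 0 < μ*α + (1-μ)*(1-α) := by nlinarith
    have hePost : (2 * posterior μ α - 1) - (1 - (μ*0 + (1-μ)*0))*τ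
        = ((α - (1-μ)) - τ*(μ*α + (1-μ)*(1-α))) / (μ*α + (1-μ)*(1-α)) := by
      unfold posterior; field_simp; ring
    have hnum : 0 ≤ (α - (1-μ)) - τ*(μ*α + (1-μ)*(1-α)) := by
      have hid : (α - (1-μ)) - τ*(μ*α + (1-μ)*(1-α))
          = α*(1-(2*μ-1)*τ) - (1-μ)*(1+τ) := by ring
      rw [hid]; linarith
    have hL : δ * C * (μ * (1 - μ)) * (0 - 0) = 0 := by ring
    rw [hL, hePost]
    apply mul_nonneg (by linarith)
    exact div_nonneg hnum hD.le
  · -- Case B : threshold above α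
    have hwle1 : (1-μ)*(1+τ)/(1-(2*μ-1)*τ) ≤ 1 := by
      rw [div_le_one hd2]; nlinarith
    rw [max_eq_right hwgt.le] at hv
    obtain ⟨w, hwdef⟩ : ∃ w : ℝ, w = (1-μ)*(1+τ)/(1-(2*μ-1)*τ) := ⟨_, rfl⟩
    rw [← hwdef] at hv
    rw [hv]
    have hwα : α < w := hwdef ▸ hwgt
    have hw1 : w ≤ 1 := hwdef ▸ hwle1
    have hwd : w * (1-(2*μ-1)*τ) = (1-μ)*(1+τ) := by
      rw [hwdef]; exact div_mul_cancel₀ _ hd2.ne'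
    have hτid : τ * ((2*μ-1)*w + (1-μ)) = w - (1-μ) := by linear_combination -hwd
    obtain ⟨hcb, hcw⟩ := hc w ⟨hwα, hw1⟩
    obtain ⟨a, hadef⟩ : ∃ a : ℝ, a = 𝒮.G0 w := ⟨_, rfl⟩
    obtain ⟨b, hbdef⟩ : ∃ b : ℝ, b = 𝒮.G1 w := ⟨_, rfl⟩
    rw [← hadef] at hcb hcw ⊢
    rw [← hbdef] at hcb ⊢
    have ha0 : 0 ≤ a := hadef ▸ Aux.G0_nonneg 𝒮 w
    have ha1 : a ≤ 1 := hadef ▸ Aux.G0_le_one 𝒮 w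
    have hb0 : 0 ≤ b := hbdef ▸ Aux.G1_nonneg 𝒮 w
    have hb1 : b ≤ 1 := hbdef ▸ Aux.G1_le_one 𝒮 w
    -- bounds on the two "denominators"
    have hDlo : α/2 ≤ μ*α + (1-μ)*(1-α) := by
      nlinarith [mul_nonneg (show (0:ℝ) ≤ μ - 1/2 by linarith) hα0.le,
        mul_nonneg hε0.le (show (0:ℝ) ≤ 1 - α by linarith)]
    have hDhi : μ*α + (1-μ)*(1-α) ≤ 1 := by
      nlinarith [mul_nonneg (show (0:ℝ) ≤ μ by linarith) (show (0:ℝ) ≤ 1-α by linarith),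
        mul_nonneg hε0.le hα0.le]
    have hD0 : 0 < μ*α + (1-μ)*(1-α) := by linarith
    have hDwlo : α/3 ≤ (2*μ-1)*w + (1-μ) := by
      nlinarith [mul_le_mul (show (1:ℝ)/3 ≤ 2*μ-1 by linarith [hε1]) hwα.le hα0.le
        (show (0:ℝ) ≤ 2*μ-1 by linarith)]
    have hDwhi : (2*μ-1)*w + (1-μ) ≤ 1 := by
      nlinarith [mul_le_mul_of_nonneg_left hw1 (show (0:ℝ) ≤ 2*μ-1 by linarith)]
    have hDw0 : 0 < (2*μ-1)*w + (1-μ) := by linarith [hα0]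
    have hwε : 2*α/3 ≤ w - (1-μ) := by linarith [hε1, hwα]
    have hpos : 0 < (μ*α + (1-μ)*(1-α)) * ((2*μ-1)*w + (1-μ)) * c :=
      mul_pos (mul_pos hD0 hDw0) hcpos
    rw [← mul_le_mul_iff_of_pos_right hpos]
    have hpostD : (2 * posterior μ α - 1) * (μ*α + (1-μ)*(1-α)) = α - (1-μ) := by
      unfold posterior; field_simp; ring
    have hRid : ((2 * posterior μ α - 1) - (1 - (μ*a + (1-μ)*b))*τ)
          * ((μ*α + (1-μ)*(1-α)) * ((2*μ-1)*w + (1-μ)) * c)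
        = (-(2*(1-μ)*μ*(w-α))
            + (μ*a + (1-μ)*b)*(w-(1-μ))*(μ*α + (1-μ)*(1-α))) * c := by
      calc ((2 * posterior μ α - 1) - (1 - (μ*a + (1-μ)*b))*τ)
            * ((μ*α + (1-μ)*(1-α)) * ((2*μ-1)*w + (1-μ)) * c)
          = ((2 * posterior μ α - 1) * (μ*α + (1-μ)*(1-α))) * (((2*μ-1)*w + (1-μ)) * c)
            - (1 - (μ*a + (1-μ)*b)) * (τ * ((2*μ-1)*w + (1-μ)))
              * ((μ*α + (1-μ)*(1-α)) * c) := by ring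
        _ = (α - (1-μ)) * (((2*μ-1)*w + (1-μ)) * c)
            - (1 - (μ*a + (1-μ)*b)) * (w - (1-μ)) * ((μ*α + (1-μ)*(1-α)) * c) := by
            rw [hpostD, hτid]
        _ = (-(2*(1-μ)*μ*(w-α))
            + (μ*a + (1-μ)*b)*(w-(1-μ))*(μ*α + (1-μ)*(1-α))) * c := by ring
    rw [mul_assoc (1-δ), hRid]
    -- Now a purely algebraic inequality
    have hDDw1 : (μ*α + (1-μ)*(1-α)) * ((2*μ-1)*w + (1-μ)) ≤ 1 := by
      nlinarith only [mul_le_mul hDhi hDwhi hDw0.le zero_le_one]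
    have hDDw0 : 0 ≤ (μ*α + (1-μ)*(1-α)) * ((2*μ-1)*w + (1-μ)) :=
      (mul_pos hD0 hDw0).le
    have e1 : (b - a) * ((μ*α + (1-μ)*(1-α)) * ((2*μ-1)*w + (1-μ))) ≤ b := by
      nlinarith only [mul_nonneg hb0 (sub_nonneg.2 hDDw1), mul_nonneg ha0 hDDw0]
    have hδC : (0:ℝ) ≤ δ*C := by positivity
    have hμ0 : (0:ℝ) ≤ μ := by linarith
    have hμ1μ : (0:ℝ) ≤ μ*(1-μ) := mul_nonneg hμ0 hε0.le
    have hδCε : (0:ℝ) ≤ δ*C*(1-μ) := mul_nonneg hδC hε0.le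
    have h1δ : (0:ℝ) ≤ 1-δ := by linarith
    have t1 : δ * C * (μ * (1 - μ)) * (b - a)
          * ((μ*α + (1-μ)*(1-α)) * ((2*μ-1)*w + (1-μ)) * c)
        ≤ δ * C * (μ * (1-μ)) * b * c := by
      have u1 : (δ*C*(μ*(1-μ))) * ((b - a) * ((μ*α + (1-μ)*(1-α)) * ((2*μ-1)*w + (1-μ))))
          ≤ (δ*C*(μ*(1-μ))) * b :=
        mul_le_mul_of_nonneg_left e1 (mul_nonneg hδC hμ1μ)
      have u2 := mul_le_mul_of_nonneg_right u1 hcpos.le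
      calc δ * C * (μ * (1 - μ)) * (b - a)
            * ((μ*α + (1-μ)*(1-α)) * ((2*μ-1)*w + (1-μ)) * c)
          = ((δ*C*(μ*(1-μ))) * ((b - a) * ((μ*α + (1-μ)*(1-α)) * ((2*μ-1)*w + (1-μ))))) * c := by
            ring
        _ ≤ ((δ*C*(μ*(1-μ))) * b) * c := u2
        _ = δ * C * (μ * (1-μ)) * b * c := by ring
    have t2 : δ * C * (μ * (1-μ)) * b * c ≤ δ * C * (1-μ) * a := by
      have hXnn : (0:ℝ) ≤ (δ*C*(1-μ))*(c*b) := mul_nonneg hδCε (mul_nonneg hcpos.le hb0)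
      calc δ * C * (μ * (1-μ)) * b * c = ((δ*C*(1-μ))*(c*b))*μ := by ring
        _ ≤ ((δ*C*(1-μ))*(c*b))*1 := mul_le_mul_of_nonneg_left hμ1.le hXnn
        _ = (δ*C*(1-μ))*(c*b) := by ring
        _ ≤ (δ*C*(1-μ))*a := mul_le_mul_of_nonneg_left hcb hδCε
        _ = δ * C * (1-μ) * a := by ring
    have t3 : (1-δ) * (2*(1-μ)*μ*(w-α)*c) ≤ (1-δ) * (2*(1-μ)*a) := by
      have h3nn : (0:ℝ) ≤ (1-δ)*(2*(1-μ))*μ :=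
        mul_nonneg (mul_nonneg h1δ (by linarith)) hμ0
      have h4nn : (0:ℝ) ≤ (1-δ)*(2*(1-μ))*a :=
        mul_nonneg (mul_nonneg h1δ (by linarith)) ha0
      calc (1-δ) * (2*(1-μ)*μ*(w-α)*c) = ((1-δ)*(2*(1-μ))*μ)*(c*(w-α)) := by ring
        _ ≤ ((1-δ)*(2*(1-μ))*μ)*a := mul_le_mul_of_nonneg_left hcw h3nn
        _ = ((1-δ)*(2*(1-μ))*a)*μ := by ring
        _ ≤ ((1-δ)*(2*(1-μ))*a)*1 := mul_le_mul_of_nonneg_left hμ1.le h4nn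
        _ = (1-δ) * (2*(1-μ)*a) := by ring
    have hG : a/2 ≤ μ*a + (1-μ)*b := by
      linarith only [mul_nonneg (show (0:ℝ) ≤ μ - 1/2 by linarith) ha0,
        mul_nonneg hε0.le hb0]
    have hGnn : 0 ≤ μ*a + (1-μ)*b := by
      linarith only [mul_nonneg hμ0 ha0, mul_nonneg hε0.le hb0]
    have step4 : a*α^2/6 ≤ (μ*a + (1-μ)*b) * (w-(1-μ)) * (μ*α + (1-μ)*(1-α)) := by
      have m1 : (a/2)*(2*α/3) ≤ (μ*a + (1-μ)*b)*(w-(1-μ)) :=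
        mul_le_mul hG hwε (by positivity) hGnn
      have hprodnn : 0 ≤ (μ*a + (1-μ)*b)*(w-(1-μ)) :=
        mul_nonneg hGnn (by linarith only [hwε, hα0])
      have m2 : ((μ*a + (1-μ)*b)*(w-(1-μ)))*(α/2)
          ≤ ((μ*a + (1-μ)*b)*(w-(1-μ)))*(μ*α + (1-μ)*(1-α)) :=
        mul_le_mul_of_nonneg_left hDlo hprodnn
      calc a*α^2/6 = ((a/2)*(2*α/3))*(α/2) := by ring
        _ ≤ ((μ*a + (1-μ)*b)*(w-(1-μ)))*(α/2) :=
            mul_le_mul_of_nonneg_right m1 (by positivity)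
        _ ≤ ((μ*a + (1-μ)*b)*(w-(1-μ)))*(μ*α + (1-μ)*(1-α)) := m2
        _ = (μ*a + (1-μ)*b) * (w-(1-μ)) * (μ*α + (1-μ)*(1-α)) := by ring
    have t4 : (1-δ) * ((a*α^2/6)*c)
        ≤ (1-δ) * ((μ*a + (1-μ)*b)*(w-(1-μ))*(μ*α + (1-μ)*(1-α))*c) :=
      mul_le_mul_of_nonneg_left (mul_le_mul_of_nonneg_right step4 hcpos.le) h1δ
    have t5 : δ*C*(1-μ)*a + (1-δ)*(2*(1-μ)*a) ≤ (1-δ)*((a*α^2/6)*c) := by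
      have ha6 : (0:ℝ) ≤ a/6 := by linarith
      linarith only [mul_le_mul_of_nonneg_right hε3 ha6]
    linarith only [t1, t2, t3, t4, t5]
end
end
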